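/- arXiv:math/0509648 — 9 statements merged into one kernel-verified Lean document; each statement's English description precedes it below -/
import Mathlib

section
/- For all natural numbers l, m, n, one has ∑_{k=0}^{l} (−1)^{m−k} · binom(l,k) · binom(m−k, n) · binom(2k, k−2l+m) = ∑_{k=0}^{l} binom(l,k) · binom(2k, n) · binom(n−l, m+n−3k−l), where both sides are integers. -/
/-- `zbinom x j` is the generalized binomial coefficient `binom(x, j)` with integer
upper argument `x` and integer lower argument `j`; it is `0` when `j < 0`. -/
def zbinom (x : ℤ) (j : ℤ) : ℤ := if 0 ≤ j then Ring.choose x j.toNat else 0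

open Polynomial Finset

def Rc (l m n : ℕ) : ℤ :=
  ∑ k ∈ Finset.range (l + 1),
        (l.choose k : ℤ) * ((2 * k).choose n : ℤ) *
          zbinom ((n : ℤ) - l) ((m : ℤ) + n - 3 * k - l)

lemma zb_vandermonde (c L M : ℕ) (t : ℤ) (ht : t ≤ M) :
    ∑ i ∈ Finset.range (M+1), (L.choose i : ℤ) * zbinom ((c:ℤ) - L) (t - i) = zbinom c t := by
  rcases lt_or_ge t 0 with h | h
  · rw [zbinom, if_neg (by omega)]
    refine Finset.sum_eq_zero fun i hi => ?_
    rw [zbinom, if_neg (by omega), mul_zero]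
  · set T := t.toNat with hT
    have htT : t = (T : ℤ) := by omega
    have hTM : T ≤ M := by omega
    rw [zbinom, if_pos h]
    have hc : (c : ℤ) = ((c:ℤ) - L) + L := by ring
    rw [hc, Ring.add_choose_eq _ (Commute.all _ _),
      Finset.Nat.sum_antidiagonal_eq_sum_range_succ_mk]
    have hsub : Finset.range (T+1) ⊆ Finset.range (M+1) :=
      Finset.range_subset_range.mpr (by omega)
    rw [← Finset.sum_subset hsub (fun i _ hi => by
      have : T < i := by simpa [Finset.mem_range, Nat.lt_succ_iff] using hi
      rw [zbinom, if_neg (by omega), mul_zero])]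
    rw [← Finset.sum_range_reflect]
    refine Finset.sum_congr rfl fun a ha => ?_
    have haT : a ≤ T := by simpa [Nat.lt_succ_iff] using ha
    have h1 : T + 1 - 1 - a = T - a := by omega
    have h2 : t - ((T - a : ℕ) : ℤ) = (a : ℤ) := by
      push_cast [Nat.cast_sub haT]; omega
    rw [h1, h2, zbinom, if_pos (by omega), Int.toNat_natCast, Ring.choose_natCast]
    rw [← hT]
    ring

abbrev S := Polynomial (Polynomial ℤ)

noncomputable def PA : S := X * (1 + C X)^2 + (1 - X * (1 + C X))^2
noncomputable def PB : S := 1 + X * (X + C X + X * C X)^2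

lemma CCint (c : ℤ) : (Polynomial.C (Polynomial.C c) : S) = (c : S) := by
  simp [Polynomial.C_eq_intCast]

lemma one_sub_pow (p : S) (N : ℕ) :
    (1 - p)^N = ∑ i ∈ Finset.range (N+1),
      Polynomial.C (Polynomial.C ((-1)^i * N.choose i : ℤ)) * p^i := by
  rw [sub_eq_add_neg, add_comm, add_pow]
  refine Finset.sum_congr rfl fun i hi => ?_
  rw [CCint]
  push_cast
  ring

lemma hPB_PA : (PB : S) = (1 + X) * PA := by unfold PA PB; ring

lemma E1 (l : ℕ) : (X:S)^l * PA^l = ∑ k ∈ Finset.range (l+1), ∑ i ∈ Finset.range (2*k+1),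
    Polynomial.C (Polynomial.C ((-1)^i * l.choose k * (2*k).choose i : ℤ)
      * (1+X)^(2*(l-k)+i)) * X^(2*l-k+i) := by
  unfold PA
  rw [add_comm (X * (1 + C X)^2), add_pow, Finset.mul_sum]
  refine Finset.sum_congr rfl fun k hk => ?_
  have hk' : k ≤ l := Nat.lt_succ_iff.mp (Finset.mem_range.mp hk)
  rw [← pow_mul, one_sub_pow, Finset.sum_mul, Finset.sum_mul, Finset.mul_sum]
  refine Finset.sum_congr rfl fun i hi => ?_
  obtain ⟨a, rfl⟩ : ∃ a, l = k + a := ⟨l - k, by omega⟩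
  have h1 : 2*(k+a) - k + i = k + 2*a + i := by omega
  have h2 : 2*((k+a) - k) + i = 2*a + i := by omega
  have h3 : (k+a) - k = a := by omega
  rw [h1, h2, h3]
  simp only [map_mul, map_pow, map_add, map_one, map_neg, CCint]
  set u : S := 1 + C X with hu
  simp only [mul_pow, ← pow_mul]
  push_cast
  ring

lemma one_add_pow (p : S) (N : ℕ) :
    (1 + p)^N = ∑ i ∈ Finset.range (N+1),
      Polynomial.C (Polynomial.C (N.choose i : ℤ)) * p^i := by
  rw [add_comm, add_pow]
  refine Finset.sum_congr rfl fun i hi => ?_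
  rw [CCint]
  push_cast
  ring

lemma E2 (l : ℕ) : (X:S)^l * PB^l = ∑ k ∈ Finset.range (l+1), ∑ j ∈ Finset.range (2*k+1),
    ∑ t ∈ Finset.range (j+1),
    Polynomial.C (Polynomial.C (l.choose k * (2*k).choose j * j.choose t : ℤ)
      * X^j) * X^(l+3*k-j+t) := by
  have hPB : (PB : S) = 1 + X * (X + C X * (1 + X))^2 := by unfold PB; ring
  rw [hPB, one_add_pow, Finset.mul_sum]
  refine Finset.sum_congr rfl fun k hk => ?_
  have hexp : ((X : S) * (X + C X * (1+X))^2)^k = X^k * (X + C X * (1+X))^(2*k) := by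
    rw [mul_pow, ← pow_mul, mul_comm 2 k]
  rw [hexp]
  rw [add_comm (X : S) (C X * (1+X)), add_pow]
  simp only [Finset.mul_sum, Finset.sum_mul]
  refine Finset.sum_congr rfl fun j hj => ?_
  have hj' : j ≤ 2*k := Nat.lt_succ_iff.mp (Finset.mem_range.mp hj)
  have hone : ((1:S) + X)^j = ∑ t ∈ Finset.range (j+1),
      Polynomial.C (Polynomial.C (j.choose t : ℤ)) * X^t := one_add_pow X j
  rw [mul_pow (C X : S) (1+X) j, hone]
  simp only [Finset.mul_sum, Finset.sum_mul]
  refine Finset.sum_congr rfl fun t ht => ?_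
  have h1 : l + 3*k - j + t = l + k + (2*k - j) + t := by omega
  rw [h1]
  simp only [map_mul, map_pow, CCint]
  push_cast
  ring

lemma coeff2_CX (q : Polynomial ℤ) (a m n : ℕ) :
    (((Polynomial.C q * X^a : S)).coeff m).coeff n = if a = m then q.coeff n else 0 := by
  rw [Polynomial.coeff_C_mul, Polynomial.coeff_X_pow]
  rcases eq_or_ne a m with h | h
  · simp [h]
  · simp [h, Ne.symm h]

lemma coeffCX (c : ℤ) (j nn : ℕ) :
    ((Polynomial.C c * X^j : Polynomial ℤ)).coeff nn = if j = nn then c else 0 := by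
  rw [Polynomial.coeff_C_mul, Polynomial.coeff_X_pow]
  rcases eq_or_ne j nn with h | h
  · simp [h]
  · simp [h, Ne.symm h]

def Lc (l m n : ℕ) : ℤ :=
  ∑ k ∈ Finset.range (l + 1),
      (-1 : ℤ) ^ ((m : ℤ) - k).natAbs * (l.choose k : ℤ) * Ring.choose ((m : ℤ) - k) n *
        zbinom (2 * k) ((k : ℤ) - 2 * l + m)

lemma coeff1_CX (q : Polynomial ℤ) (a m : ℕ) :
    ((Polynomial.C q * X^a : S)).coeff m = if a = m then q else 0 := by
  rw [Polynomial.coeff_C_mul, Polynomial.coeff_X_pow]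
  rcases eq_or_ne a m with h | h
  · simp [h]
  · simp [h, Ne.symm h]

lemma hLcoeff (l m n : ℕ) : (((X:S)^l * PA^l).coeff m).coeff n = Lc l m n := by
  rw [E1]
  simp only [Polynomial.finset_sum_coeff, coeff1_CX,
    apply_ite (fun p : Polynomial ℤ => p.coeff n), Polynomial.coeff_zero]
  simp only [Polynomial.coeff_C_mul, Polynomial.coeff_one_add_X_pow]
  unfold Lc
  refine Finset.sum_congr rfl fun k hk => ?_
  have hk' : k ≤ l := Nat.lt_succ_iff.mp (Finset.mem_range.mp hk)
  by_cases hlow : 2*l ≤ m + k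
  · by_cases hhigh : m + k ≤ 2*l + 2*k
    · set i0 := m + k - 2*l with hi0
      rw [Finset.sum_eq_single_of_mem i0 (Finset.mem_range.mpr (by omega))
        (fun j _ hj => if_neg (by omega)), if_pos (by omega)]
      have hmk : (m : ℤ) - k = ((2*(l-k) + i0 : ℕ) : ℤ) := by push_cast; omega
      have hzb : zbinom (2*k) ((k:ℤ) - 2*l + m) = ((2*k).choose i0 : ℤ) := by
        rw [zbinom, if_pos (by omega)]
        have h2 : ((k:ℤ) - 2*l + m).toNat = i0 := by omega
        have h3 : (2 : ℤ) * k = ((2*k : ℕ) : ℤ) := by push_cast; ring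
        rw [h2, h3, Ring.choose_natCast]
      have hna : ((m:ℤ) - k).natAbs = 2*(l-k) + i0 := by omega
      rw [hna, hmk, Ring.choose_natCast, hzb]
      have hsign : ((-1 : ℤ)) ^ (2*(l-k) + i0) = (-1 : ℤ)^i0 := by
        rw [pow_add, pow_mul]
        simp
      rw [hsign]
      push_cast
      ring
    · rw [Finset.sum_eq_zero (fun j hj => if_neg (by
        have := Finset.mem_range.mp hj; omega))]
      have hzb : zbinom (2*k) ((k:ℤ) - 2*l + m) = 0 := by
        rw [zbinom, if_pos (by omega)]
        have h1 : ((k:ℤ) - 2*l + m).toNat = m + k - 2*l := by omega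
        have h3 : (2 : ℤ) * k = ((2*k : ℕ) : ℤ) := by push_cast; ring
        rw [h1, h3, Ring.choose_natCast]
        have : (2*k).choose (m + k - 2*l) = 0 := Nat.choose_eq_zero_of_lt (by omega)
        simp [this]
      rw [hzb, mul_zero]
  · rw [Finset.sum_eq_zero (fun j hj => if_neg (by omega))]
    have hzb : zbinom (2*k) ((k:ℤ) - 2*l + m) = 0 := by
      rw [zbinom, if_neg (by omega)]
    rw [hzb, mul_zero]

def Tc (l m n : ℕ) : ℤ :=
  ∑ k ∈ Finset.range (l + 1),
        (l.choose k : ℤ) * ((2 * k).choose n : ℤ) *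
          zbinom (n : ℤ) ((m : ℤ) + n - 3 * k - l)

lemma hTcoeff (l m n : ℕ) : (((X:S)^l * PB^l).coeff m).coeff n = Tc l m n := by
  rw [E2]
  simp only [Polynomial.finset_sum_coeff, coeff1_CX,
    apply_ite (fun p : Polynomial ℤ => p.coeff n), Polynomial.coeff_zero]
  simp only [coeffCX]
  unfold Tc
  refine Finset.sum_congr rfl fun k hk => ?_
  have hk' : k ≤ l := Nat.lt_succ_iff.mp (Finset.mem_range.mp hk)
  by_cases hn : n ≤ 2*k
  · rw [Finset.sum_eq_single_of_mem n (Finset.mem_range.mpr (by omega))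
      (fun j _ hj => Finset.sum_eq_zero fun t _ => by rw [if_neg hj, ite_self])]
    simp only [if_pos rfl]
    by_cases h1 : l + 3*k ≤ m + n
    · by_cases h2 : m ≤ l + 3*k
      · set t0 := m + n - (l + 3*k) with ht0
        rw [Finset.sum_eq_single_of_mem t0 (Finset.mem_range.mpr (by omega))
          (fun t _ ht => if_neg (by omega)), if_pos (by omega)]
        have hzb : zbinom (n : ℤ) ((m:ℤ) + n - 3*k - l) = (n.choose t0 : ℤ) := by
          rw [zbinom, if_pos (by omega)]
          have h3 : ((m:ℤ) + n - 3*k - l).toNat = t0 := by omega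
          rw [h3, Ring.choose_natCast]
        rw [hzb]
        push_cast
        ring
      · rw [Finset.sum_eq_zero (fun t ht => if_neg (by
          have := Finset.mem_range.mp ht; omega))]
        have hzb : zbinom (n : ℤ) ((m:ℤ) + n - 3*k - l) = 0 := by
          rw [zbinom, if_pos (by omega)]
          have h3 : ((m:ℤ) + n - 3*k - l).toNat = m + n - (l + 3*k) := by omega
          rw [h3, Ring.choose_natCast]
          have : n.choose (m + n - (l + 3*k)) = 0 := Nat.choose_eq_zero_of_lt (by omega)
          simp [this]
        rw [hzb, mul_zero]
    · rw [Finset.sum_eq_zero (fun t ht => if_neg (by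
        have := Finset.mem_range.mp ht; omega))]
      have hzb : zbinom (n : ℤ) ((m:ℤ) + n - 3*k - l) = 0 := by
        rw [zbinom, if_neg (by omega)]
      rw [hzb, mul_zero]
  · rw [Finset.sum_eq_zero (fun j hj => Finset.sum_eq_zero fun t _ => by
      have hj' : ¬(j = n) := by have := Finset.mem_range.mp hj; omega
      rw [if_neg hj', ite_self])]
    have : (2*k).choose n = 0 := Nat.choose_eq_zero_of_lt (by omega)
    simp [this]

lemma hP (l : ℕ) : ((1+X:S))^l * ((X:S)^l * PA^l) = (X:S)^l * PB^l := by
  rw [hPB_PA, mul_pow]; ring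

lemma myStarL (l m n : ℕ) :
    ∑ i ∈ Finset.range (m+1), (l.choose i : ℤ) * Lc l (m-i) n = Tc l m n := by
  have h := congrArg (fun F : S => (F.coeff m).coeff n) (hP l)
  rw [Polynomial.coeff_mul, Finset.Nat.sum_antidiagonal_eq_sum_range_succ_mk,
    Polynomial.finset_sum_coeff, hTcoeff] at h
  rw [← h]
  refine Finset.sum_congr rfl fun i hi => ?_
  rw [Polynomial.coeff_one_add_X_pow, ← Polynomial.C_eq_natCast,
    Polynomial.coeff_C_mul, hLcoeff]


lemma myStarR (l m n : ℕ) :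
    ∑ i ∈ Finset.range (m+1), (l.choose i : ℤ) * Rc l (m - i) n = Tc l m n := by
  unfold Rc Tc
  simp only [Finset.mul_sum]
  rw [Finset.sum_comm]
  refine Finset.sum_congr rfl fun k hk => ?_
  rcases le_or_gt n (2*k) with hn | hn
  · have key := zb_vandermonde n l m ((m:ℤ) + n - 3*k - l) (by omega)
    calc ∑ i ∈ Finset.range (m+1), (l.choose i : ℤ) *
          ((l.choose k : ℤ) * ((2 * k).choose n : ℤ) *
            zbinom ((n : ℤ) - l) (((m - i : ℕ) : ℤ) + n - 3 * k - l))
        = (l.choose k : ℤ) * ((2 * k).choose n : ℤ) *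
            ∑ i ∈ Finset.range (m+1), (l.choose i : ℤ) *
              zbinom ((n : ℤ) - l) ((((m:ℤ) + n - 3*k - l)) - i) := by
          rw [Finset.mul_sum]
          refine Finset.sum_congr rfl fun i hi => ?_
          have hi' : i ≤ m := by simpa [Nat.lt_succ_iff] using hi
          rw [Nat.cast_sub hi']
          ring_nf
      _ = _ := by rw [key]
  · have h0 : (2*k).choose n = 0 := Nat.choose_eq_zero_of_lt hn
    simp [h0]

lemma final_step (l n : ℕ)
    (h : ∀ m, ∑ i ∈ Finset.range (m+1), (l.choose i : ℤ) * Lc l (m - i) n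
        = ∑ i ∈ Finset.range (m+1), (l.choose i : ℤ) * Rc l (m - i) n) :
    ∀ m, Lc l m n = Rc l m n := by
  intro m
  induction m using Nat.strong_induction_on with
  | _ m ih =>
    have hm := h m
    rw [Finset.sum_range_succ' (fun i => (l.choose i : ℤ) * Lc l (m - i) n),
        Finset.sum_range_succ' (fun i => (l.choose i : ℤ) * Rc l (m - i) n)] at hm
    simp only [Nat.choose_zero_right, Nat.cast_one, one_mul, Nat.sub_zero] at hm
    have hs : ∑ i ∈ Finset.range m, (l.choose (i+1) : ℤ) * Lc l (m - (i+1)) n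
        = ∑ i ∈ Finset.range m, (l.choose (i+1) : ℤ) * Rc l (m - (i+1)) n := by
      refine Finset.sum_congr rfl fun i hi => ?_
      have : m - (i+1) < m := by
        have : i < m := Finset.mem_range.mp hi
        omega
      rw [ih _ this]
    linarith [hm, hs]

theorem sum_identity (l m n : ℕ) :
    ∑ k ∈ Finset.range (l + 1),
      (-1 : ℤ) ^ ((m : ℤ) - k).natAbs * (l.choose k : ℤ) * Ring.choose ((m : ℤ) - k) n *
        zbinom (2 * k) ((k : ℤ) - 2 * l + m)
    = ∑ k ∈ Finset.range (l + 1),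
        (l.choose k : ℤ) * ((2 * k).choose n : ℤ) *
          zbinom ((n : ℤ) - l) ((m : ℤ) + n - 3 * k - l) := by
  exact final_step l n
    (fun m' => (myStarL l m' n).trans (myStarR l m' n).symm) m
end

section
/- For all natural numbers l and m, ∑_{k=0}^{l} (−1)^{m−k} · binom(l,k) · binom(m−k, l) · binom(2k, k−2l+m) = [3∣m] · binom(l, ⌈m/3⌉) · binom(2⌈m/3⌉, l). In particular, the left-hand side equals binom(2m/3, m/3) · binom(m/3, l−m/3) if 3 divides m, and equals 0 otherwise. -/
namespace GuoAux

open Polynomial Finset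

lemma coeff_sum_CX {R : Type*} [Semiring R] {ι : Type*} (s : Finset ι) (r : ι → R) (d : ι → ℕ)
    (n : ℕ) : (∑ i ∈ s, C (r i) * X ^ d i).coeff n = ∑ i ∈ s, if d i = n then r i else 0 := by
  rw [finset_sum_coeff]
  refine Finset.sum_congr rfl fun i _ => ?_
  rw [coeff_C_mul, coeff_X_pow]
  split <;> split <;> simp_all

lemma coeff_sum_C_one_add_X_pow {R : Type*} [CommRing R] {ι : Type*} (s : Finset ι)
    (r : ι → R) (d : ι → ℕ) (n : ℕ) :
    (∑ i ∈ s, C (r i) * (1 + X) ^ d i).coeff n = ∑ i ∈ s, r i * ((d i).choose n : R) := by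
  rw [finset_sum_coeff]
  refine Finset.sum_congr rfl fun i _ => ?_
  rw [coeff_C_mul, coeff_one_add_X_pow]

/-- `[X^l] (a + bX + cX²)^l` depends only on `a*c` and `b`. -/
lemma trinom_coeff {R : Type*} [CommRing R] (a b c : R) (l : ℕ) :
    ((C a + C b * X + C c * X ^ 2) ^ l).coeff l
      = ∑ k ∈ range (l + 1), if 2 ∣ k then
          (l.choose k * k.choose (k/2) : R) * (a*c)^(k/2) * b^(l-k) else 0 := by
  have h1 : (C a + C b * X + C c * X ^ 2 : R[X]) ^ l
      = ∑ k ∈ range (l + 1), ∑ j ∈ range (k + 1),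
          C (a ^ j * c ^ (k - j) * b ^ (l - k) * (l.choose k * k.choose j : ℕ))
            * X ^ (l - k + 2 * (k - j)) := by
    have h0 : (C a + C b * X + C c * X ^ 2 : R[X]) = (C a + C c * X ^ 2) + C b * X := by ring
    rw [h0, add_pow]
    refine Finset.sum_congr rfl fun k hk => ?_
    rw [add_pow, Finset.sum_mul, Finset.sum_mul]
    refine Finset.sum_congr rfl fun j hj => ?_
    simp only [map_mul, map_pow, map_natCast, mul_pow, pow_add, pow_mul]
    push_cast
    ring
  rw [h1, finset_sum_coeff]
  refine Finset.sum_congr rfl fun k hk => ?_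
  rw [coeff_sum_CX]
  have hkl : k ≤ l := Nat.lt_succ_iff.mp (Finset.mem_range.mp hk)
  by_cases h2 : 2 ∣ k
  · obtain ⟨t, rfl⟩ := h2
    rw [Finset.sum_eq_single t]
    · have hc : l - 2 * t + 2 * (2 * t - t) = l := by omega
      rw [if_pos hc, if_pos (by omega)]
      have h3 : 2 * t - t = t := by omega
      rw [h3]
      have h4 : (2 * t) / 2 = t := by omega
      rw [h4]
      push_cast
      ring
    · intro j hj hne
      rw [if_neg]
      have := Finset.mem_range.mp hj
      omega
    · intro habs
      exact absurd (Finset.mem_range.mpr (by omega)) habs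
  · rw [if_neg h2]
    refine Finset.sum_eq_zero fun j hj => ?_
    rw [if_neg]
    have := Finset.mem_range.mp hj
    omega

lemma my_neg_pow {R : Type*} [CommRing R] (a : R) (n : ℕ) : (-a) ^ n = (-1) ^ n * a ^ n := by
  induction n with
  | zero => simp
  | succ n ih => rw [pow_succ, pow_succ, pow_succ, ih]; ring

/-- Expansion of `F1 ^ l`, coefficient of `z ^ l`. -/
lemma F1exp (l : ℕ) :
    (((C X * (1 + X)) ^ 2 + C X * (1 - C X * (1 + X)) ^ 2 : Polynomial (Polynomial ℤ)) ^ l).coeff l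
      = ∑ k ∈ range (l + 1), ∑ j ∈ range (2 * (l - k) + 1),
          C (((-1) ^ j * (l.choose k * (2 * (l - k)).choose j * (2 * k + j).choose l : ℕ) : ℤ))
            * X ^ (2 * k + (l - k) + j) := by
  have h1 : ((C X * (1 + X)) ^ 2 + C X * (1 - C X * (1 + X)) ^ 2 : Polynomial (Polynomial ℤ)) ^ l
      = ∑ k ∈ range (l + 1), ∑ j ∈ range (2 * (l - k) + 1),
          C (((-1) ^ j * (X : Polynomial ℤ) ^ (2 * k + (l - k) + j))
              * ((l.choose k * (2 * (l - k)).choose j : ℕ) : Polynomial ℤ))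
            * (1 + X) ^ (2 * k + j) := by
    rw [add_pow]
    refine Finset.sum_congr rfl fun k hk => ?_
    have hw : (C (X : Polynomial ℤ) * (1 - C (X : Polynomial ℤ) * (1 + X)) ^ 2) ^ (l - k)
        = C (X : Polynomial ℤ) ^ (l - k)
            * (-(C (X : Polynomial ℤ) * (1 + X)) + 1) ^ (2 * (l - k)) := by
      rw [mul_pow, ← pow_mul]
      congr 2
      ring
    rw [hw, add_pow, Finset.mul_sum, Finset.mul_sum, Finset.sum_mul]
    refine Finset.sum_congr rfl fun j hj => ?_
    rw [my_neg_pow]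
    simp only [map_mul, map_pow, map_neg, map_one, map_natCast, one_pow, mul_pow,
      pow_add, pow_mul]
    push_cast
    ring
  rw [h1, finset_sum_coeff]
  refine Finset.sum_congr rfl fun k hk => ?_
  rw [coeff_sum_C_one_add_X_pow]
  refine Finset.sum_congr rfl fun j hj => ?_
  simp only [map_mul, map_pow, map_neg, map_one, map_natCast]
  push_cast
  ring

/-- Expansion of `F2 ^ l`, coefficient of `z ^ l`. -/
lemma F2exp (l : ℕ) :
    (((1 + C (X ^ 3 : Polynomial ℤ) * (1 + X) ^ 2) ^ l).coeff l)
      = ∑ t ∈ range (l + 1),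
          C ((l.choose t * (2 * t).choose l : ℕ) : ℤ) * X ^ (3 * t) := by
  have h1 : ((1 + C (X ^ 3 : Polynomial ℤ) * (1 + X) ^ 2) ^ l)
      = ∑ t ∈ range (l + 1),
          C ((X ^ (3 * t) : Polynomial ℤ) * (l.choose t : ℕ)) * (1 + X) ^ (2 * t) := by
    rw [add_comm (1 : Polynomial (Polynomial ℤ)), add_pow]
    refine Finset.sum_congr rfl fun t ht => ?_
    rw [mul_pow, ← C_pow, ← pow_mul, map_mul, map_natCast, ← pow_mul]
    ring
  rw [h1, coeff_sum_C_one_add_X_pow]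
  refine Finset.sum_congr rfl fun t ht => ?_
  push_cast [map_mul, Polynomial.C_eq_natCast]
  ring

lemma F2coeff (l m : ℕ) :
    (∑ t ∈ range (l + 1), C ((l.choose t * (2 * t).choose l : ℕ) : ℤ) * X ^ (3 * t)).coeff m
      = if 3 ∣ m then ((l.choose (m / 3) * (2 * (m / 3)).choose l : ℕ) : ℤ) else 0 := by
  rw [coeff_sum_CX]
  by_cases h3 : 3 ∣ m
  · rw [if_pos h3]
    by_cases hml : m / 3 ≤ l
    · rw [Finset.sum_eq_single (m / 3)]
      · rw [if_pos (by omega)]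
      · intro t ht hne
        rw [if_neg (by omega)]
      · intro habs
        exact absurd (Finset.mem_range.mpr (by omega)) habs
    · rw [Finset.sum_eq_zero fun t ht => ?_, eq_comm]
      · simp [Nat.choose_eq_zero_of_lt (show l < m / 3 by omega)]
      · have := Finset.mem_range.mp ht
        rw [if_neg (by omega)]
  · rw [if_neg h3]
    exact Finset.sum_eq_zero fun t ht => if_neg (by omega)

/-- The key step: both trinomials have the same `b` and the same product `a*c`. -/
lemma keyB (l : ℕ) :
    (((C X * (1 + X)) ^ 2 + C X * (1 - C X * (1 + X)) ^ 2
        : Polynomial (Polynomial ℤ)) ^ l).coeff l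
      = (((1 + C (X ^ 3 : Polynomial ℤ) * (1 + X) ^ 2) ^ l).coeff l) := by
  have hF1 : ((C X * (1 + X)) ^ 2 + C X * (1 - C X * (1 + X)) ^ 2 : Polynomial (Polynomial ℤ))
      = C (X - X ^ 2 + X ^ 3) + C (2 * X ^ 3) * X + C (X ^ 2 + X ^ 3) * X ^ 2 := by
    simp only [map_add, map_sub, map_mul, map_pow, map_ofNat]
    ring
  have hF2 : (1 + C (X ^ 3 : Polynomial ℤ) * (1 + X) ^ 2 : Polynomial (Polynomial ℤ))
      = C (1 + X ^ 3) + C (2 * X ^ 3) * X + C (X ^ 3) * X ^ 2 := by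
    simp only [map_add, map_mul, map_pow, map_one, map_ofNat]
    ring
  rw [hF1, hF2, trinom_coeff, trinom_coeff]
  refine Finset.sum_congr rfl fun k hk => ?_
  have hac : ((X : Polynomial ℤ) - X ^ 2 + X ^ 3) * (X ^ 2 + X ^ 3)
      = (1 + X ^ 3) * X ^ 3 := by ring
  rw [hac]

end GuoAux

theorem guo_conjecture (l m : ℕ) :
    (∑ k ∈ Finset.range (l + 1),
      (-1 : ℤ) ^ ((m : ℤ) - k).natAbs * (l.choose k : ℤ) * Ring.choose ((m : ℤ) - k) l *
        zbinom (2 * k) ((k : ℤ) - 2 * l + m)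
      = (if 3 ∣ m then 1 else 0) * (l.choose ⌈(m : ℚ) / 3⌉₊ : ℤ) *
          ((2 * ⌈(m : ℚ) / 3⌉₊).choose l : ℤ))
    ∧ ∑ k ∈ Finset.range (l + 1),
        (-1 : ℤ) ^ ((m : ℤ) - k).natAbs * (l.choose k : ℤ) * Ring.choose ((m : ℤ) - k) l *
          zbinom (2 * k) ((k : ℤ) - 2 * l + m)
      = (if 3 ∣ m then
          ((2 * (m / 3)).choose (m / 3) : ℤ) * zbinom ((m / 3 : ℕ) : ℤ) ((l : ℤ) - (m / 3 : ℕ))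
        else 0) := by
  classical
  open Polynomial Finset GuoAux in
  have hmain : ∑ k ∈ Finset.range (l + 1),
      (-1 : ℤ) ^ ((m : ℤ) - k).natAbs * (l.choose k : ℤ) * Ring.choose ((m : ℤ) - k) l *
        zbinom (2 * k) ((k : ℤ) - 2 * l + m)
      = (if 3 ∣ m then ((l.choose (m / 3) * (2 * (m / 3)).choose l : ℕ) : ℤ) else 0) := by
    have hF1c : ((((C X * (1 + X)) ^ 2 + C X * (1 - C X * (1 + X)) ^ 2
          : Polynomial (Polynomial ℤ)) ^ l).coeff l).coeff m
        = ∑ k ∈ range (l + 1), ∑ j ∈ range (2 * (l - k) + 1),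
            if 2 * k + (l - k) + j = m then
              ((-1) ^ j * (l.choose k * (2 * (l - k)).choose j * (2 * k + j).choose l : ℕ) : ℤ)
            else 0 := by
      rw [F1exp, finset_sum_coeff]
      exact Finset.sum_congr rfl fun k _ => coeff_sum_CX _ _ _ _
    have hstep : ∑ k ∈ Finset.range (l + 1),
        (-1 : ℤ) ^ ((m : ℤ) - k).natAbs * (l.choose k : ℤ) * Ring.choose ((m : ℤ) - k) l *
          zbinom (2 * k) ((k : ℤ) - 2 * l + m)
        = ((((C X * (1 + X)) ^ 2 + C X * (1 - C X * (1 + X)) ^ 2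
            : Polynomial (Polynomial ℤ)) ^ l).coeff l).coeff m := by
      rw [hF1c]
      rw [← Finset.sum_range_reflect]
      refine Finset.sum_congr rfl fun k hk => ?_
      have hkl : k ≤ l := Nat.lt_succ_iff.mp (Finset.mem_range.mp hk)
      have hrefl : l + 1 - 1 - k = l - k := by omega
      rw [hrefl]
      by_cases hm : l + k ≤ m
      · -- nonzero regime
        rw [Finset.sum_eq_single (m - l - k)]
        · rw [if_pos (by omega)]
          have hz : zbinom (2 * ((l - k : ℕ) : ℤ)) (((l - k : ℕ) : ℤ) - 2 * l + m)
              = (((2 * (l - k)).choose (m - l - k) : ℕ) : ℤ) := by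
            rw [zbinom, if_pos (by omega)]
            have h1 : (2 * ((l - k : ℕ) : ℤ)) = ((2 * (l - k) : ℕ) : ℤ) := by push_cast; ring
            have h2 : ((((l - k : ℕ) : ℤ) - 2 * l + m)).toNat = m - l - k := by omega
            rw [h1, h2, Ring.choose_natCast]
          have hrc : Ring.choose ((m : ℤ) - ((l - k : ℕ) : ℤ)) l
              = (((m - l + k).choose l : ℕ) : ℤ) := by
            have h1 : ((m : ℤ) - ((l - k : ℕ) : ℤ)) = ((m - l + k : ℕ) : ℤ) := by
              push_cast [Nat.cast_sub (by omega : k ≤ l)]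
              omega
            rw [h1, Ring.choose_natCast]
          have hna : ((m : ℤ) - ((l - k : ℕ) : ℤ)).natAbs = m - l + k := by omega
          rw [hz, hrc, hna, Nat.choose_symm hkl]
          have hsgn : ((-1 : ℤ)) ^ (m - l + k) = (-1) ^ (m - l - k) := by
            have h5 : m - l + k = (m - l - k) + 2 * k := by omega
            rw [h5, pow_add, pow_mul]
            norm_num
          have h6 : 2 * k + (m - l - k) = m - l + k := by omega
          rw [hsgn, h6]
          push_cast
          ring
        · intro j hj hne
          rw [if_neg (by omega)]
        · intro hnotmem
          have : 2 * (l - k) < m - l - k := by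
            have h8 : ¬ (m - l - k < 2 * (l - k) + 1) :=
              fun h => hnotmem (Finset.mem_range.mpr h)
            omega
          rw [if_pos (by omega), Nat.choose_eq_zero_of_lt this]
          simp
      · -- zbinom vanishes
        have hz : zbinom (2 * ((l - k : ℕ) : ℤ)) (((l - k : ℕ) : ℤ) - 2 * l + m) = 0 := by
          rw [zbinom, if_neg (by omega)]
        rw [hz, mul_zero, eq_comm]
        refine Finset.sum_eq_zero fun j hj => ?_
        have := Finset.mem_range.mp hj
        rw [if_neg (by omega)]
    rw [hstep, keyB, F2exp, F2coeff]
  constructor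
  · rw [hmain]
    by_cases h3 : 3 ∣ m
    · have hceil : ⌈(m : ℚ) / 3⌉₊ = m / 3 := by
        obtain ⟨t, rfl⟩ := h3
        rw [show ((3 * t : ℕ) : ℚ) / 3 = (t : ℚ) by push_cast; ring]
        rw [Nat.ceil_natCast]
        omega
      rw [if_pos h3, if_pos h3, hceil, one_mul]
      push_cast
      ring
    · rw [if_neg h3, if_neg h3, zero_mul, zero_mul]
  · rw [hmain]
    by_cases h3 : 3 ∣ m
    · rw [if_pos h3, if_pos h3]
      set t := m / 3 with ht
      by_cases htl : t ≤ l
      · have hz : zbinom ((t : ℕ) : ℤ) ((l : ℤ) - (t : ℕ))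
            = ((t.choose (l - t) : ℕ) : ℤ) := by
          rw [zbinom, if_pos (by omega)]
          have h2 : (((l : ℤ) - (t : ℕ))).toNat = l - t := by omega
          rw [h2, Ring.choose_natCast]
        rw [hz]
        by_cases hl2t : l ≤ 2 * t
        · have h6 := Nat.choose_mul (n := 2 * t) htl
          have h7 : 2 * t - t = t := by omega
          rw [h7] at h6
          have h9 : l.choose t * (2 * t).choose l = (2 * t).choose t * t.choose (l - t) := by
            rw [mul_comm]
            exact h6
          rw [h9]
          push_cast
          ring
        · rw [Nat.choose_eq_zero_of_lt (show 2 * t < l by omega),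
            Nat.choose_eq_zero_of_lt (show t < l - t by omega)]
          simp
      · rw [Nat.choose_eq_zero_of_lt (show l < t by omega)]
        have hz : zbinom ((t : ℕ) : ℤ) ((l : ℤ) - (t : ℕ)) = 0 := by
          rw [zbinom, if_neg (by omega)]
        rw [hz]
        simp
    · rw [if_neg h3, if_neg h3]
end

section
/- For all natural numbers l and m, ∑_{k=0}^{l} (−1)^{m−k} · binom(l,k) · binom(m−k, l+2) · binom(2k, k−2l+m) = (1 + [3∣m+1]) · binom(l, ⌈m/3⌉) · binom(2⌈m/3⌉, l+2). -/
open Polynomial Finset in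
set_option maxRecDepth 10000 in
private lemma coeff_one_add_C_mul_X_pow' (b : Polynomial ℤ) (N n : ℕ) :
    ((1 + C b * X : Polynomial (Polynomial ℤ)) ^ N).coeff n = (N.choose n : Polynomial ℤ) * b ^ n := by
  rw [add_comm, add_pow]
  simp only [one_pow, mul_one, mul_pow, ← C_pow, finset_sum_coeff,
    coeff_C_mul, ← Polynomial.C_eq_natCast, mul_assoc, coeff_mul_C, coeff_X_pow,
    ite_mul, one_mul, zero_mul, mul_ite, mul_zero]
  rw [Finset.sum_ite_eq]
  split
  · ring
  · rename_i h
    rw [Nat.choose_eq_zero_of_lt (by simpa using h)]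
    simp

open Polynomial Finset in
noncomputable def Ssum' (l n : ℕ) : Polynomial ℤ :=
  ∑ k ∈ range (l+1), ∑ j ∈ range (2*k+1),
    C ((-1)^j * (l.choose k : ℤ) * ((2*k).choose j : ℤ) * ((2*(l-k)+j).choose n : ℤ))
      * X^(2*l-k+j)

open Polynomial Finset in
noncomputable def Gsum' (l n : ℕ) : Polynomial ℤ :=
  ∑ c ∈ range (l+1), C ((l.choose c : ℤ) * ((2*c).choose n : ℤ)) * X^(3*c)

open Polynomial Finset in
set_option maxRecDepth 10000 in
private lemma E1' (b : Polynomial ℤ) (l n : ℕ) :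
    ((((1 - C X * (1 + C b * X))^2 + C X * (1 + C b * X)^2 : Polynomial (Polynomial ℤ)) ^ l)
        * (C X)^l).coeff n = (Ssum' l n) * b ^ n := by
  rw [Ssum', add_pow, Finset.sum_mul, finset_sum_coeff, Finset.sum_mul]
  apply Finset.sum_congr rfl
  intro k hk
  have hkl : k ≤ l := Nat.lt_succ_iff.mp (mem_range.mp hk)
  obtain ⟨d, rfl⟩ : ∃ d, l = k + d := ⟨l - k, by omega⟩
  rw [← pow_mul, sub_eq_add_neg, add_comm (1 : Polynomial (Polynomial ℤ)), add_pow]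
  rw [Finset.sum_mul, Finset.sum_mul, Finset.sum_mul, finset_sum_coeff, Finset.sum_mul]
  apply Finset.sum_congr rfl
  intro j hj
  have e1 : 2*(k+d)-k+j = k+2*d+j := by omega
  have e2 : 2*((k+d)-k)+j = 2*d+j := by omega
  have e3 : k+d-k = d := by omega
  rw [e1, e2, e3]
  have key : ((-(C X * (1 + C b * X)))^j * (1:Polynomial (Polynomial ℤ))^(2*k-j) * ((2*k).choose j : Polynomial (Polynomial ℤ)))
      * (C X * (1 + C b * X)^2)^d * ((k+d).choose k : Polynomial (Polynomial ℤ)) * (C X)^(k+d)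
      = C ((C ((-1)^j * ((k+d).choose k : ℤ) * ((2*k).choose j : ℤ)) : Polynomial ℤ) * X^(k+2*d+j))
        * (1 + C b * X)^(2*d+j) := by
    have hneg : (-(C X * (1 + C b * X)) : Polynomial (Polynomial ℤ))^j
        = (-1)^j * (C X * (1 + C b * X))^j := by
      exact neg_pow (R := Polynomial (Polynomial ℤ)) _ _
    rw [hneg]
    simp only [mul_pow, map_mul, map_pow, map_neg, map_one, map_natCast, map_intCast,
      ← pow_mul]
    ring
  rw [key, coeff_C_mul, coeff_one_add_C_mul_X_pow']
  simp only [map_mul, map_pow, map_neg, map_one, map_natCast, map_intCast]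
  ring

open Polynomial Finset in
set_option maxRecDepth 10000 in
private lemma E2' (b : Polynomial ℤ) (l n : ℕ) :
    ((1 + C (X^3) * (1 + C b * X)^2 : Polynomial (Polynomial ℤ)) ^ l).coeff n
      = (Gsum' l n) * b ^ n := by
  rw [Gsum', add_comm, add_pow]
  simp only [one_pow, mul_one, mul_pow, ← C_pow, ← pow_mul, finset_sum_coeff,
    coeff_C_mul, ← Polynomial.C_eq_natCast, coeff_mul_C, coeff_one_add_C_mul_X_pow']
  rw [Finset.sum_mul]
  apply Finset.sum_congr rfl
  intro c _
  rw [map_mul]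
  ring

open Polynomial Finset in
set_option maxRecDepth 10000 in
private lemma master' (l : ℕ) :
    (X : Polynomial ℤ)^(l+2) * Ssum' l (l+2) = X^l * ((1+X)^2 * Gsum' l (l+2)) := by
  have hM : (C ((1+X)^2) : Polynomial (Polynomial ℤ)) *
        ((1 - C X * (1 + C X * X))^2 + C X * (1 + C X * X)^2)
      = C (1+X) * (1 + C (X^3) * (1 + C (1+X) * X)^2) := by
    simp only [map_add, map_mul, map_pow, map_one]
    ring
  have hMl := congrArg (fun p => p ^ l * (C X)^l) hM
  simp only [mul_pow] at hMl
  have hL : (C ((1+X)^2) : Polynomial (Polynomial ℤ))^l *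
        ((1 - C X * (1 + C X * X))^2 + C X * (1 + C X * X)^2)^l * (C X)^l
      = (((1 - C X * (1 + C X * X))^2 + C X * (1 + C X * X)^2)^l * (C X)^l)
          * C ((1+X)^(2*l)) := by
    rw [← map_pow, ← pow_mul]; ring
  have hR : (C (1+X) : Polynomial (Polynomial ℤ))^l *
        (1 + C (X^3) * (1 + C (1+X) * X)^2)^l * (C X)^l
      = ((1 + C (X^3) * (1 + C (1+X) * X)^2)^l) * C ((1+X)^l * X^l) := by
    rw [map_mul, ← map_pow, ← map_pow]; ring
  rw [hL, hR] at hMl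
  have hco := congrArg (fun p => Polynomial.coeff p (l+2)) hMl
  simp only [coeff_mul_C] at hco
  rw [E1' X l (l+2), E2' (1+X) l (l+2)] at hco
  have hne : ((1+X : Polynomial ℤ))^(2*l) ≠ 0 := by
    apply pow_ne_zero
    intro h
    have := congrArg (fun p => Polynomial.coeff p 0) h
    simp at this
  apply mul_right_cancel₀ hne
  linear_combination hco

open Polynomial Finset in
private lemma LHSeval' (l m : ℕ) :
    (Ssum' l (l+2)).coeff m
      = ∑ k ∈ Finset.range (l + 1),
        (-1 : ℤ) ^ ((m : ℤ) - k).natAbs * (l.choose k : ℤ) * Ring.choose ((m : ℤ) - k) (l + 2) *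
          zbinom (2 * k) ((k : ℤ) - 2 * l + m) := by
  rw [Ssum', finset_sum_coeff]
  apply Finset.sum_congr rfl
  intro k hk
  have hkl : k ≤ l := Nat.lt_succ_iff.mp (mem_range.mp hk)
  rw [finset_sum_coeff]
  simp only [coeff_C_mul, coeff_X_pow, mul_ite, mul_one, mul_zero]
  by_cases hcase : 2*l ≤ m + k
  · have hsum : ∀ j ∈ range (2*k+1),
        (if m = 2*l-k+j then ((-1:ℤ)^j * (l.choose k : ℤ) * ((2*k).choose j : ℤ) * ((2*(l-k)+j).choose (l+2) : ℤ)) else 0)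
        = (if m + k - 2*l = j then ((-1:ℤ)^j * (l.choose k : ℤ) * ((2*k).choose j : ℤ) * ((2*(l-k)+j).choose (l+2) : ℤ)) else 0) := by
      intro j _
      exact if_congr (by omega) rfl rfl
    rw [Finset.sum_congr rfl hsum, Finset.sum_ite_eq]
    have hmk : (m:ℤ) - k = ((2*(l-k)+(m+k-2*l) : ℕ) : ℤ) := by push_cast [hkl]; omega
    have h2k : (2:ℤ) * k = ((2*k : ℕ):ℤ) := by push_cast; ring
    have hz : (k:ℤ) - 2*l + m = ((m+k-2*l : ℕ):ℤ) := by push_cast [hcase]; omega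
    rw [hmk, Ring.choose_natCast, h2k, hz, zbinom, if_pos (Int.natCast_nonneg _),
      Int.toNat_natCast, Ring.choose_natCast]
    have hsign : ((-1:ℤ)) ^ (((2*(l-k)+(m+k-2*l) : ℕ) : ℤ)).natAbs = (-1:ℤ)^(m+k-2*l) := by
      rw [Int.natAbs_natCast, pow_add, pow_mul, neg_one_sq, one_pow, one_mul]
    rw [hsign]
    split
    · ring
    · rename_i hmem
      have : 2*k < m + k - 2*l := by simp only [mem_range] at hmem; omega
      rw [Nat.choose_eq_zero_of_lt this]
      push_cast
      ring
  · rw [Finset.sum_eq_zero (fun j hj => if_neg (by omega))]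
    rw [zbinom, if_neg (by omega)]
    ring

open Polynomial Finset in
private lemma coeff_one_add_X_sq_mul' (c n : ℕ) :
    (((1+X)^2 * X^(3*c) : Polynomial ℤ)).coeff n
      = (if n = 3*c then 1 else 0) + 2*(if n = 3*c+1 then 1 else 0)
          + (if n = 3*c+2 then 1 else 0) := by
  have h : ((1+X)^2 * X^(3*c) : Polynomial ℤ)
      = X^(3*c) + C 2 * X^(3*c+1) + X^(3*c+2) := by
    simp only [map_ofNat]
    ring
  rw [h, coeff_add, coeff_add, coeff_C_mul, coeff_X_pow, coeff_X_pow, coeff_X_pow]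

private lemma ceil_third' (m : ℕ) : ⌈(m : ℚ) / 3⌉₊ = (m + 2) / 3 := by
  apply le_antisymm
  · rw [Nat.ceil_le, div_le_iff₀ (by norm_num)]
    exact_mod_cast (by omega : m ≤ ((m + 2) / 3) * 3)
  · rcases Nat.eq_zero_or_pos ((m+2)/3) with h | h
    · rw [h]; exact Nat.zero_le _
    · have h2 : ((m+2)/3 - 1) < ⌈(m:ℚ)/3⌉₊ := by
        rw [Nat.lt_ceil, lt_div_iff₀ (by norm_num)]
        exact_mod_cast (by omega : ((m+2)/3 - 1)*3 < m)
      omega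

open Polynomial Finset in
private lemma RHSeval' (l m : ℕ) :
    (((1+X)^2 * Gsum' l (l+2) : Polynomial ℤ)).coeff (m+2)
      = (1 + (if (3 : ℤ) ∣ ((m : ℤ) + 1) then 1 else 0)) * (l.choose ⌈(m : ℚ) / 3⌉₊ : ℤ) *
        ((2 * ⌈(m : ℚ) / 3⌉₊).choose (l + 2) : ℤ) := by
  rw [ceil_third']
  rw [Gsum', Finset.mul_sum, finset_sum_coeff]
  have hterm : ∀ c ∈ range (l+1),
      ((1+X)^2 * (C ((l.choose c : ℤ) * ((2*c).choose (l+2) : ℤ)) * X^(3*c))).coeff (m+2)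
      = (if (m+2)/3 = c then
          (1 + (if (3 : ℤ) ∣ ((m : ℤ) + 1) then 1 else 0)) *
            ((l.choose c : ℤ) * ((2*c).choose (l+2) : ℤ)) else 0) := by
    intro c _
    rw [show ((1+X)^2 * (C ((l.choose c : ℤ) * ((2*c).choose (l+2) : ℤ)) * X^(3*c)))
        = C ((l.choose c : ℤ) * ((2*c).choose (l+2) : ℤ)) * ((1+X)^2 * X^(3*c)) by ring]
    rw [coeff_C_mul, coeff_one_add_X_sq_mul']
    have hdvd : ((3 : ℤ) ∣ ((m : ℤ) + 1)) ↔ (m % 3 = 2) := by omega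
    simp only [hdvd]
    split_ifs <;> first | (exfalso; omega) | ring
  rw [Finset.sum_congr rfl hterm, Finset.sum_ite_eq]
  split
  · ring
  · rename_i hmem
    rw [Nat.choose_eq_zero_of_lt (by simp only [mem_range] at hmem; omega)]
    push_cast
    ring

theorem corollary_1_1_second (l m : ℕ) :
    ∑ k ∈ Finset.range (l + 1),
      (-1 : ℤ) ^ ((m : ℤ) - k).natAbs * (l.choose k : ℤ) * Ring.choose ((m : ℤ) - k) (l + 2) *
        zbinom (2 * k) ((k : ℤ) - 2 * l + m)
    = (1 + (if (3 : ℤ) ∣ ((m : ℤ) + 1) then 1 else 0)) * (l.choose ⌈(m : ℚ) / 3⌉₊ : ℤ) *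
        ((2 * ⌈(m : ℚ) / 3⌉₊).choose (l + 2) : ℤ) := by
  rw [← LHSeval' l m, ← RHSeval' l m]
  have h := congrArg (fun p => Polynomial.coeff p (m + (l+2))) (master' l)
  rw [Polynomial.coeff_X_pow_mul] at h
  rw [show m + (l+2) = (m+2) + l by omega, Polynomial.coeff_X_pow_mul] at h
  exact h
end

section
/- Let p be a prime and let d be an integer with 0 ≤ d ≤ p. Then ∑_{k=0}^{p−1} binom(2k, k+d) ≡ ((p−d)/3) (mod p). -/
/-- `chi3 a` is the Legendre symbol `(a/3)`: the unique element of `{0, 1, -1}`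
congruent to `a` modulo `3`. -/
def chi3 (a : ℤ) : ℤ := if a % 3 = 0 then 0 else if a % 3 = 1 then 1 else -1

lemma chi3_triple (n : ℤ) : chi3 n + chi3 (n + 1) + chi3 (n + 2) = 0 := by
  unfold chi3
  split_ifs <;> omega

/-- Telescoping Pascal identity: `a_d + a_{d+1} + a_{d+2} = C(2p, p+d+1)`. -/
lemma key_identity (p d : ℕ) :
    (∑ k ∈ Finset.range p, (2 * k).choose (k + d)) +
      (∑ k ∈ Finset.range p, (2 * k).choose (k + (d + 1))) +
      (∑ k ∈ Finset.range p, (2 * k).choose (k + (d + 2))) =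
      (2 * p).choose (p + (d + 1)) := by
  have step : ∀ k : ℕ,
      (2 * k).choose (k + d) + (2 * k).choose (k + (d + 1)) +
        ((2 * k).choose (k + (d + 1)) + (2 * k).choose (k + (d + 2))) =
        (2 * (k + 1)).choose ((k + 1) + (d + 1)) := by
    intro k
    have h2 : 2 * (k + 1) = (2 * k + 1) + 1 := by ring
    have h3 : (k + 1) + (d + 1) = (k + d + 1) + 1 := by ring
    rw [h2, h3, Nat.choose_succ_succ]
    have h4 : (2 * k + 1).choose (k + d + 1) =
        (2 * k).choose (k + d) + (2 * k).choose (k + d + 1) := Nat.choose_succ_succ _ _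
    have h5 : (2 * k + 1).choose (k + d + 1 + 1) =
        (2 * k).choose (k + d + 1) + (2 * k).choose (k + d + 1 + 1) := Nat.choose_succ_succ _ _
    rw [h4, h5]
    ring_nf
  have h1 : ∑ k ∈ Finset.range p,
        ((2 * k).choose (k + d) + (2 * k).choose (k + (d + 1)) +
          ((2 * k).choose (k + (d + 1)) + (2 * k).choose (k + (d + 2)))) =
      ∑ k ∈ Finset.range p, (2 * (k + 1)).choose ((k + 1) + (d + 1)) :=
    Finset.sum_congr rfl fun k _ => step k
  have h2 : ∑ k ∈ Finset.range (p + 1), (2 * k).choose (k + (d + 1)) =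
      (∑ k ∈ Finset.range p, (2 * (k + 1)).choose ((k + 1) + (d + 1))) +
        (2 * 0).choose (0 + (d + 1)) := Finset.sum_range_succ' _ _
  have h3 : ∑ k ∈ Finset.range (p + 1), (2 * k).choose (k + (d + 1)) =
      (∑ k ∈ Finset.range p, (2 * k).choose (k + (d + 1))) +
        (2 * p).choose (p + (d + 1)) := Finset.sum_range_succ _ _
  have h4 : (2 * 0).choose (0 + (d + 1)) = 0 := by
    apply Nat.choose_eq_zero_of_lt; omega
  simp only [Finset.sum_add_distrib] at h1
  omega

lemma middle_binom_dvd (p d : ℕ) (hp : p.Prime) (hd2 : d + 2 ≤ p) :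
    (p : ℤ) ∣ ((2 * p).choose (p + (d + 1)) : ℤ) := by
  haveI : Fact p.Prime := ⟨hp⟩
  have hlucas := Choose.choose_modEq_choose_mod_mul_choose_div_nat
    (p := p) (n := 2 * p) (k := p + (d + 1))
  have hmod1 : (2 * p) % p = 0 := Nat.mul_mod_left 2 p
  have hmod2 : (p + (d + 1)) % p = d + 1 := by
    rw [Nat.add_mod_left]
    exact Nat.mod_eq_of_lt (by omega)
  rw [hmod1, hmod2,
    show Nat.choose 0 (d + 1) = 0 from Nat.choose_eq_zero_of_lt (by omega),
    Nat.zero_mul] at hlucas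
  have := (Nat.modEq_zero_iff_dvd).mp hlucas
  exact_mod_cast Int.natCast_dvd_natCast.mpr this

theorem sum_central_binom_shift (p : ℕ) (hp : p.Prime) (d : ℕ) (hd : d ≤ p) :
    (∑ k ∈ Finset.range p, ((2 * k).choose (k + d) : ℤ))
      ≡ chi3 ((p : ℤ) - d) [ZMOD (p : ℤ)] := by
  -- strong induction on m = p - d
  suffices H : ∀ m : ℕ, ∀ d : ℕ, d ≤ p → p - d = m →
      (∑ k ∈ Finset.range p, ((2 * k).choose (k + d) : ℤ))
        ≡ chi3 ((p : ℤ) - d) [ZMOD (p : ℤ)] from H (p - d) d hd rfl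
  intro m
  induction m using Nat.strong_induction_on with
  | _ m ih =>
    intro d hd hm
    rcases m with _ | m
    · -- d = p
      have hdp : d = p := by omega
      have hz : (∑ k ∈ Finset.range p, ((2 * k).choose (k + d) : ℤ)) = 0 := by
        apply Finset.sum_eq_zero
        intro k hk
        rw [Finset.mem_range] at hk
        rw [Nat.choose_eq_zero_of_lt (by omega)]
        simp
      rw [hz, hdp, sub_self]
      unfold chi3
      norm_num
    rcases m with _ | n
    · -- d = p - 1, i.e. p = d + 1
      have hpd : p = d + 1 := by omega
      subst hpd
      rw [Finset.sum_range_succ]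
      have hz : (∑ k ∈ Finset.range d, ((2 * k).choose (k + d) : ℤ)) = 0 := by
        apply Finset.sum_eq_zero
        intro k hk
        rw [Finset.mem_range] at hk
        rw [Nat.choose_eq_zero_of_lt (by omega)]
        simp
      have h1 : (2 * d).choose (d + d) = 1 := by
        rw [show d + d = 2 * d by ring, Nat.choose_self]
      rw [hz, h1]
      push_cast
      rw [show ((d : ℤ) + 1) - d = 1 by ring]
      unfold chi3
      norm_num
    · -- inductive step: d + 2 ≤ p
      have hd1 : d + 1 ≤ p := by omega
      have hd2 : d + 2 ≤ p := by omega
      have ih1 := ih (n + 1) (by omega) (d + 1) hd1 (by omega)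
      have ih2 := ih n (by omega) (d + 2) hd2 (by omega)
      have hdvd : (p : ℤ) ∣ ((2 * p).choose (p + (d + 1)) : ℤ) :=
        middle_binom_dvd p d hp hd2
      have hkey := key_identity p d
      have hkeyZ : (∑ k ∈ Finset.range p, ((2 * k).choose (k + d) : ℤ)) +
          (∑ k ∈ Finset.range p, ((2 * k).choose (k + (d + 1)) : ℤ)) +
          (∑ k ∈ Finset.range p, ((2 * k).choose (k + (d + 2)) : ℤ)) =
          ((2 * p).choose (p + (d + 1)) : ℤ) := by
        exact_mod_cast congrArg (Nat.cast : ℕ → ℤ) hkey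
      have hbin : ((2 * p).choose (p + (d + 1)) : ℤ) ≡ 0 [ZMOD (p : ℤ)] :=
        (Int.modEq_zero_iff_dvd).mpr hdvd
      have hA : (∑ k ∈ Finset.range p, ((2 * k).choose (k + d) : ℤ)) =
          ((2 * p).choose (p + (d + 1)) : ℤ) -
          (∑ k ∈ Finset.range p, ((2 * k).choose (k + (d + 1)) : ℤ)) -
          (∑ k ∈ Finset.range p, ((2 * k).choose (k + (d + 2)) : ℤ)) := by linarith
      rw [hA]
      have htriple := chi3_triple ((p : ℤ) - d - 2)
      have ih1' : (∑ k ∈ Finset.range p, ((2 * k).choose (k + (d + 1)) : ℤ))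
          ≡ chi3 (((p : ℤ) - d - 2) + 1) [ZMOD (p : ℤ)] := by
        rw [show ((p : ℤ) - d - 2) + 1 = (p : ℤ) - ((d : ℤ) + 1) by ring]
        push_cast at ih1
        exact ih1
      have ih2' : (∑ k ∈ Finset.range p, ((2 * k).choose (k + (d + 2)) : ℤ))
          ≡ chi3 ((p : ℤ) - d - 2) [ZMOD (p : ℤ)] := by
        rw [show ((p : ℤ) - d - 2) = (p : ℤ) - ((d : ℤ) + 2) by ring]
        push_cast at ih2
        exact ih2
      calc ((2 * p).choose (p + (d + 1)) : ℤ) -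
            (∑ k ∈ Finset.range p, ((2 * k).choose (k + (d + 1)) : ℤ)) -
            (∑ k ∈ Finset.range p, ((2 * k).choose (k + (d + 2)) : ℤ))
          ≡ 0 - chi3 (((p : ℤ) - d - 2) + 1) - chi3 ((p : ℤ) - d - 2) [ZMOD (p : ℤ)] :=
            (hbin.sub ih1').sub ih2'
        _ = chi3 ((p : ℤ) - d) := by
            rw [show ((p : ℤ) - d - 2) + 2 = (p : ℤ) - d by ring] at htriple
            linarith
end

section
/- Let p be a prime and let d be an integer with 0 ≤ d ≤ p. Then 3 · ∑_{k=1}^{p−1} k · binom(2k, k+d) ≡ (3·[3∣p−d] − 1) · (2·((p−d)/3) − d) − 3·[p=3] (mod p). -/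
open scoped Polynomial

private def tf (p m : ℕ) : ZMod p := if 3 ∣ m then ((m/3 + 1 : ℕ) : ZMod p) else 0

private lemma geom_aux {R : Type*} [CommRing R] (x y : R) (n : ℕ) :
    (y - x)^2 * ∑ k ∈ Finset.range n, (k : R) * x^k * y^(n-1-k)
      = x*y^n - (n:R)*(x^n*y) + ((n:R)-1)*x^(n+1) := by
  induction n with
  | zero => simp
  | succ n ih =>
    rw [Finset.sum_range_succ]
    have h1 : ∑ k ∈ Finset.range n, (k : R) * x^k * y^(n+1-1-k)
        = y * ∑ k ∈ Finset.range n, (k : R) * x^k * y^(n-1-k) := by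
      rw [Finset.mul_sum]
      refine Finset.sum_congr rfl fun k hk => ?_
      have hk' : k < n := Finset.mem_range.mp hk
      have h2 : n + 1 - 1 - k = (n - 1 - k) + 1 := by omega
      rw [h2, pow_succ]; ring
    have h3 : n + 1 - 1 - n = 0 := by omega
    rw [h1, h3]
    push_cast
    linear_combination y * ih

open PowerSeries in
private lemma T_inv (p : ℕ) [Fact p.Prime] :
    ((1 : PowerSeries (ZMod p)) - X^3)^2 * PowerSeries.mk (tf p) = 1 := by
  set T := PowerSeries.mk (tf p) with hTdef
  have expand : ((1 : PowerSeries (ZMod p)) - X^3)^2 * T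
      = T - ((T*X^3) + (T*X^3)) + ((T*X^3))*X^3 := by ring
  rw [expand]
  ext n
  simp only [map_sub, map_add, PowerSeries.coeff_mul_X_pow', PowerSeries.coeff_one, hTdef,
    PowerSeries.coeff_mk, tf]
  rcases Nat.lt_or_ge n 6 with h | h
  · interval_cases n <;> norm_num
  · have hn0 : n ≠ 0 := by omega
    rw [if_neg hn0]
    by_cases h3 : 3 ∣ n
    · obtain ⟨b, hb⟩ : ∃ b, n = 3*b+6 := ⟨n/3-2, by omega⟩
      subst hb
      have e1 : 3 ≤ 3*b+6 := by omega
      have e2 : 3 ≤ 3*b+6-3 := by omega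
      have e3 : (3*b+6)/3 + 1 = b + 3 := by omega
      have e4 : 3 ∣ 3*b+6-3 := by omega
      have e5 : (3*b+6-3)/3 + 1 = b + 2 := by omega
      have e6 : 3 ∣ 3*b+6-3-3 := by omega
      have e7 : (3*b+6-3-3)/3 + 1 = b + 1 := by omega
      rw [if_pos h3, if_pos e1, if_pos e2, if_pos e4, if_pos e6, e3, e5, e7]
      push_cast
      ring
    · have e1 : ¬ 3 ∣ n - 3 := by omega
      have e2 : ¬ 3 ∣ n - 3 - 3 := by omega
      simp [h3, e1, e2]

open Polynomial in
private lemma key_poly (p : ℕ) [Fact p.Prime] :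
    ((1 : (ZMod p)[X]) - X^3)^2 *
        ∑ k ∈ Finset.range p, (k : (ZMod p)[X]) * ((1+X)^2)^k * X^(p-1-k)
      = -((1 - X^2)^2 * (1 + X^p + X^p * X^p)) := by
  have hgeom := geom_aux ((1+X)^2 : (ZMod p)[X]) X p
  have hp0 : ((p : ℕ) : (ZMod p)[X]) = 0 := by
    simp [CharP.cast_eq_zero]
  rw [hp0] at hgeom
  have hF : ((1+X : (ZMod p)[X]))^p = 1 + X^p := by
    rw [add_pow_char]; simp
  have hpow : (((1+X:(ZMod p)[X])^2)^(p+1)) = (1 + X^p)^2 * (1+X)^2 := by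
    rw [← pow_mul]
    have h2 : 2*(p+1) = p*2 + 2 := by ring
    rw [h2, pow_add, pow_mul, hF]
  rw [hpow] at hgeom
  linear_combination ((1 : (ZMod p)[X])-X)^2 * hgeom

private lemma main5 (p : ℕ) [Fact p.Prime] (hp5 : 5 ≤ p) (d : ℕ) (hd : d ≤ p) :
    (3 : ZMod p) * ∑ k ∈ Finset.range p, (k : ZMod p) * ((2*k).choose (k+d) : ZMod p)
      = (3:ZMod p) * (-( tf p (p-1+d)
            + (if p ≤ p-1+d then tf p (p-1+d-p) else 0)
            + (if 2*p ≤ p-1+d then tf p (p-1+d-2*p) else 0))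
          + ((if 2 ≤ p-1+d then tf p (p-1+d-2) else 0)
            + (if p+2 ≤ p-1+d then tf p (p-1+d-(p+2)) else 0)
            + (if 2*p+2 ≤ p-1+d then tf p (p-1+d-(2*p+2)) else 0))
          + ((if 2 ≤ p-1+d then tf p (p-1+d-2) else 0)
            + (if p+2 ≤ p-1+d then tf p (p-1+d-(p+2)) else 0)
            + (if 2*p+2 ≤ p-1+d then tf p (p-1+d-(2*p+2)) else 0))
          - ((if 4 ≤ p-1+d then tf p (p-1+d-4) else 0)
            + (if p+4 ≤ p-1+d then tf p (p-1+d-(p+4)) else 0)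
            + (if 2*p+4 ≤ p-1+d then tf p (p-1+d-(2*p+4)) else 0))) := by
  have hkey := key_poly p
  -- move to power series
  have hkey2 : ((1 : PowerSeries (ZMod p)) - PowerSeries.X^3)^2 *
      ((∑ k ∈ Finset.range p,
        (k : (ZMod p)[X]) * ((1+Polynomial.X)^2)^k * Polynomial.X^(p-1-k) : (ZMod p)[X]) :
          PowerSeries (ZMod p))
      = -((1 - PowerSeries.X^2)^2 *
          (1 + PowerSeries.X^p + PowerSeries.X^p * PowerSeries.X^p)) := by
    have h := congrArg (Polynomial.coeToPowerSeries.ringHom (R := ZMod p)) hkey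
    simpa only [map_mul, map_pow, map_sub, map_add, map_neg, map_one,
      Polynomial.coeToPowerSeries.ringHom_apply, Polynomial.coe_X] using h
  set Q : (ZMod p)[X] :=
    ∑ k ∈ Finset.range p, (k : (ZMod p)[X]) * ((1+Polynomial.X)^2)^k * Polynomial.X^(p-1-k)
    with hQdef
  set T := PowerSeries.mk (tf p) with hTdef
  have hne : ((1 : PowerSeries (ZMod p)) - PowerSeries.X^3)^2 ≠ 0 := by
    intro h
    have h0 := congrArg (PowerSeries.constantCoeff (R := ZMod p)) h
    simp at h0
  have hQ : (Q : PowerSeries (ZMod p))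
      = -((1 - PowerSeries.X^2)^2 *
          (1 + PowerSeries.X^p + PowerSeries.X^p * PowerSeries.X^p)) * T := by
    apply mul_left_cancel₀ hne
    rw [hkey2]
    calc -((1 - PowerSeries.X^2)^2 *
          (1 + PowerSeries.X^p + PowerSeries.X^p * PowerSeries.X^p))
        = -((1 - PowerSeries.X^2)^2 *
          (1 + PowerSeries.X^p + PowerSeries.X^p * PowerSeries.X^p)) *
            (((1 : PowerSeries (ZMod p)) - PowerSeries.X^3)^2 * T) := by
          rw [T_inv p]; ring
      _ = _ := by ring
  have hBT : -((1 - PowerSeries.X^2)^2 *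
          (1 + PowerSeries.X^p + PowerSeries.X^p * PowerSeries.X^p)) * T
      = -(T + T*PowerSeries.X^p + T*PowerSeries.X^(2*p))
        + (T*PowerSeries.X^2 + T*PowerSeries.X^(p+2) + T*PowerSeries.X^(2*p+2))
        + (T*PowerSeries.X^2 + T*PowerSeries.X^(p+2) + T*PowerSeries.X^(2*p+2))
        - (T*PowerSeries.X^4 + T*PowerSeries.X^(p+4) + T*PowerSeries.X^(2*p+4)) := by
    ring
  have hco := congrArg (PowerSeries.coeff (R := ZMod p) (p-1+d)) hQ
  rw [hBT] at hco
  rw [Polynomial.coeff_coe] at hco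
  have hL : Q.coeff (p-1+d) = ∑ k ∈ Finset.range p, (k : ZMod p) * ((2*k).choose (k+d)) := by
    rw [hQdef, Polynomial.finset_sum_coeff]
    refine Finset.sum_congr rfl fun k hk => ?_
    have hk' : k < p := Finset.mem_range.mp hk
    rw [Polynomial.coeff_mul_X_pow', if_pos (by omega : p-1-k ≤ p-1+d),
      show p-1+d - (p-1-k) = k+d from by omega, ← pow_mul,
      add_comm (1 : (ZMod p)[X]) Polynomial.X, ← Polynomial.C_eq_natCast,
      Polynomial.coeff_C_mul, Polynomial.coeff_X_add_one_pow]
  rw [hL] at hco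
  rw [hco]
  simp only [map_neg, map_add, map_sub, PowerSeries.coeff_mul_X_pow', hTdef,
    PowerSeries.coeff_mk]

private lemma tf_eq (p m j : ℕ) (h : m = 3*j) : tf p m = ((j+1:ℕ) : ZMod p) := by
  subst h
  have h3 : 3 ∣ 3*j := ⟨j, rfl⟩
  simp only [tf, if_pos h3, Nat.mul_div_cancel_left _ (show 0 < 3 by norm_num)]

private lemma tf_zero (p m : ℕ) (h : ¬ 3 ∣ m) : tf p m = 0 := if_neg h

private lemma final_arith (p : ℕ) (hp : p.Prime) (hp5 : 5 ≤ p) (d : ℕ) (hd : d ≤ p) :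
    (3:ZMod p) * (-( tf p (p-1+d)
          + (if p ≤ p-1+d then tf p (p-1+d-p) else 0)
          + (if 2*p ≤ p-1+d then tf p (p-1+d-2*p) else 0))
        + ((if 2 ≤ p-1+d then tf p (p-1+d-2) else 0)
          + (if p+2 ≤ p-1+d then tf p (p-1+d-(p+2)) else 0)
          + (if 2*p+2 ≤ p-1+d then tf p (p-1+d-(2*p+2)) else 0))
        + ((if 2 ≤ p-1+d then tf p (p-1+d-2) else 0)
          + (if p+2 ≤ p-1+d then tf p (p-1+d-(p+2)) else 0)
          + (if 2*p+2 ≤ p-1+d then tf p (p-1+d-(2*p+2)) else 0))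
        - ((if 4 ≤ p-1+d then tf p (p-1+d-4) else 0)
          + (if p+4 ≤ p-1+d then tf p (p-1+d-(p+4)) else 0)
          + (if 2*p+4 ≤ p-1+d then tf p (p-1+d-(2*p+4)) else 0)))
    = (((3 * (if (3:ℤ) ∣ ((p:ℤ) - (d:ℤ)) then 1 else 0) - 1)
        * (2 * chi3 ((p:ℤ) - (d:ℤ)) - (d:ℤ)) : ℤ) : ZMod p) := by
  have hp3 : ¬ (3 ∣ p) := by
    intro h
    have := (Nat.prime_dvd_prime_iff_eq (by norm_num) hp).mp h
    omega
  rw [if_neg (show ¬ 2*p ≤ p-1+d from by omega),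
    if_neg (show ¬ 2*p+2 ≤ p-1+d from by omega),
    if_neg (show ¬ 2*p+4 ≤ p-1+d from by omega),
    if_pos (show 2 ≤ p-1+d from by omega),
    if_pos (show 4 ≤ p-1+d from by omega)]
  have gp1 : (if p ≤ p-1+d then tf p (p-1+d-p) else 0) = if 1 ≤ d then tf p (d-1) else 0 := by
    rcases le_or_gt 1 d with h | h
    · rw [if_pos (by omega), if_pos h, show p-1+d-p = d-1 from by omega]
    · rw [if_neg (by omega), if_neg (by omega)]
  have gp2 : (if p+2 ≤ p-1+d then tf p (p-1+d-(p+2)) else 0)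
      = if 3 ≤ d then tf p (d-3) else 0 := by
    rcases le_or_gt 3 d with h | h
    · rw [if_pos (by omega), if_pos h, show p-1+d-(p+2) = d-3 from by omega]
    · rw [if_neg (by omega), if_neg (by omega)]
  have gp3 : (if p+4 ≤ p-1+d then tf p (p-1+d-(p+4)) else 0)
      = if 5 ≤ d then tf p (d-5) else 0 := by
    rcases le_or_gt 5 d with h | h
    · rw [if_pos (by omega), if_pos h, show p-1+d-(p+4) = d-5 from by omega]
    · rw [if_neg (by omega), if_neg (by omega)]
  rw [gp1, gp2, gp3, show p-1+d = p+d-1 from by omega, show p+d-1-2 = p+d-3 from by omega,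
    show p+d-1-4 = p+d-5 from by omega]
  have hdcase : d = 0 ∨ (∃ a, d = 3*a+3) ∨ (∃ a, d = 3*a+1) ∨ d = 2 ∨ (∃ a, d = 3*a+5) := by
    rcases (show d = 0 ∨ (3 ≤ d ∧ d % 3 = 0) ∨ d % 3 = 1 ∨ d = 2 ∨ (5 ≤ d ∧ d % 3 = 2) from by omega) with h|h|h|h|h
    · exact Or.inl h
    · exact Or.inr (Or.inl ⟨(d-3)/3, by omega⟩)
    · exact Or.inr (Or.inr (Or.inl ⟨(d-1)/3, by omega⟩))
    · exact Or.inr (Or.inr (Or.inr (Or.inl h)))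
    · exact Or.inr (Or.inr (Or.inr (Or.inr ⟨(d-5)/3, by omega⟩)))
  rcases (show p % 3 = 1 ∨ p % 3 = 2 from by omega) with hp1 | hp2
  · obtain ⟨b, rfl⟩ : ∃ b, p = 3*b+7 := ⟨(p-7)/3, by omega⟩
    rcases hdcase with rfl | ⟨a, rfl⟩ | ⟨a, rfl⟩ | rfl | ⟨a, rfl⟩
    · have hz : ((3*b+7 : ℕ) : ZMod (3*b+7)) = 0 := ZMod.natCast_self _
      rw [if_neg (show ¬ 1 ≤ 0 from by omega), if_neg (show ¬ 3 ≤ 0 from by omega), if_neg (show ¬ 5 ≤ 0 from by omega)]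
      rw [tf_eq (3*b+7) (3*b+7+0-1) (b+2) (by omega), tf_zero (3*b+7) (3*b+7+0-3) (by omega), tf_zero (3*b+7) (3*b+7+0-5) (by omega)]
      rw [if_neg (show ¬ (3:ℤ) ∣ ((3*b+7:ℕ):ℤ) - ((0:ℕ):ℤ) from by push_cast; omega)]
      rw [show chi3 (((3*b+7:ℕ):ℤ) - ((0:ℕ):ℤ)) = 1 from by simp only [chi3]; rw [if_neg (by push_cast; omega), if_pos (by push_cast; omega)]]
      push_cast at hz ⊢
      linear_combination (-1 : ZMod (3*b+7)) * hz
    · have hz : ((3*b+7 : ℕ) : ZMod (3*b+7)) = 0 := ZMod.natCast_self _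
      rw [if_pos (show 1 ≤ 3*a+3 from by omega), if_pos (show 3 ≤ 3*a+3 from by omega)]
      have z5 : (if 5 ≤ 3*a+3 then tf (3*b+7) (3*a+3-5) else 0) = 0 := by
        split_ifs with h
        · exact tf_zero _ _ (by omega)
        · rfl
      rw [z5]
      rw [tf_eq (3*b+7) (3*b+7+(3*a+3)-1) (a+b+3) (by omega), tf_zero (3*b+7) (3*b+7+(3*a+3)-3) (by omega), tf_zero (3*b+7) (3*b+7+(3*a+3)-5) (by omega), tf_zero (3*b+7) (3*a+3-1) (by omega), tf_eq (3*b+7) (3*a+3-3) (a) (by omega)]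
      rw [if_neg (show ¬ (3:ℤ) ∣ ((3*b+7:ℕ):ℤ) - ((3*a+3:ℕ):ℤ) from by push_cast; omega)]
      rw [show chi3 (((3*b+7:ℕ):ℤ) - ((3*a+3:ℕ):ℤ)) = 1 from by simp only [chi3]; rw [if_neg (by push_cast; omega), if_pos (by push_cast; omega)]]
      push_cast at hz ⊢
      linear_combination (-1 : ZMod (3*b+7)) * hz
    · have hz : ((3*b+7 : ℕ) : ZMod (3*b+7)) = 0 := ZMod.natCast_self _
      rw [if_pos (show 1 ≤ 3*a+1 from by omega)]
      have z3 : (if 3 ≤ 3*a+1 then tf (3*b+7) (3*a+1-3) else 0) = 0 := by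
        split_ifs with h
        · exact tf_zero _ _ (by omega)
        · rfl
      rw [z3]
      have z5 : (if 5 ≤ 3*a+1 then tf (3*b+7) (3*a+1-5) else 0) = 0 := by
        split_ifs with h
        · exact tf_zero _ _ (by omega)
        · rfl
      rw [z5]
      rw [tf_zero (3*b+7) (3*b+7+(3*a+1)-1) (by omega), tf_zero (3*b+7) (3*b+7+(3*a+1)-3) (by omega), tf_eq (3*b+7) (3*b+7+(3*a+1)-5) (a+b+1) (by omega), tf_eq (3*b+7) (3*a+1-1) (a) (by omega)]
      rw [if_pos (show (3:ℤ) ∣ ((3*b+7:ℕ):ℤ) - ((3*a+1:ℕ):ℤ) from by push_cast; omega)]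
      rw [show chi3 (((3*b+7:ℕ):ℤ) - ((3*a+1:ℕ):ℤ)) = 0 from by simp only [chi3]; rw [if_pos (by push_cast; omega)]]
      push_cast at hz ⊢
      linear_combination (-1 : ZMod (3*b+7)) * hz
    · have hz : ((3*b+7 : ℕ) : ZMod (3*b+7)) = 0 := ZMod.natCast_self _
      rw [if_pos (show 1 ≤ 2 from by omega), if_neg (show ¬ 3 ≤ 2 from by omega), if_neg (show ¬ 5 ≤ 2 from by omega)]
      rw [tf_zero (3*b+7) (3*b+7+2-1) (by omega), tf_eq (3*b+7) (3*b+7+2-3) (b+2) (by omega), tf_zero (3*b+7) (3*b+7+2-5) (by omega), tf_zero (3*b+7) (2-1) (by omega)]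
      rw [if_neg (show ¬ (3:ℤ) ∣ ((3*b+7:ℕ):ℤ) - ((2:ℕ):ℤ) from by push_cast; omega)]
      rw [show chi3 (((3*b+7:ℕ):ℤ) - ((2:ℕ):ℤ)) = -1 from by simp only [chi3]; rw [if_neg (by push_cast; omega), if_neg (by push_cast; omega)]]
      push_cast at hz ⊢
      linear_combination (2 : ZMod (3*b+7)) * hz
    · have hz : ((3*b+7 : ℕ) : ZMod (3*b+7)) = 0 := ZMod.natCast_self _
      rw [if_pos (show 1 ≤ 3*a+5 from by omega), if_pos (show 3 ≤ 3*a+5 from by omega), if_pos (show 5 ≤ 3*a+5 from by omega)]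
      rw [tf_zero (3*b+7) (3*b+7+(3*a+5)-1) (by omega), tf_eq (3*b+7) (3*b+7+(3*a+5)-3) (a+b+3) (by omega), tf_zero (3*b+7) (3*b+7+(3*a+5)-5) (by omega), tf_zero (3*b+7) (3*a+5-1) (by omega), tf_zero (3*b+7) (3*a+5-3) (by omega), tf_eq (3*b+7) (3*a+5-5) (a) (by omega)]
      rw [if_neg (show ¬ (3:ℤ) ∣ ((3*b+7:ℕ):ℤ) - ((3*a+5:ℕ):ℤ) from by push_cast; omega)]
      rw [show chi3 (((3*b+7:ℕ):ℤ) - ((3*a+5:ℕ):ℤ)) = -1 from by simp only [chi3]; rw [if_neg (by push_cast; omega), if_neg (by push_cast; omega)]]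
      push_cast at hz ⊢
      linear_combination (2 : ZMod (3*b+7)) * hz
  · obtain ⟨b, rfl⟩ : ∃ b, p = 3*b+5 := ⟨(p-5)/3, by omega⟩
    rcases hdcase with rfl | ⟨a, rfl⟩ | ⟨a, rfl⟩ | rfl | ⟨a, rfl⟩
    · have hz : ((3*b+5 : ℕ) : ZMod (3*b+5)) = 0 := ZMod.natCast_self _
      rw [if_neg (show ¬ 1 ≤ 0 from by omega), if_neg (show ¬ 3 ≤ 0 from by omega), if_neg (show ¬ 5 ≤ 0 from by omega)]
      rw [tf_zero (3*b+5) (3*b+5+0-1) (by omega), tf_zero (3*b+5) (3*b+5+0-3) (by omega), tf_eq (3*b+5) (3*b+5+0-5) (b) (by omega)]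
      rw [if_neg (show ¬ (3:ℤ) ∣ ((3*b+5:ℕ):ℤ) - ((0:ℕ):ℤ) from by push_cast; omega)]
      rw [show chi3 (((3*b+5:ℕ):ℤ) - ((0:ℕ):ℤ)) = -1 from by simp only [chi3]; rw [if_neg (by push_cast; omega), if_neg (by push_cast; omega)]]
      push_cast at hz ⊢
      linear_combination (-1 : ZMod (3*b+5)) * hz
    · have hz : ((3*b+5 : ℕ) : ZMod (3*b+5)) = 0 := ZMod.natCast_self _
      rw [if_pos (show 1 ≤ 3*a+3 from by omega), if_pos (show 3 ≤ 3*a+3 from by omega)]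
      have z5 : (if 5 ≤ 3*a+3 then tf (3*b+5) (3*a+3-5) else 0) = 0 := by
        split_ifs with h
        · exact tf_zero _ _ (by omega)
        · rfl
      rw [z5]
      rw [tf_zero (3*b+5) (3*b+5+(3*a+3)-1) (by omega), tf_zero (3*b+5) (3*b+5+(3*a+3)-3) (by omega), tf_eq (3*b+5) (3*b+5+(3*a+3)-5) (a+b+1) (by omega), tf_zero (3*b+5) (3*a+3-1) (by omega), tf_eq (3*b+5) (3*a+3-3) (a) (by omega)]
      rw [if_neg (show ¬ (3:ℤ) ∣ ((3*b+5:ℕ):ℤ) - ((3*a+3:ℕ):ℤ) from by push_cast; omega)]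
      rw [show chi3 (((3*b+5:ℕ):ℤ) - ((3*a+3:ℕ):ℤ)) = -1 from by simp only [chi3]; rw [if_neg (by push_cast; omega), if_neg (by push_cast; omega)]]
      push_cast at hz ⊢
      linear_combination (-1 : ZMod (3*b+5)) * hz
    · have hz : ((3*b+5 : ℕ) : ZMod (3*b+5)) = 0 := ZMod.natCast_self _
      rw [if_pos (show 1 ≤ 3*a+1 from by omega)]
      have z3 : (if 3 ≤ 3*a+1 then tf (3*b+5) (3*a+1-3) else 0) = 0 := by
        split_ifs with h
        · exact tf_zero _ _ (by omega)
        · rfl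
      rw [z3]
      have z5 : (if 5 ≤ 3*a+1 then tf (3*b+5) (3*a+1-5) else 0) = 0 := by
        split_ifs with h
        · exact tf_zero _ _ (by omega)
        · rfl
      rw [z5]
      rw [tf_zero (3*b+5) (3*b+5+(3*a+1)-1) (by omega), tf_eq (3*b+5) (3*b+5+(3*a+1)-3) (a+b+1) (by omega), tf_zero (3*b+5) (3*b+5+(3*a+1)-5) (by omega), tf_eq (3*b+5) (3*a+1-1) (a) (by omega)]
      rw [if_neg (show ¬ (3:ℤ) ∣ ((3*b+5:ℕ):ℤ) - ((3*a+1:ℕ):ℤ) from by push_cast; omega)]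
      rw [show chi3 (((3*b+5:ℕ):ℤ) - ((3*a+1:ℕ):ℤ)) = 1 from by simp only [chi3]; rw [if_neg (by push_cast; omega), if_pos (by push_cast; omega)]]
      push_cast at hz ⊢
      linear_combination (2 : ZMod (3*b+5)) * hz
    · have hz : ((3*b+5 : ℕ) : ZMod (3*b+5)) = 0 := ZMod.natCast_self _
      rw [if_pos (show 1 ≤ 2 from by omega), if_neg (show ¬ 3 ≤ 2 from by omega), if_neg (show ¬ 5 ≤ 2 from by omega)]
      rw [tf_eq (3*b+5) (3*b+5+2-1) (b+2) (by omega), tf_zero (3*b+5) (3*b+5+2-3) (by omega), tf_zero (3*b+5) (3*b+5+2-5) (by omega), tf_zero (3*b+5) (2-1) (by omega)]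
      rw [if_pos (show (3:ℤ) ∣ ((3*b+5:ℕ):ℤ) - ((2:ℕ):ℤ) from by push_cast; omega)]
      rw [show chi3 (((3*b+5:ℕ):ℤ) - ((2:ℕ):ℤ)) = 0 from by simp only [chi3]; rw [if_pos (by push_cast; omega)]]
      push_cast at hz ⊢
      linear_combination (-1 : ZMod (3*b+5)) * hz
    · have hz : ((3*b+5 : ℕ) : ZMod (3*b+5)) = 0 := ZMod.natCast_self _
      rw [if_pos (show 1 ≤ 3*a+5 from by omega), if_pos (show 3 ≤ 3*a+5 from by omega), if_pos (show 5 ≤ 3*a+5 from by omega)]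
      rw [tf_eq (3*b+5) (3*b+5+(3*a+5)-1) (a+b+3) (by omega), tf_zero (3*b+5) (3*b+5+(3*a+5)-3) (by omega), tf_zero (3*b+5) (3*b+5+(3*a+5)-5) (by omega), tf_zero (3*b+5) (3*a+5-1) (by omega), tf_zero (3*b+5) (3*a+5-3) (by omega), tf_eq (3*b+5) (3*a+5-5) (a) (by omega)]
      rw [if_pos (show (3:ℤ) ∣ ((3*b+5:ℕ):ℤ) - ((3*a+5:ℕ):ℤ) from by push_cast; omega)]
      rw [show chi3 (((3*b+5:ℕ):ℤ) - ((3*a+5:ℕ):ℤ)) = 0 from by simp only [chi3]; rw [if_pos (by push_cast; omega)]]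
      push_cast at hz ⊢
      linear_combination (-1 : ZMod (3*b+5)) * hz

theorem sum_mul_central_binom_shift (p : ℕ) (hp : p.Prime) (d : ℕ) (hd : d ≤ p) :
    3 * ∑ k ∈ Finset.Icc 1 (p - 1), (k : ℤ) * ((2 * k).choose (k + d) : ℤ)
      ≡ (3 * (if (3 : ℤ) ∣ ((p : ℤ) - d) then 1 else 0) - 1) *
          (2 * chi3 ((p : ℤ) - d) - d) - 3 * (if p = 3 then 1 else 0) [ZMOD (p : ℤ)] := by
  rcases lt_or_ge p 5 with h5 | h5
  · have h2 := hp.two_le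
    interval_cases p
    · interval_cases d <;> decide
    · interval_cases d <;> decide
    · exact absurd hp (by norm_num)
  · haveI : Fact p.Prime := ⟨hp⟩
    have hsum : ∑ k ∈ Finset.range p, (k:ZMod p) * ((2*k).choose (k+d) : ZMod p)
        = ∑ k ∈ Finset.Icc 1 (p-1), (k:ZMod p) * ((2*k).choose (k+d) : ZMod p) := by
      have hIcc : Finset.Ico 1 p = Finset.Icc 1 (p-1) := by
        ext x; simp only [Finset.mem_Ico, Finset.mem_Icc]; omega
      rw [Finset.range_eq_Ico,
        ← Finset.sum_Ico_consecutive _ (show (0:ℕ) ≤ 1 by omega) (show 1 ≤ p by omega), hIcc]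
      simp
    have e1 : ((3 * ∑ k ∈ Finset.Icc 1 (p - 1), (k : ℤ) * ((2 * k).choose (k + d) : ℤ) : ℤ)
          : ZMod p)
        = (3:ZMod p) * ∑ k ∈ Finset.range p, (k:ZMod p) * ((2*k).choose (k+d) : ZMod p) := by
      rw [hsum]
      push_cast
      rfl
    have e2 : (((3 * (if (3:ℤ) ∣ ((p:ℤ) - (d:ℤ)) then 1 else 0) - 1)
          * (2 * chi3 ((p:ℤ) - (d:ℤ)) - (d:ℤ)) - 3 * (if p = 3 then 1 else 0) : ℤ) : ZMod p)
        = (((3 * (if (3:ℤ) ∣ ((p:ℤ) - (d:ℤ)) then 1 else 0) - 1)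
          * (2 * chi3 ((p:ℤ) - (d:ℤ)) - (d:ℤ)) : ℤ) : ZMod p) := by
      rw [if_neg (show ¬ p = 3 from by omega)]
      push_cast
      ring
    exact (ZMod.intCast_eq_intCast_iff _ _ _).mp
      (e1.trans (((main5 p h5 d hd).trans (final_arith p hp h5 d hd)).trans e2.symm))
end

section
/- Let p ≥ 5 be a prime. Then, working in ZMod p, 2 · ∑_{k=1}^{p−1} k⁻¹ · C_k = 3 · (1 − (p/3)). -/
namespace SumInvCatalanAux

open Finset

local notation "γ" => (Zsqrtd.sqrtd : ℤ√(-3))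

lemma ht2 : γ ^ 2 = ((-3 : ℤ) : ℤ√(-3)) := by rw [sq, Zsqrtd.dmuld]

lemma h2 : (1 + γ) ^ 2 = -2 + 2 * γ := by
  have h : (1 + γ) ^ 2 = 1 + 2 * γ + γ ^ 2 := by ring
  rw [h, ht2]; push_cast; ring

lemma h3 : (1 + γ) ^ 3 = -8 := by
  have h : (1 + γ) ^ 3 = (1 + γ) ^ 2 * (1 + γ) := by ring
  rw [h, h2]
  have h' : (-2 + 2 * γ) * (1 + γ) = -2 + 2 * γ ^ 2 := by ring
  rw [h', ht2]; push_cast; ring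

lemma h5 : (1 + γ) ^ 5 = 16 - 16 * γ := by
  have h : (1 + γ) ^ 5 = (1 + γ) ^ 3 * (1 + γ) ^ 2 := by ring
  rw [h, h3, h2]; ring

lemma h6 : (1 + γ) ^ 6 = 64 := by
  have h : (1 + γ) ^ 6 = ((1 + γ) ^ 3) ^ 2 := by ring
  rw [h, h3]; norm_num

lemma powA (s : ℕ) : (1 + γ) ^ (6 * s + 1) = (2 : ℤ√(-3)) ^ (6 * s) * (1 + γ) := by
  rw [pow_add, pow_mul, h6, pow_mul, pow_one]; norm_num

lemma powB (s : ℕ) : (1 + γ) ^ (6 * s + 5) = (2 : ℤ√(-3)) ^ (6 * s + 4) * (1 - γ) := by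
  rw [pow_add, pow_mul, h6, h5, pow_add, pow_mul]
  norm_num; ring

lemma binom_exp (p : ℕ) :
    (1 + γ) ^ p = ∑ j ∈ range (p + 1), (p.choose j : ℤ√(-3)) * γ ^ j := by
  rw [add_comm (1 : ℤ√(-3)) γ, add_pow]
  refine Finset.sum_congr rfl fun j _ => by ring

lemma sum_range_even_odd {M : Type*} [AddCommMonoid M] (n : ℕ) (f : ℕ → M) :
    ∑ j ∈ range (2 * n), f j
      = ∑ i ∈ range n, f (2 * i) + ∑ i ∈ range n, f (2 * i + 1) := by
  induction n with
  | zero => simp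
  | succ n ih =>
      have h : 2 * (n + 1) = (2 * n + 1) + 1 := by ring
      rw [h, sum_range_succ, sum_range_succ, ih, sum_range_succ, sum_range_succ]
      abel

lemma key_split (p m : ℕ) (hpm : p + 1 = 2 * (m + 1)) :
    ∑ j ∈ range (p + 1), (p.choose j : ℤ√(-3)) * γ ^ j
      = ((∑ i ∈ range (m + 1), (p.choose (2 * i) : ℤ) * (-3) ^ i : ℤ) : ℤ√(-3))
        + ((∑ i ∈ range (m + 1), (p.choose (2 * i + 1) : ℤ) * (-3) ^ i : ℤ) : ℤ√(-3)) * γ := by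
  rw [hpm, sum_range_even_odd]
  push_cast
  rw [Finset.sum_mul]
  congr 1
  · refine Finset.sum_congr rfl fun i _ => ?_
    have h : γ ^ (2 * i) = ((-3 : ℤ) : ℤ√(-3)) ^ i := by rw [pow_mul, ht2]
    rw [h]; push_cast; ring
  · refine Finset.sum_congr rfl fun i _ => ?_
    have h : γ ^ (2 * i + 1) = ((-3 : ℤ) : ℤ√(-3)) ^ i * γ := by rw [pow_succ, pow_mul, ht2]
    rw [h]; push_cast; ring

lemma O_coords {a b c d : ℤ}
    (h : (a : ℤ√(-3)) + (b : ℤ√(-3)) * γ = (c : ℤ√(-3)) + (d : ℤ√(-3)) * γ) :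
    a = c ∧ b = d := by
  rw [Zsqrtd.ext_iff] at h
  simpa using h

lemma int_even (p m : ℕ) (hpm : p + 1 = 2 * (m + 1)) (hp6 : p % 6 = 1 ∨ p % 6 = 5) :
    ∑ i ∈ range (m + 1), (p.choose (2 * i) : ℤ) * (-3) ^ i = 2 ^ (p - 1) ∧
    ∑ i ∈ range (m + 1), (p.choose (2 * i + 1) : ℤ) * (-3) ^ i
      = (if p % 6 = 1 then 1 else -1) * 2 ^ (p - 1) := by
  have hb := (binom_exp p).trans (key_split p m hpm)
  obtain h | h := hp6
  · rw [if_pos h]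
    have hpow : (1 + γ) ^ p
        = ((2 ^ (p - 1) : ℤ) : ℤ√(-3)) + ((2 ^ (p - 1) : ℤ) : ℤ√(-3)) * γ := by
      conv_lhs => rw [show p = 6 * (p / 6) + 1 by omega]
      rw [powA, show p - 1 = 6 * (p / 6) by omega]
      push_cast
      ring
    have hc := O_coords (hpow.symm.trans hb)
    exact ⟨hc.1.symm, by rw [one_mul]; exact hc.2.symm⟩
  · rw [if_neg (by omega)]
    have hpow : (1 + γ) ^ p
        = ((2 ^ (p - 1) : ℤ) : ℤ√(-3)) + ((-(2 ^ (p - 1)) : ℤ) : ℤ√(-3)) * γ := by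
      conv_lhs => rw [show p = 6 * (p / 6) + 5 by omega]
      rw [powB, show p - 1 = 6 * (p / 6) + 4 by omega]
      push_cast
      ring
    have hc := O_coords (hpow.symm.trans hb)
    exact ⟨hc.1.symm, by rw [neg_one_mul]; exact hc.2.symm⟩

lemma int_even_one (p m : ℕ) (hp : p ≠ 0) (hpm : p + 1 = 2 * (m + 1)) :
    ∑ i ∈ range (m + 1), (p.choose (2 * i) : ℤ) = 2 ^ (p - 1) := by
  have e1 : ∑ j ∈ range (p + 1), (p.choose j : ℤ) = 2 ^ p := by
    exact_mod_cast Nat.sum_range_choose p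
  have e2 : ∑ j ∈ range (p + 1), (-1 : ℤ) ^ j * p.choose j = 0 :=
    Int.alternating_sum_range_choose_of_ne hp
  rw [hpm, sum_range_even_odd] at e1 e2
  have he : ∀ i : ℕ, (-1 : ℤ) ^ (2 * i) = 1 := fun i => by
    rw [pow_mul]; norm_num
  have ho : ∀ i : ℕ, (-1 : ℤ) ^ (2 * i + 1) = -1 := fun i => by
    rw [pow_succ, he]; norm_num
  simp only [he, ho, one_mul, neg_one_mul, Finset.sum_neg_distrib] at e2
  have h2 : (2 : ℤ) ^ p = 2 * 2 ^ (p - 1) := by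
    rw [← pow_succ']
    congr 1
    omega
  linarith [e1, e2, h2]

lemma int_diff (p m : ℕ) (hp : p ≠ 0) (hpm : p + 1 = 2 * (m + 1))
    (hp6 : p % 6 = 1 ∨ p % 6 = 5) :
    ∑ i ∈ range (m + 1), (p.choose (2 * i) : ℤ) * ((-3) ^ i - 1) = 0 := by
  have h1 := (int_even p m hpm hp6).1
  have h2 := int_even_one p m hp hpm
  have : ∑ i ∈ range (m + 1), (p.choose (2 * i) : ℤ) * ((-3) ^ i - 1)
      = ∑ i ∈ range (m + 1), ((p.choose (2 * i) : ℤ) * (-3) ^ i - (p.choose (2 * i) : ℤ)) := by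
    refine Finset.sum_congr rfl fun i _ => by ring
  rw [this, Finset.sum_sub_distrib, h1, h2, sub_self]

variable {p : ℕ} [hpf : Fact p.Prime]

lemma cast_ne_zero'' {k : ℕ} (h0 : k ≠ 0) (h : k < p) : ((k : ℕ) : ZMod p) ≠ 0 := by
  rw [Ne, ZMod.natCast_eq_zero_iff]
  exact fun hd => absurd (Nat.le_of_dvd (by omega) hd) (by omega)

lemma choose_pred_cast : ∀ j, j ≤ p - 1 → (((p - 1).choose j : ℕ) : ZMod p) = (-1) ^ j := by
  have hp1 : 1 ≤ p := hpf.out.one_lt.le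
  intro j
  induction j with
  | zero => simp
  | succ j ih =>
      intro hj
      have hnat := Nat.choose_succ_right_eq (p - 1) j
      have hcast := congrArg (Nat.cast : ℕ → ZMod p) hnat
      push_cast at hcast
      rw [ih (by omega)] at hcast
      have hsub : (((p - 1 - j : ℕ)) : ZMod p) = -((j : ZMod p) + 1) := by
        have h1 : (p - 1 - j) + (j + 1) = p := by omega
        have h2 := congrArg (Nat.cast : ℕ → ZMod p) h1
        push_cast at h2
        rw [ZMod.natCast_self] at h2
        linear_combination h2
      rw [hsub] at hcast
      have hne : ((j + 1 : ℕ) : ZMod p) ≠ 0 := cast_ne_zero'' (by omega) (by omega)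
      have : (((p - 1).choose (j + 1) : ℕ) : ZMod p) * ((j + 1 : ℕ) : ZMod p)
          = (-1) ^ (j + 1) * ((j + 1 : ℕ) : ZMod p) := by
        push_cast
        linear_combination hcast
      exact mul_right_cancel₀ hne this

lemma cj_mul {j : ℕ} (hj1 : 1 ≤ j) (hj2 : j ≤ p - 1) :
    ((p.choose j / p : ℕ) : ZMod p) * ((j : ℕ) : ZMod p) = (-1) ^ (j - 1) := by
  have hp1 : 1 ≤ p := hpf.out.one_lt.le
  have hdvd : p ∣ p.choose j := hpf.out.dvd_choose_self (by omega) (by omega)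
  have hmul : p * ((p - 1).choose (j - 1)) = p.choose j * j := by
    have h := Nat.add_one_mul_choose_eq (p - 1) (j - 1)
    rw [show p - 1 + 1 = p by omega, show j - 1 + 1 = j by omega] at h
    exact h
  have hmul2 : p * ((p - 1).choose (j - 1)) = p * (p.choose j / p * j) := by
    rw [hmul, ← Nat.mul_assoc, Nat.mul_div_cancel' hdvd]
  have hmul3 : (p - 1).choose (j - 1) = p.choose j / p * j :=
    Nat.eq_of_mul_eq_mul_left (by omega) hmul2
  have hcast := congrArg (Nat.cast : ℕ → ZMod p) hmul3
  push_cast at hcast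
  rw [choose_pred_cast (j - 1) (by omega)] at hcast
  push_cast
  linear_combination hcast.symm

lemma sigma_zero {m : ℕ} (hpm : p = 2 * m + 1) (hp6 : p % 6 = 1 ∨ p % 6 = 5) :
    ∑ i ∈ range (m + 1), ((i : ℕ) : ZMod p)⁻¹ * ((-3 : ZMod p) ^ i - 1) = 0 := by
  have hp5 : 5 ≤ p := by
    have := hpf.out.two_le
    rcases hp6 with h | h <;> omega
  have h2ne : (2 : ZMod p) ≠ 0 := by
    have := cast_ne_zero'' (p := p) (k := 2) (by omega) (by omega)
    exact_mod_cast this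
  have hZ : ∑ i ∈ range (m + 1), ((p.choose (2 * i) / p : ℕ) : ℤ) * ((-3) ^ i - 1) = 0 := by
    have h0 := int_diff p m (by omega) (by omega) hp6
    have hsplit : ∑ i ∈ range (m + 1), (p.choose (2 * i) : ℤ) * ((-3) ^ i - 1)
        = (p : ℤ) * ∑ i ∈ range (m + 1), ((p.choose (2 * i) / p : ℕ) : ℤ) * ((-3) ^ i - 1) := by
      rw [Finset.mul_sum]
      refine Finset.sum_congr rfl fun i hi => ?_
      rcases Nat.eq_zero_or_pos i with h | h
      · subst h; simp
      · simp only [mem_range] at hi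
        have hdvd : p ∣ p.choose (2 * i) :=
          hpf.out.dvd_choose_self (by omega) (by omega)
        have hch : (p.choose (2 * i) : ℤ) = (p : ℤ) * ((p.choose (2 * i) / p : ℕ) : ℤ) := by
          exact_mod_cast congrArg (Nat.cast : ℕ → ℤ) (Nat.mul_div_cancel' hdvd).symm
        rw [hch, mul_assoc]
    rw [hsplit] at h0
    have hpne : (p : ℤ) ≠ 0 := by exact_mod_cast (by omega : p ≠ 0)
    exact (mul_eq_zero.mp h0).resolve_left hpne
  have hK : ∑ i ∈ range (m + 1), ((p.choose (2 * i) / p : ℕ) : ZMod p) * ((-3 : ZMod p) ^ i - 1)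
      = 0 := by
    have h' := congrArg (Int.cast : ℤ → ZMod p) hZ
    simp only [Int.cast_sum, Int.cast_mul, Int.cast_sub, Int.cast_pow, Int.cast_neg,
      Int.cast_ofNat, Int.cast_one, Int.cast_natCast, Int.cast_zero] at h'
    exact h'
  have hterm : ∀ i ∈ range (m + 1),
      ((i : ℕ) : ZMod p)⁻¹ * ((-3 : ZMod p) ^ i - 1)
        = -2 * (((p.choose (2 * i) / p : ℕ) : ZMod p) * ((-3 : ZMod p) ^ i - 1)) := by
    intro i hi
    rcases Nat.eq_zero_or_pos i with h | h
    · subst h; simp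
    · simp only [mem_range] at hi
      have hne2i : ((2 * i : ℕ) : ZMod p) ≠ 0 := cast_ne_zero'' (by omega) (by omega)
      have hc := cj_mul (p := p) (j := 2 * i) (by omega) (by omega)
      have hpow : (-1 : ZMod p) ^ (2 * i - 1) = -1 := by
        rw [show 2 * i - 1 = 2 * (i - 1) + 1 by omega, pow_succ, pow_mul]
        norm_num
      rw [hpow] at hc
      have hcval : ((p.choose (2 * i) / p : ℕ) : ZMod p) = -((2 * i : ℕ) : ZMod p)⁻¹ := by
        have := (eq_mul_inv_iff_mul_eq₀ hne2i).mpr hc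
        rw [this, neg_one_mul]
      calc ((i : ℕ) : ZMod p)⁻¹ * ((-3 : ZMod p) ^ i - 1)
          = ((2 : ZMod p) * (2 : ZMod p)⁻¹) * (((i : ℕ) : ZMod p)⁻¹ * ((-3 : ZMod p) ^ i - 1)) := by
            rw [mul_inv_cancel₀ h2ne, one_mul]
        _ = -2 * (-((2 : ZMod p)⁻¹ * ((i : ℕ) : ZMod p)⁻¹) * ((-3 : ZMod p) ^ i - 1)) := by ring
        _ = -2 * (-((2 * i : ℕ) : ZMod p)⁻¹ * ((-3 : ZMod p) ^ i - 1)) := by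
            push_cast
            rw [mul_inv]
        _ = -2 * (((p.choose (2 * i) / p : ℕ) : ZMod p) * ((-3 : ZMod p) ^ i - 1)) := by
            rw [hcval]
  rw [Finset.sum_congr rfl hterm, ← Finset.mul_sum, hK, mul_zero]

lemma eps_val {m : ℕ} (hpm : p = 2 * m + 1) (hp6 : p % 6 = 1 ∨ p % 6 = 5) :
    ((-3 : ZMod p)) ^ m = if p % 6 = 1 then (1 : ZMod p) else -1 := by
  have hp5 : 5 ≤ p := by
    have := hpf.out.two_le
    rcases hp6 with h | h <;> omega
  have h2 := (int_even p m (by omega) hp6).2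
  have h2ne : (2 : ZMod p) ≠ 0 := by
    have := cast_ne_zero'' (p := p) (k := 2) (by omega) (by omega)
    exact_mod_cast this
  have h2p : (2 : ZMod p) ^ (p - 1) = 1 := ZMod.pow_card_sub_one_eq_one h2ne
  have hlast : p.choose (2 * m + 1) = 1 := by
    rw [show 2 * m + 1 = p by omega]
    exact Nat.choose_self p
  have hmid : ∀ i ∈ range m, ((p.choose (2 * i + 1) : ℕ) : ZMod p) * (-3 : ZMod p) ^ i = 0 := by
    intro i hi
    simp only [mem_range] at hi
    have hdvd : p ∣ p.choose (2 * i + 1) := hpf.out.dvd_choose_self (by omega) (by omega)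
    rw [(ZMod.natCast_eq_zero_iff _ _).mpr hdvd, zero_mul]
  rcases hp6 with h | h
  · rw [if_pos h]
    rw [if_pos h] at h2
    have hK := congrArg (Int.cast : ℤ → ZMod p) h2
    push_cast at hK
    rw [Finset.sum_range_succ, Finset.sum_eq_zero hmid, hlast] at hK
    simpa [h2p] using hK
  · rw [if_neg (by omega)]
    rw [if_neg (by omega)] at h2
    have hK := congrArg (Int.cast : ℤ → ZMod p) h2
    push_cast at hK
    rw [Finset.sum_range_succ, Finset.sum_eq_zero hmid, hlast] at hK
    simpa [h2p] using hK

lemma harmonic_id (x : ZMod p) :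
    ∀ n, n < p →
      ∑ k ∈ range (n + 1), (n.choose k : ZMod p) * x ^ k * ((k : ℕ) : ZMod p)⁻¹
        = ∑ j ∈ range (n + 1), ((1 + x) ^ j - 1) * ((j : ℕ) : ZMod p)⁻¹ := by
  intro n
  induction n with
  | zero => simp
  | succ n ih =>
      intro hn
      have hn' : n < p := by omega
      -- RHS peel top
      rw [Finset.sum_range_succ ((fun j => ((1 + x) ^ j - 1) * ((j : ℕ) : ZMod p)⁻¹)) (n + 1)]
      rw [← ih hn']
      -- LHS peel bottom
      rw [Finset.sum_range_succ'
        (fun k => ((n + 1).choose k : ZMod p) * x ^ k * ((k : ℕ) : ZMod p)⁻¹) (n + 1)]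
      have hzero : ((n + 1).choose 0 : ZMod p) * x ^ 0 * ((0 : ℕ) : ZMod p)⁻¹ = 0 := by
        simp
      rw [hzero, add_zero]
      -- split Pascal
      have hsplit : ∀ i ∈ range (n + 1),
          ((n + 1).choose (i + 1) : ZMod p) * x ^ (i + 1) * ((i + 1 : ℕ) : ZMod p)⁻¹
            = (n.choose i : ZMod p) * x ^ (i + 1) * ((i + 1 : ℕ) : ZMod p)⁻¹
              + (n.choose (i + 1) : ZMod p) * x ^ (i + 1) * ((i + 1 : ℕ) : ZMod p)⁻¹ := by
        intro i _
        rw [Nat.choose_succ_succ]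
        push_cast
        ring
      rw [Finset.sum_congr rfl hsplit, Finset.sum_add_distrib]
      -- second sum equals LHS_n
      have hS2 : ∑ i ∈ range (n + 1),
          (n.choose (i + 1) : ZMod p) * x ^ (i + 1) * ((i + 1 : ℕ) : ZMod p)⁻¹
            = ∑ k ∈ range (n + 1), (n.choose k : ZMod p) * x ^ k * ((k : ℕ) : ZMod p)⁻¹ := by
        rw [Finset.sum_range_succ
          (fun i => (n.choose (i + 1) : ZMod p) * x ^ (i + 1) * ((i + 1 : ℕ) : ZMod p)⁻¹) n]
        rw [Finset.sum_range_succ'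
          (fun k => (n.choose k : ZMod p) * x ^ k * ((k : ℕ) : ZMod p)⁻¹) n]
        simp [Nat.choose_succ_self]
      rw [hS2]
      -- first sum is the new term
      have hne1 : ((n + 1 : ℕ) : ZMod p) ≠ 0 := cast_ne_zero'' (by omega) (by omega)
      have hS1 : ∑ i ∈ range (n + 1),
          (n.choose i : ZMod p) * x ^ (i + 1) * ((i + 1 : ℕ) : ZMod p)⁻¹
            = ((1 + x) ^ (n + 1) - 1) * ((n + 1 : ℕ) : ZMod p)⁻¹ := by
        have hterm : ∀ i ∈ range (n + 1),
            (n.choose i : ZMod p) * x ^ (i + 1) * ((i + 1 : ℕ) : ZMod p)⁻¹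
              = ((n + 1).choose (i + 1) : ZMod p) * x ^ (i + 1) * ((n + 1 : ℕ) : ZMod p)⁻¹ := by
          intro i hi
          simp only [mem_range] at hi
          have hnei : ((i + 1 : ℕ) : ZMod p) ≠ 0 := cast_ne_zero'' (by omega) (by omega)
          have hnat := Nat.add_one_mul_choose_eq n i
          have hc := congrArg (Nat.cast : ℕ → ZMod p) hnat
          push_cast at hc
          have hinv1 : ((n + 1 : ℕ) : ZMod p) * ((n + 1 : ℕ) : ZMod p)⁻¹ = 1 :=
            mul_inv_cancel₀ hne1
          have hinv2 : ((i + 1 : ℕ) : ZMod p) * ((i + 1 : ℕ) : ZMod p)⁻¹ = 1 :=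
            mul_inv_cancel₀ hnei
          push_cast at hinv1 hinv2 ⊢
          linear_combination
            (x ^ (i + 1) * ((i : ZMod p) + 1)⁻¹ * ((n : ZMod p) + 1)⁻¹) * hc -
            ((n.choose i : ZMod p) * x ^ (i + 1) * ((i : ZMod p) + 1)⁻¹) * hinv1 +
            (x ^ (i + 1) * ((n : ZMod p) + 1)⁻¹ * (((n + 1).choose (i + 1) : ZMod p))) * hinv2
        rw [Finset.sum_congr rfl hterm, ← Finset.sum_mul]
        congr 1
        have hbin : (x + 1) ^ (n + 1)
            = ∑ k ∈ range (n + 2), x ^ k * ((n + 1).choose k : ZMod p) := by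
          rw [add_pow]
          refine Finset.sum_congr rfl fun k _ => by rw [one_pow, mul_one]
        rw [Finset.sum_range_succ' (fun k => x ^ k * ((n + 1).choose k : ZMod p)) (n + 1)] at hbin
        have : ∑ i ∈ range (n + 1), ((n + 1).choose (i + 1) : ZMod p) * x ^ (i + 1)
            = ∑ i ∈ range (n + 1), x ^ (i + 1) * ((n + 1).choose (i + 1) : ZMod p) := by
          refine Finset.sum_congr rfl fun i _ => by ring
        rw [this]
        have hx1 : (1 + x) ^ (n + 1) = (x + 1) ^ (n + 1) := by rw [add_comm]
        rw [hx1, hbin]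
        simp
      rw [hS1]
      ring

lemma central_trans {m : ℕ} (hpm : p = 2 * m + 1) :
    ∀ k, k ≤ m → ((Nat.centralBinom k : ℕ) : ZMod p) = (-4) ^ k * (m.choose k : ZMod p) := by
  have h2m : (2 : ZMod p) * (m : ZMod p) = -1 := by
    have h0 : ((2 * m + 1 : ℕ) : ZMod p) = 0 := by rw [← hpm]; exact ZMod.natCast_self p
    push_cast at h0
    linear_combination h0
  intro k
  induction k with
  | zero => simp [Nat.centralBinom_zero]
  | succ k ih =>
      intro hk
      have hk' : k ≤ m := by omega
      have hK := ih hk'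
      have hcbnat := Nat.succ_mul_centralBinom_succ k
      have hcb := congrArg (Nat.cast : ℕ → ZMod p) hcbnat
      push_cast at hcb
      have hchnat := Nat.choose_succ_right_eq m k
      have hch := congrArg (Nat.cast : ℕ → ZMod p) hchnat
      push_cast at hch
      have hmk : ((m - k : ℕ) : ZMod p) = (m : ZMod p) - (k : ZMod p) := by
        rw [Nat.cast_sub hk']
      rw [hmk] at hch
      have hne : ((k : ZMod p) + 1) ≠ 0 := by
        have := cast_ne_zero'' (p := p) (k := k + 1) (by omega) (by omega)
        push_cast at this
        exact this
      apply mul_left_cancel₀ hne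
      rw [show ((k : ZMod p) + 1) * ((Nat.centralBinom (k + 1) : ℕ) : ZMod p)
            = ((k : ZMod p) + 1) * ((Nat.centralBinom (k + 1) : ℕ) : ZMod p) from rfl]
      have hgoal : ((k : ZMod p) + 1) * ((Nat.centralBinom (k + 1) : ℕ) : ZMod p)
          = 2 * (2 * (k : ZMod p) + 1) * ((-4) ^ k * (m.choose k : ZMod p)) := by
        rw [← hK]
        linear_combination hcb
      rw [hgoal]
      linear_combination (-(-4 : ZMod p) ^ (k + 1)) * hch
        + (2 * (-4 : ZMod p) ^ k * (m.choose k : ZMod p)) * h2m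

lemma Bfull {m : ℕ} (hpm : p = 2 * m + 1) (hp5 : 5 ≤ p) :
    ∑ k ∈ range (m + 1), (-4 : ZMod p) ^ k * (m.choose k : ZMod p) * (((k : ℕ) : ZMod p) + 1)⁻¹
      = (3 * (-3 : ZMod p) ^ m + 1) * (2 : ZMod p)⁻¹ := by
  have h2ne : (2 : ZMod p) ≠ 0 := by
    have := cast_ne_zero'' (p := p) (k := 2) (by omega) (by omega)
    exact_mod_cast this
  have hm1 : (2 : ZMod p) * ((m : ZMod p) + 1) = 1 := by
    have h0 : ((2 * m + 1 : ℕ) : ZMod p) = 0 := by rw [← hpm]; exact ZMod.natCast_self p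
    push_cast at h0
    linear_combination h0
  have hstep : ∀ k ∈ range (m + 1),
      (-4 : ZMod p) ^ k * (m.choose k : ZMod p) * (((k : ℕ) : ZMod p) + 1)⁻¹
        = 2 * (((m + 1).choose (k + 1) : ZMod p) * (-4 : ZMod p) ^ k) := by
    intro k hk
    simp only [mem_range] at hk
    have hkne : ((k : ZMod p) + 1) ≠ 0 := by
      have := cast_ne_zero'' (p := p) (k := k + 1) (by omega) (by omega)
      push_cast at this
      exact this
    have hkinv : ((k : ZMod p) + 1) * ((k : ZMod p) + 1)⁻¹ = 1 := mul_inv_cancel₀ hkne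
    have hcknat := Nat.add_one_mul_choose_eq m k
    have hck := congrArg (Nat.cast : ℕ → ZMod p) hcknat
    push_cast at hck
    linear_combination (-(m.choose k : ZMod p) * ((k : ZMod p) + 1)⁻¹ * (-4 : ZMod p) ^ k) * hm1
      + (2 * ((k : ZMod p) + 1)⁻¹ * (-4 : ZMod p) ^ k) * hck
      + (2 * (((m + 1).choose (k + 1) : ZMod p)) * (-4 : ZMod p) ^ k) * hkinv
  rw [Finset.sum_congr rfl hstep, ← Finset.mul_sum]
  -- binomial evaluation
  have hbin : ∑ j ∈ range (m + 2), ((m + 1).choose j : ZMod p) * (-4 : ZMod p) ^ j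
      = (-3 : ZMod p) ^ (m + 1) := by
    have h := add_pow (-4 : ZMod p) 1 (m + 1)
    norm_num at h
    rw [h]
    refine Finset.sum_congr rfl fun j _ => by ring
  rw [Finset.sum_range_succ'
    (fun j => ((m + 1).choose j : ZMod p) * (-4 : ZMod p) ^ j) (m + 1)] at hbin
  have hshift : ∑ k ∈ range (m + 1), ((m + 1).choose (k + 1) : ZMod p) * (-4 : ZMod p) ^ k
      = ((-3 : ZMod p) ^ (m + 1) - 1) * (-4 : ZMod p)⁻¹ := by
    have h4ne : (-4 : ZMod p) ≠ 0 := by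
      have := cast_ne_zero'' (p := p) (k := 4) (by omega) (by omega)
      intro hcon
      apply this
      push_cast
      linear_combination -hcon
    have h4inv : (-4 : ZMod p) * (-4 : ZMod p)⁻¹ = 1 := mul_inv_cancel₀ h4ne
    have hsum4 : (∑ k ∈ range (m + 1), ((m + 1).choose (k + 1) : ZMod p) * (-4 : ZMod p) ^ k)
        * (-4 : ZMod p) = (-3 : ZMod p) ^ (m + 1) - 1 := by
      rw [Finset.sum_mul]
      have : ∀ k ∈ range (m + 1),
          ((m + 1).choose (k + 1) : ZMod p) * (-4 : ZMod p) ^ k * (-4 : ZMod p)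
            = ((m + 1).choose (k + 1) : ZMod p) * (-4 : ZMod p) ^ (k + 1) := by
        intro k _
        rw [pow_succ]
        ring
      rw [Finset.sum_congr rfl this]
      simp only [Nat.choose_zero_right, Nat.cast_one, pow_zero, one_mul] at hbin
      linear_combination hbin
    calc ∑ k ∈ range (m + 1), ((m + 1).choose (k + 1) : ZMod p) * (-4 : ZMod p) ^ k
        = (∑ k ∈ range (m + 1), ((m + 1).choose (k + 1) : ZMod p) * (-4 : ZMod p) ^ k)
            * ((-4 : ZMod p) * (-4 : ZMod p)⁻¹) := by rw [h4inv, mul_one]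
      _ = ((-3 : ZMod p) ^ (m + 1) - 1) * (-4 : ZMod p)⁻¹ := by
            rw [← mul_assoc, hsum4]
  rw [hshift]
  -- final algebra : 2 * (((-3)^(m+1) - 1) * (-4)⁻¹) = (3 * (-3)^m + 1) * 2⁻¹
  have h4ne : (-4 : ZMod p) ≠ 0 := by
    have := cast_ne_zero'' (p := p) (k := 4) (by omega) (by omega)
    intro hcon
    apply this
    push_cast
    linear_combination -hcon
  have h4ne' : (4 : ZMod p) ≠ 0 := by
    intro h; apply h4ne; linear_combination -h
  field_simp
  ring

lemma catalan_cast {n : ℕ} (hn : n + 1 < p) :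
    (catalan n : ZMod p) = ((Nat.centralBinom n : ℕ) : ZMod p) * (((n : ℕ) : ZMod p) + 1)⁻¹ := by
  have h := congrArg (Nat.cast : ℕ → ZMod p) (succ_mul_catalan_eq_centralBinom n)
  push_cast at h
  have hne : ((n : ZMod p) + 1) ≠ 0 := by
    have := cast_ne_zero'' (p := p) (k := n + 1) (by omega) (by omega)
    push_cast at this
    exact this
  have hinv : ((n : ZMod p) + 1) * ((n : ZMod p) + 1)⁻¹ = 1 := mul_inv_cancel₀ hne
  linear_combination (((n : ZMod p) + 1)⁻¹) * h - (catalan n : ZMod p) * hinv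

lemma centralBinom_p : ((Nat.centralBinom p : ℕ) : ZMod p) = 2 := by
  have hp2 : 2 ≤ p := hpf.out.two_le
  have hv : Nat.centralBinom p = ∑ k ∈ range (p + 1), p.choose k * p.choose (p - k) := by
    rw [Nat.centralBinom, two_mul, Nat.add_choose_eq]
    rw [Finset.Nat.sum_antidiagonal_eq_sum_range_succ_mk]
  have hcast := congrArg (Nat.cast : ℕ → ZMod p) hv
  push_cast at hcast
  rw [Finset.sum_range_succ] at hcast
  rw [show p - p = 0 by omega, Nat.choose_self, Nat.choose_zero_right] at hcast
  rw [show range p = range ((p - 1) + 1) by congr 1; omega, Finset.sum_range_succ'] at hcast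
  have hmid : ∀ i ∈ range (p - 1),
      ((p.choose (i + 1) : ℕ) : ZMod p) * ((p.choose (p - (i + 1)) : ℕ) : ZMod p) = 0 := by
    intro i hi
    simp only [mem_range] at hi
    have hdvd : p ∣ p.choose (i + 1) := hpf.out.dvd_choose_self (by omega) (by omega)
    rw [(ZMod.natCast_eq_zero_iff _ _).mpr hdvd, zero_mul]
  rw [Finset.sum_eq_zero hmid] at hcast
  simp at hcast
  rw [hcast]
  ring

lemma catalan_pred (hp5 : 5 ≤ p) : (catalan (p - 1) : ZMod p) = -1 := by
  have hp2 : 2 ≤ p := hpf.out.two_le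
  have h1 := Nat.succ_mul_centralBinom_succ (p - 1)
  rw [show p - 1 + 1 = p by omega] at h1
  -- h1 : p * centralBinom p = 2 * (2 * (p - 1) + 1) * centralBinom (p - 1)
  have h2 : Nat.centralBinom (p - 1) = p * catalan (p - 1) := by
    have := succ_mul_catalan_eq_centralBinom (p - 1)
    rw [show p - 1 + 1 = p by omega] at this
    exact this.symm
  rw [h2, ← Nat.mul_assoc] at h1
  have h3 : Nat.centralBinom p = 2 * (2 * (p - 1) + 1) * catalan (p - 1) := by
    have hppos : 0 < p := by omega
    refine Nat.eq_of_mul_eq_mul_left hppos ?_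
    rw [h1]; ring
  have hcast := congrArg (Nat.cast : ℕ → ZMod p) h3
  rw [centralBinom_p] at hcast
  push_cast [Nat.cast_sub (by omega : 1 ≤ p)] at hcast
  rw [ZMod.natCast_self] at hcast
  -- hcast : 2 = 2 * (2 * (0 - 1) + 1) * catalan(p-1) = -2 * cat
  have hne2 : (2 : ZMod p) ≠ 0 := by
    have := cast_ne_zero'' (p := p) (k := 2) (by omega) (by omega)
    exact_mod_cast this
  have : (2 : ZMod p) * (catalan (p - 1) : ZMod p) = 2 * (-1) := by
    linear_combination hcast
  exact mul_left_cancel₀ hne2 this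

lemma central_vanish {m k : ℕ} (hpm : p = 2 * m + 1) (hk1 : m < k) (hk2 : k ≤ p - 2) :
    ((Nat.centralBinom k : ℕ) : ZMod p) = 0 := by
  have hdvd : p ∣ Nat.centralBinom k := by
    rw [Nat.centralBinom, two_mul]
    exact Nat.Prime.dvd_choose_add hpf.out (by omega) (by omega) (by omega)
  rw [(ZMod.natCast_eq_zero_iff _ _).mpr hdvd]




end SumInvCatalanAux

open Finset SumInvCatalanAux in
theorem sum_inv_catalan (p : ℕ) (hp : p.Prime) (hp5 : 5 ≤ p) :
    2 * ∑ k ∈ Finset.Icc 1 (p - 1), (k : ZMod p)⁻¹ * (catalan k : ZMod p)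
      = 3 * (1 - (chi3 (p : ℤ) : ZMod p)) := by
  haveI : Fact p.Prime := ⟨hp⟩
  have hodd : p % 2 = 1 := Nat.odd_iff.mp (hp.odd_of_ne_two (by omega))
  have h3 : p % 3 ≠ 0 := by
    intro h
    have : (3 : ℕ) ∣ p := Nat.dvd_of_mod_eq_zero h
    have := (Nat.prime_dvd_prime_iff_eq (by norm_num) hp).mp this
    omega
  have hp6 : p % 6 = 1 ∨ p % 6 = 5 := by omega
  set m : ℕ := p / 2 with hm_def
  have hpm : p = 2 * m + 1 := by omega
  have hmlt : m + 1 < p := by omega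
  -- unit facts
  have h2ne : (2 : ZMod p) ≠ 0 := by
    have := cast_ne_zero'' (p := p) (k := 2) (by omega) (by omega)
    exact_mod_cast this
  have h2inv : (2 : ZMod p) * (2 : ZMod p)⁻¹ = 1 := mul_inv_cancel₀ h2ne
  -- split the sum
  rw [show Finset.Icc 1 (p - 1) = Finset.Ioc 0 (p - 1) from Finset.Icc_add_one_left_eq_Ioc 0 (p - 1)]
  rw [← Finset.sum_Ioc_consecutive (fun k => ((k : ℕ) : ZMod p)⁻¹ * (catalan k : ZMod p))
      (by omega : 0 ≤ m) (by omega : m ≤ p - 1)]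
  -- upper part
  have hupper : ∑ k ∈ Finset.Ioc m (p - 1), ((k : ℕ) : ZMod p)⁻¹ * (catalan k : ZMod p)
      = 1 := by
    rw [show p - 1 = (p - 2) + 1 by omega,
      Finset.sum_Ioc_succ_top (by omega : m ≤ p - 2)]
    have hzero : ∑ k ∈ Finset.Ioc m (p - 2), ((k : ℕ) : ZMod p)⁻¹ * (catalan k : ZMod p)
        = 0 := by
      apply Finset.sum_eq_zero
      intro k hk
      simp only [Finset.mem_Ioc] at hk
      rw [catalan_cast (by omega : k + 1 < p), central_vanish hpm hk.1 hk.2]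
      ring
    rw [hzero, zero_add, show p - 2 + 1 = p - 1 by omega]
    have hc1 : ((p - 1 : ℕ) : ZMod p) = -1 := by
      push_cast [Nat.cast_sub (by omega : 1 ≤ p)]
      rw [ZMod.natCast_self]
      ring
    rw [hc1, catalan_pred (by omega), inv_neg_one]
    ring
  rw [hupper]
  -- lower part
  have hsplitterm : ∀ k ∈ Finset.Ioc 0 m,
      ((k : ℕ) : ZMod p)⁻¹ * (catalan k : ZMod p)
        = (m.choose k : ZMod p) * (-4 : ZMod p) ^ k * ((k : ℕ) : ZMod p)⁻¹
          - (-4 : ZMod p) ^ k * (m.choose k : ZMod p) * (((k : ℕ) : ZMod p) + 1)⁻¹ := by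
    intro k hk
    simp only [Finset.mem_Ioc] at hk
    have hkne : ((k : ℕ) : ZMod p) ≠ 0 := cast_ne_zero'' (by omega) (by omega)
    have hk1ne : ((k : ZMod p) + 1) ≠ 0 := by
      have := cast_ne_zero'' (p := p) (k := k + 1) (by omega) (by omega)
      push_cast at this
      exact this
    rw [catalan_cast (by omega : k + 1 < p), central_trans hpm k hk.2]
    have hid : ((k : ℕ) : ZMod p)⁻¹ - (((k : ℕ) : ZMod p) + 1)⁻¹
        = ((k : ℕ) : ZMod p)⁻¹ * (((k : ℕ) : ZMod p) + 1)⁻¹ := by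
      field_simp
      ring
    field_simp
    ring
  rw [Finset.sum_congr rfl hsplitterm, Finset.sum_sub_distrib]
  -- the A-part vanishes
  have hins : Finset.range (m + 1) = insert 0 (Finset.Ioc 0 m) := by
    ext a
    simp only [Finset.mem_range, Finset.mem_insert, Finset.mem_Ioc]
    omega
  have hnotmem : 0 ∉ Finset.Ioc 0 m := by simp
  have hA : ∑ k ∈ Finset.Ioc 0 m,
      (m.choose k : ZMod p) * (-4 : ZMod p) ^ k * ((k : ℕ) : ZMod p)⁻¹ = 0 := by
    have h1 : ∑ k ∈ Finset.range (m + 1),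
        (m.choose k : ZMod p) * (-4 : ZMod p) ^ k * ((k : ℕ) : ZMod p)⁻¹
          = ∑ k ∈ Finset.Ioc 0 m,
        (m.choose k : ZMod p) * (-4 : ZMod p) ^ k * ((k : ℕ) : ZMod p)⁻¹ := by
      rw [hins, Finset.sum_insert hnotmem]
      simp
    rw [← h1, harmonic_id (-4 : ZMod p) m (by omega)]
    have h2 : ∀ j ∈ Finset.range (m + 1),
        ((1 + (-4 : ZMod p)) ^ j - 1) * ((j : ℕ) : ZMod p)⁻¹
          = ((j : ℕ) : ZMod p)⁻¹ * ((-3 : ZMod p) ^ j - 1) := by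
      intro j _
      norm_num
      ring
    rw [Finset.sum_congr rfl h2, sigma_zero hpm hp6]
  rw [hA]
  -- the B-part
  have hB : ∑ k ∈ Finset.Ioc 0 m,
      (-4 : ZMod p) ^ k * (m.choose k : ZMod p) * (((k : ℕ) : ZMod p) + 1)⁻¹
        = (3 * (-3 : ZMod p) ^ m + 1) * (2 : ZMod p)⁻¹ - 1 := by
    have h1 := Bfull hpm hp5
    rw [hins, Finset.sum_insert hnotmem] at h1
    have h0 : (-4 : ZMod p) ^ 0 * (m.choose 0 : ZMod p) * (((0 : ℕ) : ZMod p) + 1)⁻¹ = 1 := by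
      simp
    rw [h0] at h1
    linear_combination h1
  rw [hB]
  -- epsilon and chi3
  have heps := eps_val hpm hp6
  have hmod3 : (p : ℤ) % 3 = ((p % 3 : ℕ) : ℤ) := by
    rw [Int.natCast_mod]
    norm_num
  rcases hp6 with h6 | h6
  · have hchi : chi3 (p : ℤ) = 1 := by
      have h31 : p % 3 = 1 := by omega
      rw [chi3, hmod3, h31]
      norm_num
    rw [hchi]
    rw [if_pos h6] at heps
    rw [heps]
    push_cast
    linear_combination (-4 : ZMod p) * h2inv
  · have hchi : chi3 (p : ℤ) = -1 := by
      have h32 : p % 3 = 2 := by omega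
      rw [chi3, hmod3, h32]
      norm_num
    rw [hchi]
    rw [if_neg (by omega)] at heps
    rw [heps]
    push_cast
    linear_combination (2 : ZMod p) * h2inv
end

section
/- Let p be a prime and let d be an integer with 0 ≤ d ≤ p−1. Then 2 · ∑_{k=0}^{p−1} C_{k+d} ≡ 3·(p/3) − 1 + 2·∑_{0 ≤ k < d} C_k (mod p). -/
open Finset

lemma lucas1 (p : ℕ) [Fact p.Prime] (n k : ℕ) :
    ((n.choose k : ZMod p)) = (((n % p).choose (k % p) : ℕ) : ZMod p) * (((n / p).choose (k / p) : ℕ) : ZMod p) := by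
  have h := @Choose.choose_modEq_choose_mod_mul_choose_div n k p _
  have h2 := (ZMod.intCast_eq_intCast_iff _ _ p).mpr h
  push_cast at h2 ⊢
  exact h2

lemma centralBinom_shift (p : ℕ) [Fact p.Prime] (k : ℕ) (hk : k < p) :
    ((Nat.centralBinom (p + k) : ZMod p)) = 2 * (Nat.centralBinom k : ZMod p) := by
  have hp : 0 < p := (Fact.out : p.Prime).pos
  rw [Nat.centralBinom, Nat.centralBinom]
  by_cases h : 2 * k < p
  · have e1 : 2 * (p + k) = 2 * k + p * 2 := by ring
    have e2 : p + k = k + p * 1 := by ring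
    rw [lucas1 p, e1, e2, Nat.add_mul_mod_self_left, Nat.add_mul_mod_self_left,
      Nat.add_mul_div_left _ _ hp, Nat.add_mul_div_left _ _ hp,
      Nat.mod_eq_of_lt h, Nat.mod_eq_of_lt hk,
      Nat.div_eq_of_lt h, Nat.div_eq_of_lt hk]
    norm_num
    ring
  · push_neg at h
    have e1 : 2 * (p + k) = (2 * k - p) + p * 3 := by omega
    have e2 : p + k = k + p * 1 := by ring
    have e3 : 2 * k = (2 * k - p) + p * 1 := by omega
    have hlt : 2 * k - p < p := by omega
    have hz : (2 * k - p).choose k = 0 := Nat.choose_eq_zero_of_lt (by omega)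
    rw [lucas1 p, e1, e2, Nat.add_mul_mod_self_left, Nat.add_mul_mod_self_left,
      Nat.add_mul_div_left _ _ hp, Nat.add_mul_div_left _ _ hp,
      Nat.mod_eq_of_lt hlt, Nat.mod_eq_of_lt hk,
      Nat.div_eq_of_lt hlt, Nat.div_eq_of_lt hk, hz]
    rw [lucas1 p (2 * k) k, e3, Nat.add_mul_mod_self_left, Nat.add_mul_div_left _ _ hp,
      Nat.mod_eq_of_lt hlt, Nat.mod_eq_of_lt hk,
      Nat.div_eq_of_lt hlt, Nat.div_eq_of_lt hk, hz]
    norm_num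

lemma catalan_shift (p : ℕ) [Fact p.Prime] (k : ℕ) (hk : k + 1 < p) :
    ((catalan (p + k) : ZMod p)) = 2 * (catalan k : ZMod p) := by
  have h1 := succ_mul_catalan_eq_centralBinom (p + k)
  have h2 := succ_mul_catalan_eq_centralBinom k
  have hcb := centralBinom_shift p k (by omega)
  have hne : ((k : ZMod p) + 1) ≠ 0 := by
    intro hcon
    have : ((k + 1 : ℕ) : ZMod p) = 0 := by push_cast; exact hcon
    rw [ZMod.natCast_eq_zero_iff] at this
    have := Nat.le_of_dvd (by omega) this
    omega
  apply mul_left_cancel₀ hne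
  have c1 : ((p + k + 1 : ℕ) : ZMod p) * (catalan (p + k) : ZMod p) = (Nat.centralBinom (p + k) : ZMod p) := by
    exact_mod_cast congrArg (Nat.cast : ℕ → ZMod p) h1
  have c2 : ((k + 1 : ℕ) : ZMod p) * (catalan k : ZMod p) = (Nat.centralBinom k : ZMod p) := by
    exact_mod_cast congrArg (Nat.cast : ℕ → ZMod p) h2
  push_cast at c1 c2
  rw [ZMod.natCast_self] at c1
  rw [zero_add] at c1  -- (0 + k + 1)?
  calc ((k : ZMod p) + 1) * (catalan (p + k) : ZMod p) = 2 * (Nat.centralBinom k : ZMod p) := by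
        rw [c1]; exact hcb
    _ = ((k : ZMod p) + 1) * (2 * (catalan k : ZMod p)) := by rw [← c2]; ring

-- D
lemma cb_eq (p : ℕ) [Fact p.Prime] (hp2 : p ≠ 2) :
    ∀ k, k < p → (Nat.centralBinom k : ZMod p) = (-4) ^ k * (((p - 1) / 2).choose k : ZMod p) := by
  have hp := (Fact.out : p.Prime)
  have hodd : p % 2 = 1 := hp.eq_two_or_odd.resolve_left hp2
  set h := (p - 1) / 2 with hh
  have h2h : 2 * h + 1 = p := by omega
  intro k
  induction k with
  | zero => intro _; simp [Nat.centralBinom]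
  | succ k ih =>
    intro hk1
    have hk : k < p := by omega
    have IH := ih hk
    have hne : ((k : ZMod p) + 1) ≠ 0 := by
      intro hcon
      have : ((k + 1 : ℕ) : ZMod p) = 0 := by push_cast; exact hcon
      rw [ZMod.natCast_eq_zero_iff] at this
      have := Nat.le_of_dvd (by omega) this
      omega
    apply mul_left_cancel₀ hne
    have c2 : ((k : ZMod p) + 1) * (Nat.centralBinom (k + 1) : ZMod p)
        = 2 * (2 * (k : ZMod p) + 1) * (Nat.centralBinom k : ZMod p) := by
      have := congrArg (Nat.cast : ℕ → ZMod p) (Nat.succ_mul_centralBinom_succ k)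
      push_cast at this
      convert this using 2 <;> push_cast <;> ring
    have c3 : (h.choose (k + 1) : ZMod p) * ((k : ZMod p) + 1)
        = (h.choose k : ZMod p) * ((h - k : ℕ) : ZMod p) := by
      have := congrArg (Nat.cast : ℕ → ZMod p) (Nat.choose_succ_right_eq h k)
      push_cast at this
      convert this using 2 <;> push_cast <;> ring
    by_cases hkh : k ≤ h
    · have hcast : ((h - k : ℕ) : ZMod p) = (h : ZMod p) - k := by
        push_cast [Nat.cast_sub hkh]; ring
      have keyeq : (4 : ZMod p) * (h : ZMod p) + 2 = 0 := by
        have : ((2 * h + 1 : ℕ) : ZMod p) = 0 := by rw [h2h]; exact ZMod.natCast_self p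
        push_cast at this
        linear_combination 2 * this
      linear_combination c2 + (2 * (2 * (k : ZMod p) + 1)) * IH - (-4 : ZMod p) ^ (k + 1) * c3
        - ((-4 : ZMod p) ^ (k + 1) * (h.choose k : ZMod p)) * hcast
        + ((-4 : ZMod p) ^ k * (h.choose k : ZMod p)) * keyeq
    · have z1 : h.choose k = 0 := Nat.choose_eq_zero_of_lt (by omega)
      have z2 : h.choose (k + 1) = 0 := Nat.choose_eq_zero_of_lt (by omega)
      rw [z1] at IH
      push_cast at IH
      rw [z2]
      push_cast
      linear_combination c2 + (2 * (2 * (k : ZMod p) + 1)) * IH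

-- E
lemma sum_cb (p : ℕ) [Fact p.Prime] (hp2 : p ≠ 2) :
    ∑ k ∈ range p, (Nat.centralBinom k : ZMod p) = (-3) ^ ((p - 1) / 2) := by
  have hp := (Fact.out : p.Prime)
  set h := (p - 1) / 2 with hh
  have hhp : h + 1 ≤ p := by have := hp.two_le; omega
  have step1 : ∑ k ∈ range p, (Nat.centralBinom k : ZMod p)
      = ∑ k ∈ range p, (-4 : ZMod p) ^ k * (h.choose k : ZMod p) :=
    Finset.sum_congr rfl fun k hk => cb_eq p hp2 k (mem_range.mp hk)
  have expand : ((-4 : ZMod p) + 1) ^ h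
      = ∑ k ∈ range (h + 1), (-4 : ZMod p) ^ k * (h.choose k : ZMod p) := by
    rw [add_pow]
    exact Finset.sum_congr rfl fun k _ => by push_cast; ring
  rw [step1, ← Finset.sum_subset (Finset.range_subset_range.mpr hhp)
      (fun x _ hx => by
        rw [mem_range, not_lt] at hx
        rw [Nat.choose_eq_zero_of_lt (by omega)]
        push_cast; ring),
    ← expand]
  norm_num

-- G
lemma cb_p (p : ℕ) [Fact p.Prime] : (Nat.centralBinom p : ZMod p) = 2 := by
  have hp : 0 < p := (Fact.out : p.Prime).pos
  have h := @Choose.choose_modEq_choose_mod_mul_choose_div (2 * p) p p _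
  have h2 := (ZMod.intCast_eq_intCast_iff _ _ p).mpr h
  push_cast at h2
  rw [Nat.centralBinom, h2, Nat.mul_mod_left, Nat.mod_self, Nat.div_self hp,
    Nat.mul_div_cancel 2 hp]
  norm_num

-- two_catalan
lemma two_catalan (k : ℕ) :
    2 * (catalan k : ℤ) + (Nat.centralBinom (k + 1) : ℤ) = 4 * (Nat.centralBinom k : ℤ) := by
  have h1 := succ_mul_catalan_eq_centralBinom k
  have h2 := Nat.succ_mul_centralBinom_succ k
  have h1' : ((k : ℤ) + 1) * (catalan k : ℤ) = (Nat.centralBinom k : ℤ) := by exact_mod_cast h1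
  have h2' : ((k : ℤ) + 1) * (Nat.centralBinom (k + 1) : ℤ)
      = 2 * (2 * k + 1) * (Nat.centralBinom k : ℤ) := by exact_mod_cast h2
  have hk : (k : ℤ) + 1 ≠ 0 := by positivity
  apply mul_left_cancel₀ hk
  linear_combination 2 * h1' + h2'

lemma aux_ns : ¬ IsSquare ((((2 : ℕ) : ℤ)) : ZMod 3) := by decide

lemma aux3 : (-3 : ZMod 3) ^ ((3 - 1) / 2) = ((chi3 ((3 : ℕ) : ℤ) : ℤ) : ZMod 3) := by decide

lemma legendre_neg_three (p : ℕ) [Fact p.Prime] (hp2 : p ≠ 2) (hp3 : p ≠ 3) :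
    legendreSym p (-3) = chi3 (p : ℤ) := by
  have hp := (Fact.out : p.Prime)
  have hodd : p % 2 = 1 := hp.eq_two_or_odd.resolve_left hp2
  have h3 : Fact (Nat.Prime 3) := ⟨by norm_num⟩
  have hm : legendreSym p (-3) = legendreSym p (-1) * legendreSym p 3 := by
    rw [show (-3 : ℤ) = -1 * 3 by norm_num, legendreSym.mul]
  have hqr := legendreSym.quadratic_reciprocity' (p := p) (q := 3) hp2 (by norm_num)
  have hqr' : legendreSym 3 (p : ℤ) = (-1 : ℤ) ^ (p / 2) * legendreSym p 3 := by
    have h32 : (3 : ℕ) / 2 = 1 := by norm_num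
    rw [hqr, h32, mul_one]
    norm_num
  have h4 : legendreSym p (-1) = (-1 : ℤ) ^ (p / 2) := by
    rw [legendreSym.at_neg_one hp2, ZMod.χ₄_eq_neg_one_pow hodd]
  have hfin : legendreSym p (-3) = legendreSym 3 (p : ℤ) := by
    rw [hm, h4, hqr']
  have hpint : (p : ℤ) % 3 = ((p % 3 : ℕ) : ℤ) := by push_cast; rfl
  have hc3 : (((3 : ℕ) : ℤ)) = 3 := by norm_num
  have hne0 : p % 3 ≠ 0 := by
    intro h0
    exact hp3 ((Nat.prime_dvd_prime_iff_eq (by norm_num) hp).mp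
      (Nat.dvd_of_mod_eq_zero h0)).symm
  have hlt : p % 3 < 3 := Nat.mod_lt _ (by norm_num)
  rcases (show p % 3 = 1 ∨ p % 3 = 2 by omega) with h | h
  · have hchi : chi3 (p : ℤ) = 1 := by unfold chi3; rw [hpint, h]; norm_num
    rw [hchi, hfin, legendreSym.mod 3 (p : ℤ), hc3, hpint, h]
    exact_mod_cast legendreSym.at_one 3
  · have hchi : chi3 (p : ℤ) = -1 := by unfold chi3; rw [hpint, h]; norm_num
    rw [hchi, hfin, legendreSym.mod 3 (p : ℤ), hc3, hpint, h]
    exact (legendreSym.eq_neg_one_iff 3 (a := ((2 : ℕ) : ℤ))).mpr aux_ns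

lemma neg_three_pow (p : ℕ) [Fact p.Prime] (hp2 : p ≠ 2) :
    (-3 : ZMod p) ^ ((p - 1) / 2) = ((chi3 (p : ℤ) : ℤ) : ZMod p) := by
  have hp := (Fact.out : p.Prime)
  have hodd : p % 2 = 1 := hp.eq_two_or_odd.resolve_left hp2
  by_cases hp3 : p = 3
  · subst hp3
    exact aux3
  · have he := legendreSym.eq_pow p (-3)
    have hd : p / 2 = (p - 1) / 2 := by omega
    rw [legendre_neg_three p hp2 hp3, hd] at he
    exact_mod_cast he.symm

lemma base_case (p : ℕ) [Fact p.Prime] (hp2 : p ≠ 2) :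
    2 * ∑ k ∈ range p, (catalan k : ZMod p) = 3 * ((chi3 (p : ℤ) : ℤ) : ZMod p) - 1 := by
  have hS : ∑ k ∈ range p, (Nat.centralBinom k : ZMod p) = ((chi3 (p : ℤ) : ℤ) : ZMod p) :=
    (sum_cb p hp2).trans (neg_three_pow p hp2)
  have hBp := cb_p p
  have h1 : ∑ k ∈ range (p + 1), (Nat.centralBinom k : ZMod p)
      = (∑ k ∈ range p, (Nat.centralBinom (k + 1) : ZMod p)) + 1 := by
    rw [Finset.sum_range_succ']
    norm_num [Nat.centralBinom]
  have h2 : ∑ k ∈ range (p + 1), (Nat.centralBinom k : ZMod p)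
      = (∑ k ∈ range p, (Nat.centralBinom k : ZMod p)) + 2 := by
    rw [Finset.sum_range_succ, hBp]
  have h3 : 2 * ∑ k ∈ range p, (catalan k : ZMod p)
      = 4 * (∑ k ∈ range p, (Nat.centralBinom k : ZMod p))
        - ∑ k ∈ range p, (Nat.centralBinom (k + 1) : ZMod p) := by
    rw [Finset.mul_sum, Finset.mul_sum, ← Finset.sum_sub_distrib]
    apply Finset.sum_congr rfl
    intro k _
    have := congrArg (Int.cast : ℤ → ZMod p) (two_catalan k)
    push_cast at this
    linear_combination this
  linear_combination h3 - h2 + h1 + 3 * hS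

theorem sum_catalan_shift (p : ℕ) (hp : p.Prime) (d : ℕ) (hd : d ≤ p - 1) :
    2 * ∑ k ∈ Finset.range p, (catalan (k + d) : ℤ)
      ≡ 3 * chi3 (p : ℤ) - 1 + 2 * ∑ k ∈ Finset.range d, (catalan k : ℤ) [ZMOD (p : ℤ)] := by
  haveI : Fact p.Prime := ⟨hp⟩
  by_cases hp2 : p = 2
  · subst hp2
    interval_cases d <;>
      simp [Finset.sum_range_succ, Int.ModEq, chi3] <;> decide
  · have hple := hp.two_le
    have hdp : d < p := by omega
    rw [← ZMod.intCast_eq_intCast_iff]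
    push_cast
    have e1 : ∑ k ∈ range p, (catalan (k + d) : ZMod p)
        = ∑ j ∈ Ico d (d + p), (catalan j : ZMod p) := by
      rw [Finset.sum_Ico_eq_sum_range]
      simp only [Nat.add_sub_cancel_left]
      exact Finset.sum_congr rfl fun k _ => by rw [add_comm]
    have e2 : ∑ j ∈ Ico d (d + p), (catalan j : ZMod p)
        = ∑ j ∈ Ico d p, (catalan j : ZMod p) + ∑ j ∈ Ico p (d + p), (catalan j : ZMod p) := by
      rw [Finset.sum_Ico_consecutive _ (by omega : d ≤ p) (by omega : p ≤ d + p)]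
    have e3 : ∑ j ∈ Ico d p, (catalan j : ZMod p)
        = ∑ k ∈ range p, (catalan k : ZMod p) - ∑ k ∈ range d, (catalan k : ZMod p) :=
      Finset.sum_Ico_eq_sub _ hdp.le
    have e4 : ∑ j ∈ Ico p (d + p), (catalan j : ZMod p)
        = ∑ k ∈ range d, (catalan (p + k) : ZMod p) := by
      rw [Finset.sum_Ico_eq_sum_range]
      simp only [Nat.add_sub_cancel]
    have e5 : ∑ k ∈ range d, (catalan (p + k) : ZMod p)
        = 2 * ∑ k ∈ range d, (catalan k : ZMod p) := by
      rw [Finset.mul_sum]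
      exact Finset.sum_congr rfl fun k hk =>
        catalan_shift p k (by have := mem_range.mp hk; omega)
    have hb := base_case p hp2
    rw [e1, e2, e3, e4, e5]
    linear_combination hb
end

section
/- Let p be a prime and let d be an integer with 0 ≤ d ≤ p−1. Then 6 · ∑_{k=0}^{p−1} k² · C_{k+d} ≡ (9d² + 6d − 1)·(p/3) − 3·(d+1)² − 6·[p=3] + 6·∑_{0 < k ≤ d} k² · C_{d−k} (mod p). -/
open Finset Nat

namespace SumSqCatalanAux

/- ### Generic binomial sum identities -/

lemma sum_pow_mul_choose {R : Type*} [CommRing R] (y : R) (n : ℕ) :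
    ∑ k ∈ range (n+1), y^k * (n.choose k : R) = (y+1)^n := by
  have h := add_pow y 1 n
  simp only [one_pow, mul_one] at h
  exact h.symm

lemma sum_k_pow_mul_choose {R : Type*} [CommRing R] (y : R) (n : ℕ) (hn : 1 ≤ n) :
    ∑ k ∈ range (n+1), (k : R) * y^k * (n.choose k : R) = n * y * (y+1)^(n-1) := by
  rw [Finset.sum_range_succ']
  have hpt : ∀ i, ((i+1:ℕ) : R) * y^(i+1) * (n.choose (i+1) : R)
      = (n:R) * y * (y^i * ((n-1).choose i : R)) := by
    intro i
    have h := congrArg (Nat.cast : ℕ → R) (Nat.add_one_mul_choose_eq (n-1) i)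
    rw [show (n-1) + 1 = n by omega] at h
    push_cast at h
    push_cast
    linear_combination (-(y^(i+1))) * h
  rw [Finset.sum_congr rfl (fun i _ => hpt i), ← Finset.mul_sum]
  have h2 := sum_pow_mul_choose y (n-1)
  rw [show (n-1)+1 = n by omega] at h2
  rw [h2]
  push_cast
  ring

lemma sum_shifted_choose {R : Type*} [CommRing R] (y : R) (n : ℕ) :
    y * ∑ k ∈ range (n+1), y^k * ((n+1).choose (k+1) : R) = (y+1)^(n+1) - 1 := by
  have h := sum_pow_mul_choose y (n+1)
  rw [Finset.sum_range_succ'] at h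
  simp only [pow_zero, Nat.choose_zero_right, Nat.cast_one, one_mul, mul_one] at h
  rw [Finset.mul_sum]
  calc ∑ k ∈ range (n+1), y * (y^k * ((n+1).choose (k+1) : R))
      = ∑ k ∈ range (n+1), y^(k+1) * ((n+1).choose (k+1) : R) := by
        refine Finset.sum_congr rfl fun k _ => by ring
    _ = (y+1)^(n+1) - 1 := by linear_combination h

/- ### Catalan basics -/

lemma catalan_add_choose (n : ℕ) : catalan n + (2*n).choose (n+1) = n.centralBinom := by
  have h1 := succ_mul_catalan_eq_centralBinom n
  have h2 := Nat.choose_succ_right_eq (2*n) n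
  have h3 : 2*n - n = n := by omega
  rw [h3] at h2
  have h4 : Nat.centralBinom n = (2*n).choose n := rfl
  have key : (n+1) * (catalan n + (2*n).choose (n+1)) = (n+1) * n.centralBinom := by
    rw [Nat.mul_add, h1, h4]; nlinarith [h2]
  exact Nat.eq_of_mul_eq_mul_left (Nat.succ_pos n) key

lemma catalan_four : catalan 4 = 14 := by
  have h := succ_mul_catalan_eq_centralBinom 4
  have : Nat.centralBinom 4 = 70 := by decide
  omega

variable {p : ℕ} [hp : Fact p.Prime]

lemma natCast_ne_zero_zmod {k : ℕ} (hk0 : k ≠ 0) (hk : k < p) : ((k : ℕ) : ZMod p) ≠ 0 := by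
  rw [Ne, ZMod.natCast_eq_zero_iff]
  intro hdvd
  have := Nat.le_of_dvd (by omega) hdvd
  omega

lemma k_mul_catalan (k : ℕ) :
    (k : ZMod p) * (catalan k : ZMod p) = (Nat.centralBinom k : ZMod p) - catalan k := by
  have h := congrArg (Nat.cast : ℕ → ZMod p) (succ_mul_catalan_eq_centralBinom k)
  push_cast at h
  linear_combination h

lemma centralBinom_vanish {k : ℕ} (hk : (p-1)/2 < k) (hk' : k < p) :
    (Nat.centralBinom k : ZMod p) = 0 := by
  rw [ZMod.natCast_eq_zero_iff]
  have h : Nat.centralBinom k = (k + k).choose k := by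
    rw [Nat.centralBinom_eq_two_mul_choose, two_mul]
  rw [h]
  have h2 := hp.out.two_le
  exact hp.out.dvd_choose_add hk' hk' (by omega)

lemma catalan_vanish {k : ℕ} (hk : (p-1)/2 < k) (hk' : k < p-1) :
    (catalan k : ZMod p) = 0 := by
  have hcb : (Nat.centralBinom k : ZMod p) = 0 := centralBinom_vanish hk (by omega)
  have h := congrArg (Nat.cast : ℕ → ZMod p) (succ_mul_catalan_eq_centralBinom k)
  push_cast at h
  rw [hcb] at h
  have hunit : ((k:ZMod p) + 1) ≠ 0 := by
    have h5 := natCast_ne_zero_zmod (p := p) (k := k+1) (by omega) (by omega)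
    push_cast at h5
    exact h5
  exact (mul_eq_zero.mp h).resolve_left hunit

lemma lucas_cast (n k : ℕ) : ((n.choose k : ℕ) : ZMod p)
    = ((n % p).choose (k % p) : ZMod p) * ((n / p).choose (k / p) : ZMod p) := by
  have h := Choose.choose_modEq_choose_mod_mul_choose_div (n := n) (k := k) (p := p)
  have := (ZMod.intCast_eq_intCast_iff _ _ _).mpr h
  push_cast at this
  exact_mod_cast this

lemma catalan_last : (catalan (p-1) : ZMod p) = -1 := by
  have hp2 := hp.out.two_le
  have hadd := catalan_add_choose (p-1)
  have hP : (p-1)+1 = p := by omega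
  rw [hP] at hadd
  have hcb : (Nat.centralBinom (p-1) : ZMod p) = 0 := centralBinom_vanish (by omega) (by omega)
  have hch : (((2*(p-1)).choose p : ℕ) : ZMod p) = 1 := by
    rw [lucas_cast]
    have h1 : 2*(p-1) = (p-2) + p*1 := by omega
    have h2 : (2*(p-1)) % p = p-2 := by
      rw [h1, Nat.add_mul_mod_self_left]; exact Nat.mod_eq_of_lt (by omega)
    have h3 : (2*(p-1)) / p = 1 := by
      rw [h1, Nat.add_mul_div_left _ _ (by omega : 0 < p), Nat.div_eq_of_lt (by omega)]
    have h4 : p % p = 0 := Nat.mod_self p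
    have h5 : p / p = 1 := Nat.div_self (by omega)
    rw [h2, h3, h4, h5]
    simp
  have hh := congrArg (Nat.cast : ℕ → ZMod p) hadd
  push_cast at hh
  linear_combination hh + hcb - hch

lemma catalan_p_add (hodd : p % 2 = 1) {r : ℕ} (hr : r ≤ p - 2) :
    (catalan (p + r) : ZMod p) = 2 * catalan r := by
  have hp2 := hp.out.two_le
  have hp3 : 3 ≤ p := by omega
  have hr1 : ((r:ZMod p) + 1) ≠ 0 := by
    have h5 := natCast_ne_zero_zmod (p := p) (k := r+1) (by omega) (by omega)
    push_cast at h5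
    exact h5
  have hkey := congrArg (Nat.cast : ℕ → ZMod p) (succ_mul_catalan_eq_centralBinom (p+r))
  push_cast [ZMod.natCast_self] at hkey
  by_cases hcase : 2*r < p
  · have hcb : (Nat.centralBinom (p+r) : ZMod p) = 2 * (Nat.centralBinom r : ZMod p) := by
      rw [Nat.centralBinom_eq_two_mul_choose, lucas_cast]
      have e1 : 2*(p+r) = 2*r + p*2 := by ring
      have e2 : p + r = r + p*1 := by ring
      rw [e1, e2, Nat.add_mul_mod_self_left, Nat.add_mul_mod_self_left,
        Nat.add_mul_div_left _ _ (by omega : 0 < p), Nat.add_mul_div_left _ _ (by omega : 0 < p),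
        Nat.mod_eq_of_lt hcase, Nat.mod_eq_of_lt (by omega : r < p),
        Nat.div_eq_of_lt hcase, Nat.div_eq_of_lt (by omega : r < p)]
      rw [Nat.centralBinom_eq_two_mul_choose]
      norm_num [Nat.choose]
      ring
    have hkey2 := congrArg (Nat.cast : ℕ → ZMod p) (succ_mul_catalan_eq_centralBinom r)
    push_cast at hkey2
    apply mul_left_cancel₀ hr1
    rw [show ((r:ZMod p)+1) * (2 * (catalan r : ZMod p)) = 2*(((r:ZMod p)+1) * catalan r) by ring,
      hkey2, ← hcb, ← hkey]
    ring
  · have hm : (p-1)/2 < r := by omega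
    have hcatr : (catalan r : ZMod p) = 0 := catalan_vanish hm (by omega)
    have hcb : (Nat.centralBinom (p+r) : ZMod p) = 0 := by
      rw [Nat.centralBinom_eq_two_mul_choose, lucas_cast]
      have e1 : 2*(p+r) = (2*r - p) + p*3 := by omega
      have e2 : p + r = r + p*1 := by ring
      rw [e1, e2, Nat.add_mul_mod_self_left, Nat.add_mul_mod_self_left,
        Nat.mod_eq_of_lt (by omega : 2*r - p < p), Nat.mod_eq_of_lt (by omega : r < p),
        Nat.choose_eq_zero_of_lt (by omega : 2*r - p < r)]
      simp
    rw [hcb] at hkey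
    rw [hcatr]
    have h0 : ((r:ZMod p) + 1) * (catalan (p+r) : ZMod p) = 0 := by linear_combination hkey
    rcases mul_eq_zero.mp h0 with h | h
    · exact absurd h hr1
    · rw [h]; ring

lemma centralBinom_eq (hodd : p % 2 = 1) :
    ∀ k, k ≤ (p-1)/2 → (Nat.centralBinom k : ZMod p) = (-4)^k * (((p-1)/2).choose k : ZMod p) := by
  have hp2 := hp.out.two_le
  intro k
  induction k with
  | zero => simp
  | succ k ih =>
    intro hk
    have hm2 : 2 * ((p-1)/2) = p - 1 := by omega
    have ihh := ih (by omega)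
    have h1 := congrArg (Nat.cast : ℕ → ZMod p) (Nat.succ_mul_centralBinom_succ k)
    push_cast at h1
    have h2 := congrArg (Nat.cast : ℕ → ZMod p) (Nat.choose_succ_right_eq ((p-1)/2) k)
    push_cast [Nat.cast_sub (by omega : k ≤ (p-1)/2)] at h2
    have hm : ((((p-1)/2 : ℕ)) : ZMod p) * 2 = -1 := by
      have := congrArg (Nat.cast : ℕ → ZMod p) hm2
      push_cast [Nat.cast_sub (by omega : 1 ≤ p), ZMod.natCast_self] at this
      linear_combination this
    have hk1 : ((k:ZMod p) + 1) ≠ 0 := by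
      have h5 := natCast_ne_zero_zmod (p := p) (k := k+1) (by omega) (by omega)
      push_cast at h5
      exact h5
    apply mul_left_cancel₀ hk1
    rw [h1, ihh]
    calc 2 * (2 * (k:ZMod p) + 1) * ((-4)^k * (((p-1)/2).choose k : ZMod p))
        = (-4)^(k+1) * ((((p-1)/2).choose k : ZMod p) * ((((p-1)/2 : ℕ) : ZMod p) - k))
          + (2 + ((((p-1)/2:ℕ)):ZMod p) * 2 * 2) * ((-4)^k * (((p-1)/2).choose k : ZMod p)) := by
          ring
      _ = ((k:ZMod p) + 1) * ((-4)^(k+1) * (((p-1)/2).choose (k+1) : ZMod p)) := by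
          rw [← h2, hm]; ring

/- ### The three base sums mod p (p ≥ 5) -/

section Main
variable (hp5 : 5 ≤ p) (hodd : p % 2 = 1)
include hp5 hodd

lemma sum_cb : ∑ j ∈ range p, (Nat.centralBinom j : ZMod p) = (-3)^((p-1)/2) := by
  have hsub : ∑ j ∈ range ((p-1)/2 + 1), (Nat.centralBinom j : ZMod p)
      = ∑ j ∈ range p, (Nat.centralBinom j : ZMod p) := by
    apply Finset.sum_subset
    · intro x hx; simp only [Finset.mem_range] at *; omega
    · intro x hx hnx
      simp only [Finset.mem_range] at hx hnx
      exact centralBinom_vanish (by omega) (by omega)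
  rw [← hsub, Finset.sum_congr rfl (fun k hk => centralBinom_eq hodd k
    (by simp only [Finset.mem_range] at hk; omega))]
  have h := sum_pow_mul_choose (-4 : ZMod p) ((p-1)/2)
  rw [h]
  norm_num

lemma sum_k_cb : 3 * ∑ j ∈ range p, (j : ZMod p) * (Nat.centralBinom j : ZMod p)
    = -2 * (-3)^((p-1)/2) := by
  have hsub : ∑ j ∈ range ((p-1)/2 + 1), (j : ZMod p) * (Nat.centralBinom j : ZMod p)
      = ∑ j ∈ range p, (j : ZMod p) * (Nat.centralBinom j : ZMod p) := by
    apply Finset.sum_subset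
    · intro x hx; simp only [Finset.mem_range] at *; omega
    · intro x hx hnx
      simp only [Finset.mem_range] at hx hnx
      rw [centralBinom_vanish (by omega) (by omega), mul_zero]
  rw [← hsub, Finset.sum_congr rfl (fun k hk => by
    rw [centralBinom_eq hodd k (by simp only [Finset.mem_range] at hk; omega)])]
  have heq : ∀ k ∈ range ((p-1)/2 + 1), (k : ZMod p) * ((-4)^k * (((p-1)/2).choose k : ZMod p))
      = (k : ZMod p) * (-4)^k * (((p-1)/2).choose k : ZMod p) := fun k _ => by ring
  rw [Finset.sum_congr rfl heq, sum_k_pow_mul_choose (-4 : ZMod p) ((p-1)/2) (by omega)]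
  have h4m : ((((p-1)/2 : ℕ)) : ZMod p) * 4 = -2 := by
    have hnat : 2*(2*((p-1)/2)) = 2*(p-1) := by omega
    have h2 := congrArg (Nat.cast : ℕ → ZMod p) hnat
    push_cast [Nat.cast_sub (by omega : 1 ≤ p), ZMod.natCast_self] at h2
    linear_combination h2
  have hpow : (-3 : ZMod p)^((p-1)/2) = (-3) * (-3)^((p-1)/2 - 1) := by
    conv_lhs => rw [show (p-1)/2 = ((p-1)/2 - 1) + 1 from by omega]
    rw [_root_.pow_succ']
  norm_num
  linear_combination (3*(-3:ZMod p)^((p-1)/2-1)) * h4m - 2 * hpow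

lemma two_mul_sum_catalan :
    2 * ∑ j ∈ range p, (catalan j : ZMod p) = 3 * (-3)^((p-1)/2) - 1 := by
  have hsplit : ∑ j ∈ range p, (catalan j : ZMod p)
      = (∑ j ∈ range ((p-1)/2 + 1), (catalan j : ZMod p)) + catalan (p-1) := by
    have hss := Finset.sum_range_succ (fun j => (catalan j : ZMod p)) (p-1)
    rw [show (p-1)+1 = p by omega] at hss
    rw [hss]
    congr 1
    refine (Finset.sum_subset ?_ ?_).symm
    · intro x hx; simp only [Finset.mem_range] at *; omega
    · intro x hx hnx
      simp only [Finset.mem_range] at hx hnx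
      exact catalan_vanish (by omega) (by omega)
  rw [hsplit, catalan_last]
  -- pointwise : (m+1) * catalan k = (-4)^k * choose (m+1) (k+1)
  have hpt : ∀ k ∈ range ((p-1)/2 + 1),
      ((((p-1)/2 : ℕ)) : ZMod p) * (catalan k : ZMod p) + (catalan k : ZMod p)
        = (-4)^k * ((((p-1)/2 + 1).choose (k+1)) : ZMod p) := by
    intro k hk
    simp only [Finset.mem_range] at hk
    have hkm : k ≤ (p-1)/2 := by omega
    have hk1 : ((k:ZMod p) + 1) ≠ 0 := by
      have h5 := natCast_ne_zero_zmod (p := p) (k := k+1) (by omega) (by omega)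
      push_cast at h5
      exact h5
    apply mul_left_cancel₀ hk1
    have hcat := congrArg (Nat.cast : ℕ → ZMod p) (succ_mul_catalan_eq_centralBinom k)
    push_cast at hcat
    have hcb := centralBinom_eq hodd k hkm
    have hch := congrArg (Nat.cast : ℕ → ZMod p) (Nat.add_one_mul_choose_eq ((p-1)/2) k)
    push_cast at hch
    calc ((k:ZMod p) + 1) * (((((p-1)/2 : ℕ)) : ZMod p) * (catalan k : ZMod p) + catalan k)
        = (((((p-1)/2 : ℕ)) : ZMod p) + 1) * (((k:ZMod p) + 1) * (catalan k : ZMod p)) := by ring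
      _ = (((((p-1)/2 : ℕ)) : ZMod p) + 1) * ((-4)^k * (((p-1)/2).choose k : ZMod p)) := by
          rw [hcat, hcb]
      _ = (-4)^k * ((((((p-1)/2 : ℕ)) : ZMod p) + 1) * (((p-1)/2).choose k : ZMod p)) := by ring
      _ = (-4)^k * (((((p-1)/2 + 1).choose (k+1)) : ZMod p) * ((k : ZMod p) + 1)) := by
          rw [hch]
      _ = ((k:ZMod p) + 1) * ((-4)^k * ((((p-1)/2 + 1).choose (k+1)) : ZMod p)) := by ring
  -- sum it
  have hsum : (((((p-1)/2 : ℕ)) : ZMod p) + 1) * ∑ j ∈ range ((p-1)/2 + 1), (catalan j : ZMod p)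
      = ∑ k ∈ range ((p-1)/2 + 1), (-4)^k * ((((p-1)/2 + 1).choose (k+1)) : ZMod p) := by
    rw [← Finset.sum_congr rfl hpt, Finset.mul_sum]
    refine Finset.sum_congr rfl fun k _ => by ring
  have hshift := sum_shifted_choose (-4 : ZMod p) ((p-1)/2)
  rw [← hsum] at hshift
  -- (-4) * ((m+1) * T0) = (-3)^(m+1) - 1 ;  (-4)*(m+1) = -2
  have h4m : ((((p-1)/2 : ℕ)) : ZMod p) * 4 = -2 := by
    have hnat : 2*(2*((p-1)/2)) = 2*(p-1) := by omega
    have h2 := congrArg (Nat.cast : ℕ → ZMod p) hnat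
    push_cast [Nat.cast_sub (by omega : 1 ≤ p), ZMod.natCast_self] at h2
    linear_combination h2
  have hpow : (-4 + 1 : ZMod p)^((p-1)/2 + 1) = (-3) * (-3)^((p-1)/2) := by
    norm_num
    rw [_root_.pow_succ']
    ring
  rw [hpow] at hshift
  linear_combination (-1 : ZMod p) * hshift
    - (∑ j ∈ range ((p-1)/2 + 1), (catalan j : ZMod p)) * h4m

lemma two_mul_sum_k_catalan :
    2 * ∑ j ∈ range p, (j : ZMod p) * (catalan j : ZMod p) = 1 - (-3)^((p-1)/2) := by
  have h1 : ∑ j ∈ range p, (j : ZMod p) * (catalan j : ZMod p)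
      = ∑ j ∈ range p, (Nat.centralBinom j : ZMod p) - ∑ j ∈ range p, (catalan j : ZMod p) := by
    rw [← Finset.sum_sub_distrib]
    exact Finset.sum_congr rfl fun j _ => k_mul_catalan j
  rw [h1, sum_cb hp5 hodd]
  have h2 := two_mul_sum_catalan hp5 hodd
  linear_combination -h2

lemma six_mul_sum_k_sq_catalan :
    6 * ∑ j ∈ range p, (j : ZMod p)^2 * (catalan j : ZMod p) = -(-3)^((p-1)/2) - 3 := by
  have h1 : ∑ j ∈ range p, (j : ZMod p)^2 * (catalan j : ZMod p)
      = ∑ j ∈ range p, (j : ZMod p) * (Nat.centralBinom j : ZMod p)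
        - ∑ j ∈ range p, (j : ZMod p) * (catalan j : ZMod p) := by
    rw [← Finset.sum_sub_distrib]
    refine Finset.sum_congr rfl fun j _ => ?_
    have := k_mul_catalan (p := p) j
    linear_combination (j : ZMod p) * this
  rw [h1]
  have h2 := sum_k_cb hp5 hodd
  have h3 := two_mul_sum_k_catalan hp5 hodd
  linear_combination 2 * h2 - 3 * h3

end Main

/- ### chi3 and the quadratic character -/

lemma chi3_cast (hp5 : 5 ≤ p) : ((chi3 (p:ℤ) : ℤ) : ZMod p) = (-3 : ZMod p)^((p-1)/2) := by
  have hp2 : p ≠ 2 := by omega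
  have hodd : p % 2 = 1 := by
    rcases hp.out.eq_two_or_odd with h | h
    · omega
    · exact h
  have hdiv : p / 2 = (p-1)/2 := by omega
  have hmod3 : p % 3 ≠ 0 := by
    intro h
    have hdvd : (3:ℕ) ∣ p := Nat.dvd_of_mod_eq_zero h
    have := (Nat.prime_dvd_prime_iff_eq (by norm_num) hp.out).mp hdvd
    omega
  have hne0 : ((p : ℤ) : ZMod 3) ≠ 0 := by
    rw [Int.cast_natCast, Ne, ZMod.natCast_eq_zero_iff]
    intro hdvd
    have := (Nat.prime_dvd_prime_iff_eq (by norm_num) hp.out).mp hdvd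
    omega
  have hcast3 : ((p : ℤ) : ZMod 3) = ((p % 3 : ℕ) : ZMod 3) := by
    rw [Int.cast_natCast, ZMod.natCast_mod]
  have hL3 : legendreSym 3 (p : ℤ) = chi3 (p : ℤ) := by
    have hchi : chi3 (p : ℤ) = if p % 3 = 1 then 1 else -1 := by
      unfold chi3
      have h1 : (p : ℤ) % 3 = ((p % 3 : ℕ) : ℤ) := by
        push_cast
        rfl
      rw [h1]
      rcases (by omega : p % 3 = 1 ∨ p % 3 = 2) with h | h <;> rw [h] <;> norm_num
    rw [hchi, legendreSym, hcast3]
    rcases (by omega : p % 3 = 1 ∨ p % 3 = 2) with h | h <;> rw [h]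
    · norm_num
    · rw [if_neg (by norm_num)]
      rw [show ((2:ℕ) : ZMod 3) = 2 from rfl, quadraticChar_neg_one_iff_not_isSquare]
      decide
  have heuler := legendreSym.eq_pow p (-3)
  have hmul : legendreSym p (-3) = legendreSym p (-1) * legendreSym p 3 := by
    rw [← legendreSym.mul]
    norm_num
  have hneg1 : legendreSym p (-1) = (-1:ℤ)^(p/2) := by
    rw [legendreSym.at_neg_one hp2, ZMod.χ₄_eq_neg_one_pow hodd]
  have hqr := legendreSym.quadratic_reciprocity (p := p) (q := 3) hp2 (by norm_num) (by omega)
  rw [show p/2 * (3/2) = p/2 by omega] at hqr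
  rw [show ((3:ℕ) : ℤ) = (3:ℤ) from rfl] at hqr
  have hsq : legendreSym 3 (p:ℤ) * legendreSym 3 (p:ℤ) = 1 := by
    rcases legendreSym.eq_one_or_neg_one (p := 3) (a := (p:ℤ)) hne0 with h | h <;>
      rw [h] <;> norm_num
  have hsq2 : ((-1:ℤ)^(p/2)) * ((-1:ℤ)^(p/2)) = 1 := by
    rw [← mul_pow]
    norm_num
  have key : legendreSym p (-3) = legendreSym 3 (p:ℤ) := by
    have h1 : legendreSym p 3 = (-1:ℤ)^(p/2) * legendreSym 3 (p:ℤ) := by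
      calc legendreSym p 3 = (legendreSym 3 (p:ℤ) * legendreSym 3 (p:ℤ)) * legendreSym p 3 := by
            rw [hsq]; ring
        _ = legendreSym 3 (p:ℤ) * (legendreSym 3 (p:ℤ) * legendreSym p 3) := by ring
        _ = (-1:ℤ)^(p/2) * legendreSym 3 (p:ℤ) := by rw [hqr]; ring
    rw [hmul, hneg1, h1]
    calc (-1:ℤ)^(p/2) * ((-1:ℤ)^(p/2) * legendreSym 3 (p:ℤ))
        = ((-1:ℤ)^(p/2) * (-1:ℤ)^(p/2)) * legendreSym 3 (p:ℤ) := by ring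
      _ = legendreSym 3 (p:ℤ) := by rw [hsq2]; ring
  rw [← hL3, ← key]
  have := heuler
  rw [hdiv] at this
  rw [this]
  push_cast
  ring

end SumSqCatalanAux

theorem sum_sq_mul_catalan_shift (p : ℕ) (hp : p.Prime) (d : ℕ) (hd : d ≤ p - 1) :
    6 * ∑ k ∈ Finset.range p, (k : ℤ) ^ 2 * (catalan (k + d) : ℤ)
      ≡ (9 * (d : ℤ) ^ 2 + 6 * d - 1) * chi3 (p : ℤ) - 3 * ((d : ℤ) + 1) ^ 2
        - 6 * (if p = 3 then 1 else 0)
        + 6 * ∑ k ∈ Finset.Icc 1 d, (k : ℤ) ^ 2 * (catalan (d - k) : ℤ) [ZMOD (p : ℤ)] := by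
  haveI : Fact p.Prime := ⟨hp⟩
  open SumSqCatalanAux in
  by_cases hp5 : 5 ≤ p
  · -- main case
    have hodd : p % 2 = 1 := hp.eq_two_or_odd.resolve_left (by omega)
    rw [← ZMod.intCast_eq_intCast_iff]
    rw [if_neg (by omega : ¬ p = 3)]
    push_cast
    rw [chi3_cast hp5]
    -- shift the left-hand sum
    have hshift : ∑ k ∈ Finset.range p, (k : ZMod p)^2 * (catalan (k+d) : ZMod p)
        = ∑ j ∈ Finset.Ico d (p+d), ((j : ZMod p) - (d : ZMod p))^2 * (catalan j : ZMod p) := by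
      rw [Finset.sum_Ico_eq_sum_range, show p + d - d = p from by omega]
      refine (Finset.sum_congr rfl fun k _ => ?_).symm
      rw [show d + k = k + d from by ring]
      push_cast
      ring
    have hIco := Finset.sum_Ico_eq_sub
      (fun j => ((j : ZMod p) - (d : ZMod p))^2 * (catalan j : ZMod p))
      (by omega : d ≤ p + d)
    have hsplit2 := Finset.sum_Ico_consecutive
      (fun j => ((j : ZMod p) - (d : ZMod p))^2 * (catalan j : ZMod p))
      (by omega : 0 ≤ p) (by omega : p ≤ p + d)
    rw [← Finset.range_eq_Ico, ← Finset.range_eq_Ico] at hsplit2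
    have htail : ∑ j ∈ Finset.Ico p (p+d), ((j : ZMod p) - (d : ZMod p))^2 * (catalan j : ZMod p)
        = 2 * ∑ j ∈ Finset.range d, ((j : ZMod p) - (d : ZMod p))^2 * (catalan j : ZMod p) := by
      rw [Finset.sum_Ico_eq_sum_range, show p + d - p = d from by omega, Finset.mul_sum]
      refine Finset.sum_congr rfl fun r hr => ?_
      simp only [Finset.mem_range] at hr
      rw [catalan_p_add hodd (by omega : r ≤ p - 2)]
      push_cast [ZMod.natCast_self]
      ring
    have hLHS : ∑ k ∈ Finset.range p, (k : ZMod p)^2 * (catalan (k+d) : ZMod p)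
        = (∑ j ∈ Finset.range p, ((j : ZMod p) - (d : ZMod p))^2 * (catalan j : ZMod p))
          + ∑ j ∈ Finset.range d, ((j : ZMod p) - (d : ZMod p))^2 * (catalan j : ZMod p) := by
      rw [hshift, hIco, ← hsplit2, htail]
      ring
    have hcorr : ∑ k ∈ Finset.Icc 1 d, (k : ZMod p)^2 * (catalan (d-k) : ZMod p)
        = ∑ j ∈ Finset.range d, ((j : ZMod p) - (d : ZMod p))^2 * (catalan j : ZMod p) := by
      refine Finset.sum_nbij' (i := fun k => d - k) (j := fun j => d - j) ?_ ?_ ?_ ?_ ?_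
      · intro a ha; simp only [Finset.mem_Icc] at ha; simp only [Finset.mem_range]; omega
      · intro b hb; simp only [Finset.mem_range] at hb; simp only [Finset.mem_Icc]; omega
      · intro a ha; simp only [Finset.mem_Icc] at ha; omega
      · intro b hb; simp only [Finset.mem_range] at hb; omega
      · intro a ha
        simp only [Finset.mem_Icc] at ha
        rw [Nat.cast_sub (by omega : a ≤ d)]
        ring
    have hexp : ∑ j ∈ Finset.range p, ((j : ZMod p) - (d : ZMod p))^2 * (catalan j : ZMod p)
        = ∑ j ∈ Finset.range p, (j : ZMod p)^2 * (catalan j : ZMod p)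
          - 2*(d : ZMod p)*∑ j ∈ Finset.range p, (j : ZMod p) * (catalan j : ZMod p)
          + (d : ZMod p)^2 * ∑ j ∈ Finset.range p, (catalan j : ZMod p) := by
      rw [Finset.mul_sum, Finset.mul_sum, ← Finset.sum_sub_distrib, ← Finset.sum_add_distrib]
      refine Finset.sum_congr rfl fun j _ => by ring
    have h0 := two_mul_sum_catalan (p := p) hp5 hodd
    have h1 := two_mul_sum_k_catalan (p := p) hp5 hodd
    have h2 := six_mul_sum_k_sq_catalan (p := p) hp5 hodd
    rw [hLHS, hcorr, hexp]
    linear_combination h2 - 6*(d : ZMod p)*h1 + 3*(d : ZMod p)^2*h0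
  · -- small cases p = 2 or p = 3
    have hp2 := hp.two_le
    have : p = 2 ∨ p = 3 := by
      rcases (by omega : p = 2 ∨ p = 3 ∨ p = 4) with h | h | h
      · exact Or.inl h
      · exact Or.inr h
      · exfalso; rw [h] at hp; norm_num at hp
    rcases this with h | h <;> subst h <;> interval_cases d <;>
      · simp only [show (Finset.Icc 1 0 : Finset ℕ) = ∅ by decide,
          show (Finset.Icc 1 1 : Finset ℕ) = {1} by decide,
          show (Finset.Icc 1 2 : Finset ℕ) = {1, 2} by decide]
        norm_num [Finset.sum_range_succ, Finset.sum_insert, Finset.sum_singleton,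
          catalan_zero, catalan_one, catalan_two, catalan_three,
          SumSqCatalanAux.catalan_four, chi3, Int.ModEq]
end

section
/- Let d be a natural number and let δ ∈ {0,1}. Then, as an identity of rational numbers, C_d = (1 − 2δ)·∑_{0 ≤ k < d} C_k + (−1)^δ · ∑_{i=0}^{d} ((i−δ)/3) · C_{d,i+1} + 1 + δ; moreover C_d = (1/2)·∑_{j=1}^{d+1} (1 − 3·[3∣j]) · C_{d,j} + 3/2. -/
/-- `chooseN a b` is the binomial coefficient `binom(a, b)` with natural upper argument
and integer lower argument; it is `0` when `b < 0` or `b > a`. -/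
def chooseN (a : ℕ) (b : ℤ) : ℤ := if 0 ≤ b then (a.choose b.toNat : ℤ) else 0
/-- The generalized Catalan-type numbers
`C_{n,j} = 2·binom(2n, n−j) − binom(2n, n−1−j) − binom(2n, n+1−j)`. -/
def catD (n j : ℕ) : ℤ :=
  2 * chooseN (2 * n) ((n : ℤ) - j) - chooseN (2 * n) ((n : ℤ) - 1 - j)
    - chooseN (2 * n) ((n : ℤ) + 1 - j)

namespace CatAux
open Finset

lemma chooseN_of_neg {a : ℕ} {b : ℤ} (h : b < 0) : chooseN a b = 0 := by
  simp [chooseN, not_le.mpr h]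

lemma chooseN_of_gt {a : ℕ} {b : ℤ} (h : (a:ℤ) < b) : chooseN a b = 0 := by
  have hb : 0 ≤ b := by omega
  have h2 : a < b.toNat := by omega
  simp [chooseN, if_pos hb, Nat.choose_eq_zero_of_lt h2]

lemma chooseN_succ (a : ℕ) (b : ℤ) :
    chooseN (a+1) b = chooseN a b + chooseN a (b-1) := by
  rcases lt_trichotomy b 0 with h | h | h
  · rw [chooseN_of_neg h, chooseN_of_neg h, chooseN_of_neg (by omega)]; ring
  · subst h; simp [chooseN, chooseN_of_neg (show (0:ℤ)-1 < 0 by norm_num)]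
  · have hb : 0 ≤ b := le_of_lt h
    have hb1 : 0 ≤ b - 1 := by omega
    have ht : b.toNat = (b-1).toNat + 1 := by omega
    simp only [chooseN, if_pos hb, if_pos hb1, ht, Nat.choose_succ_succ]
    push_cast; ring

lemma chooseN_row (n : ℕ) (b : ℤ) :
    chooseN (2*(n+1)) b
      = chooseN (2*n) b + 2 * chooseN (2*n) (b-1) + chooseN (2*n) (b-2) := by
  have h1 : 2*(n+1) = (2*n+1)+1 := by ring
  rw [h1, chooseN_succ, chooseN_succ, chooseN_succ]
  ring_nf

def Bb (n : ℕ) (j : ℤ) : ℤ := chooseN (2*n) ((n:ℤ)-j) - chooseN (2*n) ((n:ℤ)-j-1)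
def catZ (n : ℕ) (j : ℤ) : ℤ :=
  2 * chooseN (2*n) ((n:ℤ)-j) - chooseN (2*n) ((n:ℤ)-j-1) - chooseN (2*n) ((n:ℤ)-j+1)

lemma catD_eq_catZ (n j : ℕ) : catD n j = catZ n j := by
  unfold catD catZ; ring_nf

lemma catZ_eq_Bb (n : ℕ) (j : ℤ) : catZ n j = Bb n j - Bb n (j-1) := by
  unfold catZ Bb; ring_nf

lemma Bb_eq_zero {n : ℕ} {j : ℤ} (h : (n:ℤ) + 1 ≤ j) : Bb n j = 0 := by
  unfold Bb
  rw [chooseN_of_neg (by omega), chooseN_of_neg (by omega)]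
  ring

lemma catZ_eq_zero {n : ℕ} {j : ℤ} (h : (n:ℤ) + 2 ≤ j) : catZ n j = 0 := by
  unfold catZ
  rw [chooseN_of_neg (by omega), chooseN_of_neg (by omega), chooseN_of_neg (by omega)]
  ring

lemma catZ_succ (n : ℕ) (j : ℤ) :
    catZ (n+1) j = Bb n j + Bb n (j+1) - Bb n (j-1) - Bb n (j-2) := by
  unfold catZ Bb
  have e1 : ((n:ℤ)+1) - j = ((n:ℤ)-j) + 1 := by ring
  push_cast
  rw [show (2*(n+1) : ℕ) = 2*(n+1) from rfl]
  rw [chooseN_row n ((n:ℤ)+1-j), chooseN_row n ((n:ℤ)+1-j-1), chooseN_row n ((n:ℤ)+1-j+1)]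
  ring_nf

lemma Bb_succ (n : ℕ) (j : ℤ) :
    Bb (n+1) j = Bb n (j-1) + 2 * Bb n j + Bb n (j+1) := by
  unfold Bb
  push_cast
  rw [chooseN_row n ((n:ℤ)+1-j), chooseN_row n ((n:ℤ)+1-j-1)]
  ring_nf

lemma chooseN_symm1 (n : ℕ) : chooseN (2*n) ((n:ℤ)+1) = chooseN (2*n) ((n:ℤ)-1) := by
  cases n with
  | zero => simp [chooseN]
  | succ m =>
    have h1 : (0:ℤ) ≤ (m:ℤ)+1+1 := by omega
    have h2 : (0:ℤ) ≤ (m:ℤ)+1-1 := by omega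
    have ht1 : ((m:ℤ)+1+1).toNat = m+2 := by omega
    have ht2 : ((m:ℤ)+1-1).toNat = m := by omega
    push_cast
    simp only [chooseN, if_pos h1, if_pos h2, ht1, ht2]
    norm_cast
    have := Nat.choose_symm (show m+2 ≤ 2*(m+1) by omega)
    rw [show 2*(m+1) - (m+2) = m by omega] at this
    exact this.symm

lemma Bb_zero (n : ℕ) : Bb n 0 = (catalan n : ℤ) := by
  cases n with
  | zero => simp [Bb, chooseN]
  | succ m =>
    set N := m + 1 with hN
    have hkey : ((2*N).choose N : ℤ) * N = ((2*N).choose m : ℤ) * ((N:ℤ)+1) := by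
      have h := Nat.choose_succ_right_eq (2*N) m
      rw [show m + 1 = N from rfl, show 2*N - m = N + 1 by omega] at h
      exact_mod_cast h
    have hcb : (N+1) * catalan N = (2*N).choose N := by
      rw [succ_mul_catalan_eq_centralBinom]; rfl
    have h0 : (0:ℤ) ≤ (N:ℤ) - 0 := by omega
    have h2 : (0:ℤ) ≤ (N:ℤ) - 0 - 1 := by omega
    have h1t : ((N:ℤ) - 0).toNat = N := by omega
    have h2t : ((N:ℤ) - 0 - 1).toNat = m := by omega
    have expand : Bb N 0 = ((2*N).choose N : ℤ) - ((2*N).choose m : ℤ) := by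
      unfold Bb
      rw [chooseN, chooseN, if_pos h0, if_pos h2, h1t, h2t]
    have hmain : ((N:ℤ)+1) * Bb N 0 = ((N:ℤ)+1) * catalan N := by
      have hc2 : ((N:ℤ)+1) * catalan N = ((2*N).choose N : ℤ) := by exact_mod_cast hcb
      rw [expand, hc2]
      linear_combination hkey
    exact mul_left_cancel₀ (by positivity) hmain

lemma Bb_neg_one (n : ℕ) : Bb n (-1) = -(Bb n 0) := by
  unfold Bb
  rw [show (n:ℤ) - (-1) - 1 = (n:ℤ) - 0 by ring]
  rw [show (n:ℤ) - (-1) = (n:ℤ) + 1 by ring]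
  rw [chooseN_symm1]
  rw [show (n:ℤ) - 0 - 1 = (n:ℤ) - 1 by ring, show (n:ℤ) - 0 = (n:ℤ) - (-1) - 1 by ring]
  rw [show (n:ℤ) - (-1) - 1 = (n:ℤ) - 0 by ring]
  ring_nf

lemma Bb_one (n : ℕ) : Bb n 1 = (catalan (n+1) : ℤ) - catalan n := by
  have h := Bb_succ n 0
  rw [Bb_zero] at h
  rw [show (0:ℤ)-1 = -1 by ring, show (0:ℤ)+1 = 1 by ring, Bb_neg_one, Bb_zero] at h
  linarith

def Sig (n : ℕ) : ℤ := ∑ k ∈ range n, (catalan k : ℤ)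

lemma triple (n : ℕ) :
    (∑ m ∈ range (n+1), catZ n (3*(m:ℤ)+3)) = 1 - (catalan n : ℤ)
  ∧ (∑ m ∈ range (n+1), catZ n (3*(m:ℤ)+2)) = -(Sig n)
  ∧ (∑ m ∈ range (n+1), catZ n (3*(m:ℤ)+1)) = Sig n - 1 := by
  induction n with
  | zero =>
      refine ⟨?_, ?_, ?_⟩ <;> norm_num [catZ, chooseN, Sig, catalan_zero]
  | succ n ih =>
    obtain ⟨ih1, ih2, ih3⟩ := ih
    have hsig : Sig (n+1) = Sig n + catalan n := by rw [Sig, Sig, sum_range_succ]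
    refine ⟨?_, ?_, ?_⟩
    · rw [Finset.sum_range_succ]
      have hlast : catZ (n+1) (3*(((n+1):ℕ):ℤ)+3) = 0 := catZ_eq_zero (by push_cast; omega)
      have hper : ∀ m ∈ range (n+1), catZ (n+1) (3*(m:ℤ)+3)
          = catZ n (3*(m:ℤ)+3) + (Bb n (3*(((m+1):ℕ):ℤ)+1) - Bb n (3*(m:ℤ)+1)) := by
        intro m _
        rw [catZ_succ, catZ_eq_Bb]
        push_cast
        ring_nf
      have htel : ∑ m ∈ range (n+1), (Bb n (3*(((m+1):ℕ):ℤ)+1) - Bb n (3*(m:ℤ)+1))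
          = Bb n (3*(((n+1):ℕ):ℤ)+1) - Bb n (3*(((0:ℕ)):ℤ)+1) :=
        Finset.sum_range_sub (fun m : ℕ => Bb n (3*(m:ℤ)+1)) (n+1)
      rw [sum_congr rfl hper, Finset.sum_add_distrib, ih1, htel, hlast]
      have hz : Bb n (3*(((n+1):ℕ):ℤ)+1) = 0 := Bb_eq_zero (by push_cast; omega)
      have h1 : (3*(((0:ℕ)):ℤ)+1) = 1 := by norm_num
      rw [hz, h1, Bb_one]
      push_cast
      ring
    · rw [Finset.sum_range_succ]
      have hlast : catZ (n+1) (3*(((n+1):ℕ):ℤ)+2) = 0 := catZ_eq_zero (by push_cast; omega)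
      have hper : ∀ m ∈ range (n+1), catZ (n+1) (3*(m:ℤ)+2)
          = catZ n (3*(m:ℤ)+2) + (Bb n (3*(((m+1):ℕ):ℤ)) - Bb n (3*(m:ℤ))) := by
        intro m _
        rw [catZ_succ, catZ_eq_Bb]
        push_cast
        ring_nf
      have htel : ∑ m ∈ range (n+1), (Bb n (3*(((m+1):ℕ):ℤ)) - Bb n (3*(m:ℤ)))
          = Bb n (3*(((n+1):ℕ):ℤ)) - Bb n (3*(((0:ℕ)):ℤ)) :=
        Finset.sum_range_sub (fun m : ℕ => Bb n (3*(m:ℤ))) (n+1)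
      rw [sum_congr rfl hper, Finset.sum_add_distrib, ih2, htel, hlast]
      have hz : Bb n (3*(((n+1):ℕ):ℤ)) = 0 := Bb_eq_zero (by push_cast; omega)
      have h1 : (3*(((0:ℕ)):ℤ)) = 0 := by norm_num
      rw [hz, h1, Bb_zero, hsig]
      push_cast
      ring
    · rw [Finset.sum_range_succ]
      have hlast : catZ (n+1) (3*(((n+1):ℕ):ℤ)+1) = 0 := catZ_eq_zero (by push_cast; omega)
      have hper : ∀ m ∈ range (n+1), catZ (n+1) (3*(m:ℤ)+1)
          = catZ n (3*(m:ℤ)+1) + (Bb n (3*(((m+1):ℕ):ℤ)-1) - Bb n (3*(m:ℤ)-1)) := by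
        intro m _
        rw [catZ_succ, catZ_eq_Bb]
        push_cast
        ring_nf
      have htel : ∑ m ∈ range (n+1), (Bb n (3*(((m+1):ℕ):ℤ)-1) - Bb n (3*(m:ℤ)-1))
          = Bb n (3*(((n+1):ℕ):ℤ)-1) - Bb n (3*(((0:ℕ)):ℤ)-1) :=
        Finset.sum_range_sub (fun m : ℕ => Bb n (3*(m:ℤ)-1)) (n+1)
      rw [sum_congr rfl hper, Finset.sum_add_distrib, ih3, htel, hlast]
      have hz : Bb n (3*(((n+1):ℕ):ℤ)-1) = 0 := Bb_eq_zero (by push_cast; omega)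
      have h1 : (3*(((0:ℕ)):ℤ)-1) = -1 := by norm_num
      rw [hz, h1, Bb_neg_one, Bb_zero, hsig]
      push_cast
      ring

lemma sum_catZ (n : ℕ) :
    ∑ i ∈ range (n+1), catZ n ((i:ℤ)+1) = -(catalan n : ℤ) := by
  have hper : ∀ i ∈ range (n+1), catZ n ((i:ℤ)+1)
      = Bb n (((i+1:ℕ)):ℤ) - Bb n ((i:ℕ):ℤ) := by
    intro i _
    rw [catZ_eq_Bb]
    push_cast
    ring_nf
  rw [sum_congr rfl hper, Finset.sum_range_sub (fun i : ℕ => Bb n ((i:ℕ):ℤ)) (n+1)]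
  have hz : Bb n (((n+1:ℕ)):ℤ) = 0 := Bb_eq_zero (by push_cast; omega)
  have h0 : (((0:ℕ)):ℤ) = 0 := by norm_num
  rw [hz, h0, Bb_zero]
  ring

lemma reidx (g : ℕ → ℤ) (r : ℕ) (hr : r < 3) (N : ℕ) :
    ∑ i ∈ range (3*N), (if i % 3 = r then g i else 0) = ∑ m ∈ range N, g (3*m+r) := by
  induction N with
  | zero => simp
  | succ N ih =>
    rw [show 3*(N+1) = 3*N+1+1+1 by ring, Finset.sum_range_succ, Finset.sum_range_succ,
        Finset.sum_range_succ, ih, Finset.sum_range_succ]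
    have h0 : (3*N) % 3 = 0 := by omega
    have h1 : (3*N+1) % 3 = 1 := by omega
    have h2 : (3*N+1+1) % 3 = 2 := by omega
    have e2 : 3*N+1+1 = 3*N+2 := by ring
    interval_cases r <;> simp [h0, h1, h2, e2]

lemma sum_extend (g : ℕ → ℤ) (K L : ℕ) (hKL : K ≤ L) (hz : ∀ i, K ≤ i → g i = 0) :
    ∑ i ∈ range L, g i = ∑ i ∈ range K, g i :=
  (Finset.sum_subset (Finset.range_subset_range.mpr hKL)
    (fun x _ hx => hz x (by simpa using hx))).symm
lemma chi3_nat (i : ℕ) :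
    chi3 (i:ℤ) = (if i % 3 = 1 then 1 else 0) - (if i % 3 = 2 then 1 else 0) := by
  have h : i % 3 = 0 ∨ i % 3 = 1 ∨ i % 3 = 2 := by omega
  rcases h with h | h | h <;>
  · have hm0 : ((i:ℤ) % 3 = 0) ∨ ((i:ℤ) % 3 = 1) ∨ ((i:ℤ) % 3 = 2) := by omega
    have hm : (i:ℤ) % 3 = (i % 3 : ℕ) := by push_cast; ring
    rw [chi3, hm, h]
    norm_num [h]

lemma chi3_nat_sub1 (i : ℕ) :
    chi3 ((i:ℤ) - 1) = (if i % 3 = 2 then 1 else 0) - (if i % 3 = 0 then 1 else 0) := by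
  have h : i % 3 = 0 ∨ i % 3 = 1 ∨ i % 3 = 2 := by omega
  rcases h with h | h | h
  · have hm : ((i:ℤ) - 1) % 3 = 2 := by omega
    rw [chi3, hm]; norm_num [h]
  · have hm : ((i:ℤ) - 1) % 3 = 0 := by omega
    rw [chi3, hm]; norm_num [h]
  · have hm : ((i:ℤ) - 1) % 3 = 1 := by omega
    rw [chi3, hm]; norm_num [h]

lemma residue_sums (d : ℕ) :
    (∑ i ∈ range (d+1), (if i % 3 = 0 then catZ d ((i:ℤ)+1) else 0) = Sig d - 1)
  ∧ (∑ i ∈ range (d+1), (if i % 3 = 1 then catZ d ((i:ℤ)+1) else 0) = -(Sig d))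
  ∧ (∑ i ∈ range (d+1), (if i % 3 = 2 then catZ d ((i:ℤ)+1) else 0) = 1 - (catalan d : ℤ)) := by
  obtain ⟨t3, t2, t1⟩ := triple d
  have hext : ∀ r : ℕ, (∑ i ∈ range (d+1), (if i % 3 = r then catZ d ((i:ℤ)+1) else 0))
      = ∑ i ∈ range (3*(d+1)), (if i % 3 = r then catZ d ((i:ℤ)+1) else 0) := by
    intro r
    refine (sum_extend _ _ _ (by omega) ?_).symm
    intro i hi
    have hz : catZ d ((i:ℤ)+1) = 0 := catZ_eq_zero (by push_cast; omega)
    simp [hz]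
  refine ⟨?_, ?_, ?_⟩
  · rw [hext 0, reidx (fun i : ℕ => catZ d ((i:ℤ)+1)) 0 (by norm_num) (d+1), ← t1]
    exact sum_congr rfl fun m _ => by congr 1
  · rw [hext 1, reidx (fun i : ℕ => catZ d ((i:ℤ)+1)) 1 (by norm_num) (d+1), ← t2]
    exact sum_congr rfl fun m _ => by congr 1
  · rw [hext 2, reidx (fun i : ℕ => catZ d ((i:ℤ)+1)) 2 (by norm_num) (d+1), ← t3]
    exact sum_congr rfl fun m _ => by congr 1

lemma Z2 (d : ℕ) :
    ∑ j ∈ Icc 1 (d+1), (1 - 3*(if 3 ∣ j then (1:ℤ) else 0)) * catD d j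
      = 2*(catalan d : ℤ) - 3 := by
  obtain ⟨r0, r1, r2⟩ := residue_sums d
  rw [← Finset.Ico_add_one_right_eq_Icc, Finset.sum_Ico_eq_sum_range, show d+1+1-1 = d+1 by omega]
  have hper : ∀ i ∈ range (d+1), (1 - 3*(if 3 ∣ (1+i) then (1:ℤ) else 0)) * catD d (1+i)
      = catZ d ((i:ℤ)+1) - 3*(if i % 3 = 2 then catZ d ((i:ℤ)+1) else 0) := by
    intro i _
    rw [catD_eq_catZ]
    have harg : ((1+i:ℕ):ℤ) = (i:ℤ)+1 := by push_cast; ring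
    rw [harg]
    by_cases hd : i % 3 = 2
    · rw [if_pos (show 3 ∣ 1+i by omega), if_pos hd]; ring
    · rw [if_neg (show ¬ 3 ∣ 1+i by omega), if_neg hd]; ring
  rw [sum_congr rfl hper, Finset.sum_sub_distrib, ← Finset.mul_sum, sum_catZ, r2]
  ring

lemma Z0 (d : ℕ) :
    ∑ i ∈ range (d+1), chi3 (i:ℤ) * catD d (i+1)
      = (catalan d : ℤ) - Sig d - 1 := by
  obtain ⟨r0, r1, r2⟩ := residue_sums d
  have hper : ∀ i ∈ range (d+1), chi3 (i:ℤ) * catD d (i+1)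
      = (if i % 3 = 1 then catZ d ((i:ℤ)+1) else 0)
        - (if i % 3 = 2 then catZ d ((i:ℤ)+1) else 0) := by
    intro i _
    rw [catD_eq_catZ, chi3_nat, show ((i+1:ℕ):ℤ) = (i:ℤ)+1 by push_cast; ring]
    split_ifs <;> ring
  rw [sum_congr rfl hper, Finset.sum_sub_distrib, r1, r2]
  ring

lemma Z1 (d : ℕ) :
    ∑ i ∈ range (d+1), chi3 ((i:ℤ) - 1) * catD d (i+1)
      = 2 - (catalan d : ℤ) - Sig d := by
  obtain ⟨r0, r1, r2⟩ := residue_sums d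
  have hper : ∀ i ∈ range (d+1), chi3 ((i:ℤ) - 1) * catD d (i+1)
      = (if i % 3 = 2 then catZ d ((i:ℤ)+1) else 0)
        - (if i % 3 = 0 then catZ d ((i:ℤ)+1) else 0) := by
    intro i _
    rw [catD_eq_catZ, chi3_nat_sub1, show ((i+1:ℕ):ℤ) = (i:ℤ)+1 by push_cast; ring]
    split_ifs <;> ring
  rw [sum_congr rfl hper, Finset.sum_sub_distrib, r2, r0]
  ring

end CatAux

theorem catalan_recurrence (d : ℕ) (δ : ℕ) (hδ : δ ≤ 1) :
    ((catalan d : ℚ)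
        = (1 - 2 * δ) * ∑ k ∈ Finset.range d, (catalan k : ℚ)
          + (-1 : ℚ) ^ δ *
              ∑ i ∈ Finset.range (d + 1), (chi3 ((i : ℤ) - δ) : ℚ) * (catD d (i + 1) : ℚ)
          + 1 + δ)
    ∧ (catalan d : ℚ)
        = (1 / 2) * ∑ j ∈ Finset.Icc 1 (d + 1),
            (1 - 3 * (if 3 ∣ j then 1 else 0)) * (catD d j : ℚ) + 3 / 2 := by
  have hS : (∑ k ∈ Finset.range d, (catalan k : ℚ)) = ((CatAux.Sig d : ℤ) : ℚ) := by
    unfold CatAux.Sig; push_cast; rfl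
  constructor
  · interval_cases δ
    · have hq : (∑ i ∈ Finset.range (d+1), (chi3 ((i:ℤ) - ((0:ℕ):ℤ)) : ℚ) * (catD d (i+1) : ℚ))
          = (((catalan d : ℤ) - CatAux.Sig d - 1 : ℤ) : ℚ) := by
        rw [← CatAux.Z0 d]
        push_cast
        refine Finset.sum_congr rfl fun i _ => by norm_num
      rw [hq, hS]
      push_cast
      ring
    · have hq : (∑ i ∈ Finset.range (d+1), (chi3 ((i:ℤ) - ((1:ℕ):ℤ)) : ℚ) * (catD d (i+1) : ℚ))
          = ((2 - (catalan d : ℤ) - CatAux.Sig d : ℤ) : ℚ) := by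
        rw [← CatAux.Z1 d]
        push_cast
        refine Finset.sum_congr rfl fun i _ => by norm_num
      rw [hq, hS]
      push_cast
      ring
  · have hq : (∑ j ∈ Finset.Icc 1 (d+1), (1 - 3 * (if 3 ∣ j then (1:ℚ) else 0)) * (catD d j : ℚ))
        = ((2*(catalan d : ℤ) - 3 : ℤ) : ℚ) := by
      rw [← CatAux.Z2 d]
      push_cast [apply_ite (fun z : ℤ => (z : ℚ))]
      rfl
    rw [hq]
    push_cast
    ring
end
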